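/- arXiv:2206.10224 — 6 statements merged into one kernel-verified Lean document; each statement's English description precedes it below -/
import Mathlib

section
/- (Pathwise version of Proposition 2.1(3).) Let ‖p‖₀ ≥ 0, [p]₁ ≥ 0 and q ≥ [p]₁ with q > 0. Let x ≥ 0, T > 0, let N̄, L, I : [0,∞) → [0,∞) be non-decreasing right-continuous functions (allowed to jump at 0, with value 0 before time 0), let g : [0,∞) → ℝ be measurable, and let X be a right-continuous function with left limits satisfying X_t = x + ∫₀ᵗ g_s ds − N̄_t − L_t + I_t for all t ∈ [0,T]. Assume 0 ≤ g_s ≤ ‖p‖₀ + [p]₁·max{X_s, 0} for almost every s ∈ [0,T] and X_s ≥ 0 for all s ∈ [0,T]. Then for every t ∈ [0,T]: X_t ≤ x·e^{qt} + ‖p‖₀·(e^{qt} − 1)/q + ∫_{[0,t]} e^{q(t−s)} (dI_s − dL_s), where the last integral is a Lebesgue–Stieltjes integral with respect to the measures induced by I and L. -/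
open MeasureTheory Set Real Filter

noncomputable section

set_option maxHeartbeats 1000000


lemma aux_int_q_exp (q t a b : ℝ) :
    ∫ r in a..b, q * Real.exp (q*(t-r)) = Real.exp (q*(t-a)) - Real.exp (q*(t-b)) := by
  have hD : ∀ r : ℝ, HasDerivAt (fun r => -Real.exp (q*(t-r))) (q * Real.exp (q*(t-r))) r := by
    intro r
    have h1 : HasDerivAt (fun r : ℝ => q*(t-r)) (-q) r := by
      simpa using ((hasDerivAt_id r).const_sub t).const_mul q
    have h2 := h1.exp.neg
    exact h2.congr_deriv (by ring)
  have hc : Continuous fun r : ℝ => q * Real.exp (q*(t-r)) := by fun_prop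
  have := intervalIntegral.integral_eq_sub_of_hasDerivAt (fun r _ => hD r)
    (hc.intervalIntegrable a b)
  rw [this]; ring

lemma aux_int_exp_s (q t : ℝ) (hq : q ≠ 0) :
    ∫ r in (0:ℝ)..t, Real.exp (q*(t-r)) * r = (Real.exp (q*t) - 1)/q^2 - t/q := by
  have hD : ∀ r : ℝ, HasDerivAt (fun r => Real.exp (q*(t-r)) * (-(r/q) - 1/q^2))
      (Real.exp (q*(t-r)) * r) r := by
    intro r
    have h1 : HasDerivAt (fun r : ℝ => q*(t-r)) (-q) r := by
      simpa using ((hasDerivAt_id r).const_sub t).const_mul q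
    have hE := h1.exp
    have hG : HasDerivAt (fun r : ℝ => -(r/q) - 1/q^2) (-(1/q)) r :=
      (((hasDerivAt_id r).div_const q).neg).sub_const _
    have := hE.mul hG
    exact this.congr_deriv (by field_simp; ring)
  have hc : Continuous fun r : ℝ => Real.exp (q*(t-r)) * r := by fun_prop
  have := intervalIntegral.integral_eq_sub_of_hasDerivAt (fun r _ => hD r)
    (hc.intervalIntegrable 0 t)
  rw [this]
  simp [Real.exp_zero]
  field_simp
  ring


lemma int_q_exp_Ioc (q t s : ℝ) (hst : s ≤ t) :
    ∫ r in Ioc s t, q * Real.exp (q*(t-r)) = Real.exp (q*(t-s)) - 1 := by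
  rw [← intervalIntegral.integral_of_le hst]
  simpa using aux_int_q_exp q t s t

lemma int_exp_Ioc (q t : ℝ) (hq : 0 < q) (ht : 0 ≤ t) :
    ∫ s in Ioc (0:ℝ) t, Real.exp (q*(t-s)) = (Real.exp (q*t) - 1)/q := by
  have h := int_q_exp_Ioc q t 0 ht
  rw [integral_const_mul] at h
  rw [eq_div_iff hq.ne', mul_comm]
  simpa using h

lemma int_exp_s_Ioc (q t : ℝ) (hq : q ≠ 0) (ht : 0 ≤ t) :
    ∫ s in Ioc (0:ℝ) t, Real.exp (q*(t-s)) * s = (Real.exp (q*t) - 1)/q^2 - t/q := by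
  rw [← intervalIntegral.integral_of_le ht]
  exact aux_int_exp_s q t hq

lemma integrable_of_bdd {α : Type*} [MeasurableSpace α] {μ : Measure α} [IsFiniteMeasure μ] {f : α → ℝ} {C : ℝ}
    (hf : AEStronglyMeasurable f μ) (h : ∀ᵐ s ∂μ, |f s| ≤ C) : Integrable f μ :=
  (integrable_const C).mono' hf (by simpa [Real.norm_eq_abs] using h)

lemma leftLim_zero (f : StieltjesFunction ℝ) (hf : ∀ s : ℝ, s < 0 → f s = 0) :
    Function.leftLim f 0 = 0 := by
  have hne : (nhdsWithin (0:ℝ) (Iio 0)).NeBot := by infer_instance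
  apply leftLim_eq_of_tendsto
  have hev : (fun s => f s) =ᶠ[nhdsWithin (0:ℝ) (Iio 0)] fun _ => 0 :=
    eventually_nhdsWithin_of_forall (fun s hs => hf s hs)
  exact Tendsto.congr' hev.symm tendsto_const_nhds

lemma stieltjes_nonneg (f : StieltjesFunction ℝ) (hf : ∀ s : ℝ, s < 0 → f s = 0)
    {r : ℝ} (hr : 0 ≤ r) : 0 ≤ f r := by
  have := f.mono (show (-1:ℝ) ≤ r by linarith)
  rwa [hf (-1) (by norm_num)] at this

lemma meas_Icc_toReal (f : StieltjesFunction ℝ) (hf : ∀ s : ℝ, s < 0 → f s = 0)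
    {r : ℝ} (hr : 0 ≤ r) : (f.measure (Icc 0 r)).toReal = f r := by
  rw [f.measure_Icc, leftLim_zero f hf, sub_zero,
    ENNReal.toReal_ofReal (stieltjes_nonneg f hf hr)]

lemma meas_Icc_ne_top (f : StieltjesFunction ℝ) (r : ℝ) : f.measure (Icc 0 r) ≠ ⊤ := by
  rw [f.measure_Icc]; exact ENNReal.ofReal_ne_top


lemma star1 (q t : ℝ) (hq : 0 ≤ q) (ht : 0 ≤ t) (μ : Measure ℝ) (hfin : μ (Icc 0 t) ≠ ⊤) :
    ∫ s in Icc (0:ℝ) t, Real.exp (q*(t-s)) ∂μ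
      = (μ (Icc 0 t)).toReal
        + ∫ r in Ioc (0:ℝ) t, q * Real.exp (q*(t-r)) * (μ (Icc 0 r)).toReal := by
  classical
  set ρ : Measure ℝ := μ.restrict (Icc 0 t) with hρ
  haveI : IsFiniteMeasure ρ := by
    constructor
    rw [hρ, Measure.restrict_apply_univ]
    exact lt_top_iff_ne_top.mpr hfin
  haveI : IsFiniteMeasure (volume.restrict (Ioc (0:ℝ) t)) := by
    constructor
    rw [Measure.restrict_apply_univ]
    exact measure_Ioc_lt_top
  set f : ℝ → ℝ → ℝ := fun s r => if s ≤ r ∧ r ≤ t ∧ 0 ≤ s then q * Real.exp (q*(t-r)) else 0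
    with hf
  have hfmeas : Measurable (Function.uncurry f) := by
    apply Measurable.ite
    · have : {p : ℝ × ℝ | p.1 ≤ p.2 ∧ p.2 ≤ t ∧ 0 ≤ p.1}
          = {p : ℝ × ℝ | p.1 ≤ p.2} ∩ ({p : ℝ × ℝ | p.2 ≤ t} ∩ {p : ℝ × ℝ | 0 ≤ p.1}) := rfl
      rw [this]
      exact (measurableSet_le measurable_fst measurable_snd).inter
        ((measurableSet_le measurable_snd measurable_const).inter
          (measurableSet_le measurable_const measurable_fst))
    · fun_prop
    · fun_prop
  have hfbd : ∀ p : ℝ × ℝ, |Function.uncurry f p| ≤ q * Real.exp (q*t) := by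
    rintro ⟨s, r⟩
    simp only [Function.uncurry, hf]
    split_ifs with h
    · rw [abs_of_nonneg (by positivity)]
      apply mul_le_mul_of_nonneg_left _ hq
      exact Real.exp_le_exp.mpr (by nlinarith [h.1, h.2.1, h.2.2])
    · simp; positivity
  have hint : Integrable (Function.uncurry f) (ρ.prod (volume.restrict (Ioc (0:ℝ) t))) :=
    integrable_of_bdd (μ := ρ.prod (volume.restrict (Ioc (0:ℝ) t)))
      hfmeas.aestronglyMeasurable (ae_of_all _ hfbd)
  -- inner integral in r, for s ∈ Icc 0 t
  have h1 : ∀ s ∈ Icc (0:ℝ) t, (∫ r in Ioc (0:ℝ) t, f s r) = Real.exp (q*(t-s)) - 1 := by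
    intro s hs
    have e1 : ∫ r in Ioc (0:ℝ) t, f s r
        = ∫ r in Ioc (0:ℝ) t, (Ici s).indicator (fun r => q * Real.exp (q*(t-r))) r := by
      apply setIntegral_congr_fun measurableSet_Ioc
      intro r hr
      simp only [hf, Set.indicator_apply, Set.mem_Ici]
      by_cases h : s ≤ r
      · simp [h, hr.2, hs.1]
      · simp [h]
    rw [e1, setIntegral_indicator measurableSet_Ici]
    have e2 : (Ioc (0:ℝ) t ∩ Ici s : Set ℝ) =ᵐ[volume] (Ioc s t : Set ℝ) := by
      have hs0 : ∀ᵐ x : ℝ, x ≠ s := by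
        have : volume ({s} : Set ℝ) = 0 := measure_singleton s
        filter_upwards [compl_mem_ae_iff.mpr this] with x hx
        simpa using hx
      rw [Filter.eventuallyEq_set]
      filter_upwards [hs0] with x hx
      simp only [Set.mem_inter_iff, Set.mem_Ioc, Set.mem_Ici]
      constructor
      · rintro ⟨⟨_, hxt⟩, hsx⟩
        exact ⟨lt_of_le_of_ne hsx (Ne.symm hx), hxt⟩
      · rintro ⟨hsx, hxt⟩
        exact ⟨⟨lt_of_le_of_lt hs.1 hsx, hxt⟩, le_of_lt hsx⟩
    rw [setIntegral_congr_set e2]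
    exact int_q_exp_Ioc q t s hs.2
  -- inner integral in s, for r ∈ Ioc 0 t
  have h4 : ∀ r ∈ Ioc (0:ℝ) t, (∫ s, f s r ∂ρ) = q * Real.exp (q*(t-r)) * (μ (Icc 0 r)).toReal := by
    intro r hr
    have e1 : ∀ s, f s r = (Icc 0 r).indicator (fun _ => q * Real.exp (q*(t-r))) s := by
      intro s
      simp only [hf, Set.indicator_apply, Set.mem_Icc]
      by_cases h1' : s ≤ r <;> by_cases h2' : 0 ≤ s <;> simp [h1', h2', hr.2]
    simp_rw [e1]
    rw [integral_indicator_const _ measurableSet_Icc]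
    have : ρ (Icc 0 r) = μ (Icc 0 r) := by
      rw [hρ, Measure.restrict_apply measurableSet_Icc]
      congr 1
      exact Set.inter_eq_self_of_subset_left (Icc_subset_Icc le_rfl hr.2)
    rw [measureReal_def, this, smul_eq_mul, mul_comm]
  -- integrability of exp on ρ
  have hintexp : Integrable (fun s => Real.exp (q*(t-s))) ρ := by
    apply integrable_of_bdd (Continuous.aestronglyMeasurable (by fun_prop))
      (C := Real.exp (q*t))
    rw [hρ]
    filter_upwards [ae_restrict_mem measurableSet_Icc] with s hs
    rw [abs_of_nonneg (Real.exp_pos _).le]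
    exact Real.exp_le_exp.mpr (by nlinarith [hs.1, hs.2])
  have key : ∫ s, (Real.exp (q*(t-s)) - 1) ∂ρ
      = ∫ r in Ioc (0:ℝ) t, q * Real.exp (q*(t-r)) * (μ (Icc 0 r)).toReal := by
    have e0 : ∫ s, (Real.exp (q*(t-s)) - 1) ∂ρ = ∫ s, (∫ r in Ioc (0:ℝ) t, f s r) ∂ρ := by
      apply integral_congr_ae
      rw [hρ]
      filter_upwards [ae_restrict_mem measurableSet_Icc] with s hs
      exact (h1 s hs).symm
    rw [e0, integral_integral_swap hint]
    exact setIntegral_congr_fun measurableSet_Ioc h4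
  have split : ∫ s, Real.exp (q*(t-s)) ∂ρ
      = (μ (Icc 0 t)).toReal + ∫ s, (Real.exp (q*(t-s)) - 1) ∂ρ := by
    rw [integral_sub hintexp (integrable_const 1)]
    simp only [integral_const, smul_eq_mul, mul_one]
    rw [hρ, measureReal_def, Measure.restrict_apply_univ]
    ring
  rw [hρ] at split key ⊢
  rw [split, key]


lemma star2 (q t M : ℝ) (hq : 0 ≤ q) (ht : 0 ≤ t) (u : ℝ → ℝ) (hu : Measurable u)
    (hM : ∀ s, |u s| ≤ M) :
    ∫ s in Ioc (0:ℝ) t, Real.exp (q*(t-s)) * u s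
      = (∫ s in Ioc (0:ℝ) t, u s)
        + ∫ r in Ioc (0:ℝ) t, q * Real.exp (q*(t-r)) * (∫ s in Ioc (0:ℝ) r, u s) := by
  classical
  haveI : IsFiniteMeasure (volume.restrict (Ioc (0:ℝ) t)) := by
    constructor
    rw [Measure.restrict_apply_univ]
    exact measure_Ioc_lt_top
  set ν : Measure ℝ := volume.restrict (Ioc (0:ℝ) t) with hν
  set f : ℝ → ℝ → ℝ :=
    fun s r => if s ≤ r ∧ r ≤ t ∧ 0 ≤ s then u s * (q * Real.exp (q*(t-r))) else 0 with hf
  have hM0 : 0 ≤ M := le_trans (abs_nonneg _) (hM 0)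
  have hfmeas : Measurable (Function.uncurry f) := by
    apply Measurable.ite
    · have : {p : ℝ × ℝ | p.1 ≤ p.2 ∧ p.2 ≤ t ∧ 0 ≤ p.1}
          = {p : ℝ × ℝ | p.1 ≤ p.2} ∩ ({p : ℝ × ℝ | p.2 ≤ t} ∩ {p : ℝ × ℝ | 0 ≤ p.1}) := rfl
      rw [this]
      exact (measurableSet_le measurable_fst measurable_snd).inter
        ((measurableSet_le measurable_snd measurable_const).inter
          (measurableSet_le measurable_const measurable_fst))
    · exact (hu.comp measurable_fst).mul
        ((measurable_const.mul ((measurable_const.sub measurable_snd).const_mul q |>.exp)))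
    · fun_prop
  have hfbd : ∀ p : ℝ × ℝ, |Function.uncurry f p| ≤ M * (q * Real.exp (q*t)) := by
    rintro ⟨s, r⟩
    simp only [Function.uncurry, hf]
    split_ifs with h
    · rw [abs_mul]
      apply mul_le_mul (hM s) _ (abs_nonneg _) hM0
      rw [abs_of_nonneg (by positivity)]
      apply mul_le_mul_of_nonneg_left _ hq
      exact Real.exp_le_exp.mpr (by nlinarith [h.1, h.2.1, h.2.2])
    · simp; positivity
  have hint : Integrable (Function.uncurry f) (ν.prod ν) :=
    integrable_of_bdd hfmeas.aestronglyMeasurable (ae_of_all _ hfbd)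
  have h1 : ∀ s ∈ Ioc (0:ℝ) t, (∫ r, f s r ∂ν) = u s * (Real.exp (q*(t-s)) - 1) := by
    intro s hs
    have e1 : ∫ r, f s r ∂ν = ∫ r, u s * ((Ici s).indicator (fun r => q * Real.exp (q*(t-r))) r) ∂ν := by
      rw [hν]
      apply setIntegral_congr_fun measurableSet_Ioc
      intro r hr
      simp only [hf, Set.indicator_apply, Set.mem_Ici]
      by_cases h : s ≤ r
      · simp [h, hr.2, hs.1.le]
      · simp [h]
    rw [e1, integral_const_mul]
    congr 1
    rw [hν, setIntegral_indicator measurableSet_Ici]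
    have e2 : (Ioc (0:ℝ) t ∩ Ici s : Set ℝ) =ᵐ[volume] (Ioc s t : Set ℝ) := by
      have hs0 : ∀ᵐ x : ℝ, x ≠ s := by
        have : volume ({s} : Set ℝ) = 0 := measure_singleton s
        filter_upwards [compl_mem_ae_iff.mpr this] with x hx
        simpa using hx
      rw [Filter.eventuallyEq_set]
      filter_upwards [hs0] with x hx
      simp only [Set.mem_inter_iff, Set.mem_Ioc, Set.mem_Ici]
      constructor
      · rintro ⟨⟨_, hxt⟩, hsx⟩
        exact ⟨lt_of_le_of_ne hsx (Ne.symm hx), hxt⟩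
      · rintro ⟨hsx, hxt⟩
        exact ⟨⟨lt_trans hs.1 hsx, hxt⟩, le_of_lt hsx⟩
    rw [setIntegral_congr_set e2]
    exact int_q_exp_Ioc q t s hs.2
  have h4 : ∀ r ∈ Ioc (0:ℝ) t,
      (∫ s, f s r ∂ν) = q * Real.exp (q*(t-r)) * (∫ s in Ioc (0:ℝ) r, u s) := by
    intro r hr
    have e1 : ∫ s, f s r ∂ν = ∫ s, ((Iic r).indicator u s) * (q * Real.exp (q*(t-r))) ∂ν := by
      rw [hν]
      apply setIntegral_congr_fun measurableSet_Ioc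
      intro s hs
      simp only [hf, Set.indicator_apply, Set.mem_Iic]
      by_cases h : s ≤ r
      · simp [h, hr.2, hs.1.le]
      · simp [h]
    rw [e1, integral_mul_const, hν, setIntegral_indicator measurableSet_Iic]
    rw [Set.Ioc_inter_Iic, min_eq_right hr.2, mul_comm]
  -- integrability pieces
  have hbd1 : Integrable (fun s => Real.exp (q*(t-s)) * u s) ν := by
    apply integrable_of_bdd (C := Real.exp (q*t) * M)
      (((Continuous.aestronglyMeasurable (by fun_prop)).mul hu.aestronglyMeasurable))
    rw [hν]
    filter_upwards [ae_restrict_mem measurableSet_Ioc] with s hs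
    simp only [Pi.mul_apply]
    rw [abs_mul]
    apply mul_le_mul _ (hM s) (abs_nonneg _) (Real.exp_pos _).le
    rw [abs_of_nonneg (Real.exp_pos _).le]
    exact Real.exp_le_exp.mpr (by nlinarith [hs.1, hs.2])
  have hbd2 : Integrable u ν :=
    integrable_of_bdd hu.aestronglyMeasurable (ae_of_all _ hM)
  have key : ∫ s, (Real.exp (q*(t-s)) * u s - u s) ∂ν
      = ∫ r in Ioc (0:ℝ) t, q * Real.exp (q*(t-r)) * (∫ s in Ioc (0:ℝ) r, u s) := by
    have e0 : ∫ s, (Real.exp (q*(t-s)) * u s - u s) ∂ν = ∫ s, (∫ r, f s r ∂ν) ∂ν := by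
      apply integral_congr_ae
      rw [hν]
      filter_upwards [ae_restrict_mem measurableSet_Ioc] with s hs
      rw [← hν, h1 s hs]
      ring
    rw [e0, integral_integral_swap hint, hν]
    exact setIntegral_congr_fun measurableSet_Ioc h4
  rw [← key, integral_sub hbd1 hbd2]
  ring


/-- pathwise version of Proposition 2.1(3).  If a surplus path satisfies
`X_t = x + ∫₀ᵗ g_s ds − N̄_t − L_t + I_t` on `[0,T]`, with `0 ≤ g_s ≤ ‖p‖₀ + [p]₁ max{X_s,0}`
a.e. and `X ≥ 0` on `[0,T]`, then
`X_t ≤ x e^{qt} + ‖p‖₀ (e^{qt}−1)/q + ∫_{[0,t]} e^{q(t−s)} (dI_s − dL_s)` for `t ∈ [0,T]`. -/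
theorem pathwise_surplus_upper_bound
    (p0 P1 q : ℝ) (hp0 : 0 ≤ p0) (hP1 : 0 ≤ P1) (hq1 : P1 ≤ q) (hq : 0 < q)
    (x T : ℝ) (hx : 0 ≤ x) (hT : 0 < T)
    (Nb L I : StieltjesFunction ℝ)
    (hNb0 : ∀ t : ℝ, t < 0 → Nb t = 0)
    (hL0 : ∀ t : ℝ, t < 0 → L t = 0)
    (hI0 : ∀ t : ℝ, t < 0 → I t = 0)
    (g : ℝ → ℝ) (hgmeas : Measurable g) (hgint : IntegrableOn g (Icc 0 T))
    (X : ℝ → ℝ)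
    (hgbd : ∀ᵐ s ∂(volume.restrict (Icc (0:ℝ) T)), 0 ≤ g s ∧ g s ≤ p0 + P1 * max (X s) 0)
    (hXeq : ∀ t ∈ Icc (0:ℝ) T, X t = x + (∫ s in (0:ℝ)..t, g s) - Nb t - L t + I t)
    (hXpos : ∀ t ∈ Icc (0:ℝ) T, 0 ≤ X t) :
    ∀ t ∈ Icc (0:ℝ) T,
      X t ≤ x * Real.exp (q * t) + p0 * (Real.exp (q * t) - 1) / q
        + ((∫ s in Icc (0:ℝ) t, Real.exp (q * (t - s)) ∂I.measure)
          - ∫ s in Icc (0:ℝ) t, Real.exp (q * (t - s)) ∂L.measure) := by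
  classical
  rintro t ⟨ht0, htT⟩
  haveI hfinν : IsFiniteMeasure (volume.restrict (Ioc (0:ℝ) t)) := by
    constructor
    rw [Measure.restrict_apply_univ]
    exact measure_Ioc_lt_top
  -- globally integrable version of g
  set g' : ℝ → ℝ := (Icc (0:ℝ) T).indicator g with hg'def
  have hg'meas : Measurable g' := hgmeas.indicator measurableSet_Icc
  have hg'int : Integrable g' volume := by
    rw [hg'def, integrable_indicator_iff measurableSet_Icc]
    exact hgint
  have hprim : Continuous (fun s : ℝ => ∫ r in (0:ℝ)..s, g' r) :=
    intervalIntegral.continuous_primitive (fun a b => hg'int.intervalIntegrable) 0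
  -- the formula function
  set F : ℝ → ℝ := fun s => x + (∫ r in (0:ℝ)..s, g' r) - Nb s - L s + I s with hFdef
  have hFmeas : Measurable F :=
    (((measurable_const.add hprim.measurable).sub Nb.mono.measurable).sub
      L.mono.measurable).add I.mono.measurable
  set u : ℝ → ℝ := (Icc (0:ℝ) t).indicator F with hudef
  have humeas : Measurable u := hFmeas.indicator measurableSet_Icc
  have hgg' : ∀ s : ℝ, 0 ≤ s → s ≤ T → (∫ r in (0:ℝ)..s, g' r) = ∫ r in (0:ℝ)..s, g r := by
    intro s h0 hsT
    apply intervalIntegral.integral_congr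
    intro r hr
    rw [Set.uIcc_of_le h0] at hr
    exact Set.indicator_of_mem (show r ∈ Icc (0:ℝ) T from ⟨hr.1, le_trans hr.2 hsT⟩) g
  have huX : ∀ s ∈ Icc (0:ℝ) t, u s = X s := by
    intro s hs
    have hsT : s ∈ Icc (0:ℝ) T := ⟨hs.1, le_trans hs.2 htT⟩
    rw [hudef, Set.indicator_of_mem hs, hFdef, hXeq s hsT]
    simp only
    rw [hgg' s hs.1 hsT.2]
  -- bound on u
  set M : ℝ := x + (∫ r, |g' r|) + I T with hMdef
  have hITnn : 0 ≤ I T := stieltjes_nonneg I hI0 hT.le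
  have habsint : Integrable (fun r => |g' r|) volume := hg'int.abs
  have hMnn : 0 ≤ M := by
    have : 0 ≤ ∫ r, |g' r| := integral_nonneg fun r => abs_nonneg _
    rw [hMdef]; linarith
  have huM : ∀ s, |u s| ≤ M := by
    intro s
    by_cases h : s ∈ Icc (0:ℝ) t
    · have hsT : s ∈ Icc (0:ℝ) T := ⟨h.1, le_trans h.2 htT⟩
      have hpos : 0 ≤ u s := by rw [huX s h]; exact hXpos s hsT
      rw [abs_of_nonneg hpos, hudef, Set.indicator_of_mem h, hFdef]
      simp only
      have hNb : 0 ≤ Nb s := stieltjes_nonneg Nb hNb0 h.1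
      have hL : 0 ≤ L s := stieltjes_nonneg L hL0 h.1
      have hIs : I s ≤ I T := I.mono hsT.2
      have hg'le : (∫ r in (0:ℝ)..s, g' r) ≤ ∫ r, |g' r| := by
        rw [intervalIntegral.integral_of_le h.1]
        calc ∫ r in Ioc (0:ℝ) s, g' r ≤ ∫ r in Ioc (0:ℝ) s, |g' r| := by
              apply integral_mono_ae hg'int.integrableOn habsint.integrableOn
              exact ae_of_all _ fun r => le_abs_self _
          _ ≤ ∫ r, |g' r| :=
              setIntegral_le_integral habsint (ae_of_all _ fun r => abs_nonneg _)
      rw [hMdef]; linarith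
    · rw [hudef, Set.indicator_of_notMem h]
      simpa using hMnn
  -- the comparison function A
  set A : ℝ → ℝ := fun s => x + p0 * s + (I s - L s) with hAdef
  have hAmeas : Measurable A :=
    ((measurable_const.add (measurable_id.const_mul p0)).add
      (I.mono.measurable.sub L.mono.measurable))
  -- main pathwise inequality
  have hA : ∀ s ∈ Icc (0:ℝ) t, u s ≤ A s + q * ∫ r in Ioc (0:ℝ) s, u r := by
    intro s hs
    have hsT : s ∈ Icc (0:ℝ) T := ⟨hs.1, le_trans hs.2 htT⟩
    haveI : IsFiniteMeasure (volume.restrict (Ioc (0:ℝ) s)) := by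
      constructor
      rw [Measure.restrict_apply_univ]
      exact measure_Ioc_lt_top
    have hNb : 0 ≤ Nb s := stieltjes_nonneg Nb hNb0 hs.1
    have hbound : (∫ r in (0:ℝ)..s, g' r) ≤ p0 * s + q * ∫ r in Ioc (0:ℝ) s, u r := by
      rw [intervalIntegral.integral_of_le hs.1]
      have hle : ∀ᵐ r ∂volume.restrict (Ioc (0:ℝ) s), g' r ≤ p0 + q * u r := by
        have hsub : Ioc (0:ℝ) s ⊆ Icc (0:ℝ) T :=
          fun r hr => ⟨hr.1.le, le_trans hr.2 hsT.2⟩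
        filter_upwards [ae_restrict_of_ae_restrict_of_subset hsub hgbd,
          ae_restrict_mem measurableSet_Ioc] with r hr hrmem
        have hrT : r ∈ Icc (0:ℝ) T := hsub hrmem
        have hrt : r ∈ Icc (0:ℝ) t := ⟨hrmem.1.le, le_trans hrmem.2 hs.2⟩
        have hXr : 0 ≤ X r := hXpos r hrT
        have hg'r : g' r = g r := Set.indicator_of_mem hrT g
        rw [hg'r, huX r hrt]
        calc g r ≤ p0 + P1 * max (X r) 0 := hr.2
          _ = p0 + P1 * X r := by rw [max_eq_left hXr]
          _ ≤ p0 + q * X r := by nlinarith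
      have hint2 : Integrable (fun r => p0 + q * u r) (volume.restrict (Ioc (0:ℝ) s)) := by
        apply integrable_of_bdd (C := |p0| + |q| * M)
          ((measurable_const.add (humeas.const_mul q)).aestronglyMeasurable)
        apply ae_of_all
        intro r
        calc |p0 + q * u r| ≤ |p0| + |q * u r| := abs_add_le _ _
          _ = |p0| + |q| * |u r| := by rw [abs_mul]
          _ ≤ |p0| + |q| * M := by
              have := huM r
              nlinarith [abs_nonneg q]
      have hmono := integral_mono_ae hg'int.integrableOn hint2 hle
      have hadd : ∫ r in Ioc (0:ℝ) s, (p0 + q * u r)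
          = p0 * s + q * ∫ r in Ioc (0:ℝ) s, u r := by
        rw [integral_add (integrable_const p0)
          ((integrable_of_bdd (C := M) humeas.aestronglyMeasurable
            (ae_of_all _ huM)).const_mul q)]
        rw [integral_const, integral_const_mul]
        simp [Real.volume_Ioc, ENNReal.toReal_ofReal hs.1, mul_comm, hs.1]
      rw [hadd] at hmono
      exact hmono
    rw [hudef, Set.indicator_of_mem hs, hFdef, hAdef]
    simp only
    linarith
  -- continuity facts for the running integral of u
  have huint : Integrable u volume := by
    rw [hudef, integrable_indicator_iff measurableSet_Icc]
    haveI : IsFiniteMeasure (volume.restrict (Icc (0:ℝ) t)) := by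
      constructor
      rw [Measure.restrict_apply_univ]
      exact measure_Icc_lt_top
    apply integrable_of_bdd (C := M) hFmeas.aestronglyMeasurable
    filter_upwards [ae_restrict_mem measurableSet_Icc] with s hs
    have := huM s
    rwa [hudef, Set.indicator_of_mem hs] at this
  have hWcont : Continuous (fun s : ℝ => ∫ r in (0:ℝ)..s, u r) :=
    intervalIntegral.continuous_primitive (fun a b => huint.intervalIntegrable) 0
  have hVmeas : AEStronglyMeasurable (fun s => ∫ r in Ioc (0:ℝ) s, u r)
      (volume.restrict (Ioc (0:ℝ) t)) := by
    apply hWcont.aestronglyMeasurable.congr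
    filter_upwards [ae_restrict_mem measurableSet_Ioc] with s hs
    exact intervalIntegral.integral_of_le hs.1.le
  have hVbd : ∀ s ∈ Ioc (0:ℝ) t, |∫ r in Ioc (0:ℝ) s, u r| ≤ M * t := by
    intro s hs
    haveI : IsFiniteMeasure (volume.restrict (Ioc (0:ℝ) s)) := by
      constructor
      rw [Measure.restrict_apply_univ]
      exact measure_Ioc_lt_top
    calc |∫ r in Ioc (0:ℝ) s, u r| ≤ ∫ r in Ioc (0:ℝ) s, |u r| :=
          by simpa [Real.norm_eq_abs] using
            norm_integral_le_integral_norm (μ := volume.restrict (Ioc (0:ℝ) s)) u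
      _ ≤ ∫ _r in Ioc (0:ℝ) s, M := by
          apply integral_mono_ae huint.abs.integrableOn (integrable_const M)
          exact ae_of_all _ fun r => huM r
      _ = M * s := by
          rw [integral_const]
          simp [Real.volume_Ioc, ENNReal.toReal_ofReal hs.1.le, mul_comm, hs.1.le]
      _ ≤ M * t := by nlinarith [hs.2]
  -- integrability facts on Ioc 0 t
  have hexple : ∀ s ∈ Ioc (0:ℝ) t, Real.exp (q*(t-s)) ≤ Real.exp (q*t) := by
    intro s hs
    exact Real.exp_le_exp.mpr (by nlinarith [hs.1, hs.2])
  have hexpmeas : Measurable fun s : ℝ => Real.exp (q*(t-s)) := by fun_prop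
  have intEU : Integrable (fun s => Real.exp (q*(t-s)) * u s)
      (volume.restrict (Ioc (0:ℝ) t)) := by
    apply integrable_of_bdd (C := Real.exp (q*t) * M)
      (hexpmeas.mul humeas).aestronglyMeasurable
    filter_upwards [ae_restrict_mem measurableSet_Ioc] with s hs
    rw [Pi.mul_apply, abs_mul, abs_of_nonneg (Real.exp_pos _).le]
    exact mul_le_mul (hexple s hs) (huM s) (abs_nonneg _) (Real.exp_pos _).le
  have hAbd : ∀ s ∈ Ioc (0:ℝ) t, |A s| ≤ x + p0 * t + I t + L t := by
    intro s hs
    have hI1 : 0 ≤ I s := stieltjes_nonneg I hI0 hs.1.le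
    have hI2 : I s ≤ I t := I.mono hs.2
    have hL1 : 0 ≤ L s := stieltjes_nonneg L hL0 hs.1.le
    have hL2 : L s ≤ L t := L.mono hs.2
    rw [hAdef, abs_le]
    constructor <;> simp only <;> nlinarith [hs.1, hs.2]
  have intA : Integrable (fun s => Real.exp (q*(t-s)) * A s)
      (volume.restrict (Ioc (0:ℝ) t)) := by
    apply integrable_of_bdd (C := Real.exp (q*t) * (x + p0 * t + I t + L t))
      (hexpmeas.mul hAmeas).aestronglyMeasurable
    filter_upwards [ae_restrict_mem measurableSet_Ioc] with s hs
    rw [Pi.mul_apply, abs_mul, abs_of_nonneg (Real.exp_pos _).le]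
    exact mul_le_mul (hexple s hs) (hAbd s hs)
      (abs_nonneg _) (Real.exp_pos _).le
  have intQV : Integrable (fun s => q * Real.exp (q*(t-s)) * (∫ r in Ioc (0:ℝ) s, u r))
      (volume.restrict (Ioc (0:ℝ) t)) := by
    apply integrable_of_bdd (C := q * Real.exp (q*t) * (M * t))
      (((measurable_const.mul hexpmeas).aestronglyMeasurable).mul hVmeas)
    filter_upwards [ae_restrict_mem measurableSet_Ioc] with s hs
    simp only [Pi.mul_apply]
    rw [abs_mul, abs_mul, abs_of_nonneg hq.le, abs_of_nonneg (Real.exp_pos _).le]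
    have h1 : q * Real.exp (q*(t-s)) ≤ q * Real.exp (q*t) :=
      mul_le_mul_of_nonneg_left (hexple s hs) hq.le
    have h2 := hVbd s hs
    nlinarith [abs_nonneg (∫ r in Ioc (0:ℝ) s, u r), Real.exp_pos (q*(t-s)),
      mul_pos hq (Real.exp_pos (q*(t-s)))]
  -- Gronwall step
  have hstar2 := star2 q t M hq.le ht0 u humeas huM
  have hW : ∫ s in Ioc (0:ℝ) t, Real.exp (q*(t-s)) * u s
      ≤ (∫ s in Ioc (0:ℝ) t, Real.exp (q*(t-s)) * A s)
        + ∫ s in Ioc (0:ℝ) t, q * Real.exp (q*(t-s)) * (∫ r in Ioc (0:ℝ) s, u r) := by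
    rw [← integral_add intA intQV]
    apply integral_mono_ae intEU (intA.add intQV)
    filter_upwards [ae_restrict_mem measurableSet_Ioc] with s hs
    have hus := hA s ⟨hs.1.le, hs.2⟩
    have hepos : (0:ℝ) < Real.exp (q*(t-s)) := Real.exp_pos _
    calc Real.exp (q*(t-s)) * u s
        ≤ Real.exp (q*(t-s)) * (A s + q * ∫ r in Ioc (0:ℝ) s, u r) :=
          mul_le_mul_of_nonneg_left hus hepos.le
      _ = Real.exp (q*(t-s)) * A s + q * Real.exp (q*(t-s)) * (∫ r in Ioc (0:ℝ) s, u r) := by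
          ring
  have hV : (∫ s in Ioc (0:ℝ) t, u s) ≤ ∫ s in Ioc (0:ℝ) t, Real.exp (q*(t-s)) * A s := by
    linarith [hstar2, hW]
  have hfinal0 : X t ≤ A t + q * ∫ s in Ioc (0:ℝ) t, Real.exp (q*(t-s)) * A s := by
    have h1 := hA t ⟨ht0, le_rfl⟩
    rw [huX t ⟨ht0, le_rfl⟩] at h1
    nlinarith [mul_le_mul_of_nonneg_left hV hq.le]
  -- compute the A-integral
  set EI : ℝ := ∫ s in Ioc (0:ℝ) t, Real.exp (q*(t-s)) * I s with hEIdef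
  set EL : ℝ := ∫ s in Ioc (0:ℝ) t, Real.exp (q*(t-s)) * L s with hELdef
  have intCI : Integrable (fun s => Real.exp (q*(t-s)) * I s)
      (volume.restrict (Ioc (0:ℝ) t)) := by
    apply integrable_of_bdd (C := Real.exp (q*t) * I t)
      (hexpmeas.mul I.mono.measurable).aestronglyMeasurable
    filter_upwards [ae_restrict_mem measurableSet_Ioc] with s hs
    rw [Pi.mul_apply, abs_mul, abs_of_nonneg (Real.exp_pos _).le,
      abs_of_nonneg (stieltjes_nonneg I hI0 hs.1.le)]
    exact mul_le_mul (hexple s hs) (I.mono hs.2)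
      (stieltjes_nonneg I hI0 hs.1.le) (Real.exp_pos _).le
  have intCL : Integrable (fun s => Real.exp (q*(t-s)) * L s)
      (volume.restrict (Ioc (0:ℝ) t)) := by
    apply integrable_of_bdd (C := Real.exp (q*t) * L t)
      (hexpmeas.mul L.mono.measurable).aestronglyMeasurable
    filter_upwards [ae_restrict_mem measurableSet_Ioc] with s hs
    rw [Pi.mul_apply, abs_mul, abs_of_nonneg (Real.exp_pos _).le,
      abs_of_nonneg (stieltjes_nonneg L hL0 hs.1.le)]
    exact mul_le_mul (hexple s hs) (L.mono hs.2)
      (stieltjes_nonneg L hL0 hs.1.le) (Real.exp_pos _).le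
  have intCx : Integrable (fun s => Real.exp (q*(t-s)) * x)
      (volume.restrict (Ioc (0:ℝ) t)) := by
    apply integrable_of_bdd (C := Real.exp (q*t) * x)
      (hexpmeas.mul measurable_const).aestronglyMeasurable
    filter_upwards [ae_restrict_mem measurableSet_Ioc] with s hs
    rw [Pi.mul_apply, abs_mul, abs_of_nonneg (Real.exp_pos _).le, abs_of_nonneg hx]
    exact mul_le_mul_of_nonneg_right (hexple s hs) hx
  have intCp : Integrable (fun s => Real.exp (q*(t-s)) * (p0 * s))
      (volume.restrict (Ioc (0:ℝ) t)) := by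
    apply integrable_of_bdd (C := Real.exp (q*t) * (p0 * t))
      (hexpmeas.mul (measurable_id.const_mul p0)).aestronglyMeasurable
    filter_upwards [ae_restrict_mem measurableSet_Ioc] with s hs
    simp only [id_eq]
    rw [Pi.mul_apply, abs_mul, abs_of_nonneg (Real.exp_pos _).le,
      abs_of_nonneg (by nlinarith [hs.1] : (0:ℝ) ≤ p0 * s)]
    exact mul_le_mul (hexple s hs) (by nlinarith [hs.2])
      (by nlinarith [hs.1]) (Real.exp_pos _).le
  have hAsplit : ∫ s in Ioc (0:ℝ) t, Real.exp (q*(t-s)) * A s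
      = x * ((Real.exp (q*t) - 1)/q)
        + p0 * ((Real.exp (q*t) - 1)/q^2 - t/q) + (EI - EL) := by
    have e0 : ∀ s : ℝ, Real.exp (q*(t-s)) * A s
        = Real.exp (q*(t-s)) * x + Real.exp (q*(t-s)) * (p0 * s)
          + (Real.exp (q*(t-s)) * I s - Real.exp (q*(t-s)) * L s) := by
      intro s; rw [hAdef]; ring
    rw [integral_congr_ae (ae_of_all _ e0)]
    have h1 : Integrable (fun s => Real.exp (q*(t-s)) * x + Real.exp (q*(t-s)) * (p0 * s))
        (volume.restrict (Ioc (0:ℝ) t)) := intCx.add intCp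
    have h2 : Integrable (fun s => Real.exp (q*(t-s)) * (I : ℝ → ℝ) s
        - Real.exp (q*(t-s)) * (L : ℝ → ℝ) s)
        (volume.restrict (Ioc (0:ℝ) t)) := intCI.sub intCL
    have e2 := integral_add h1 h2
    have e3 := integral_add intCx intCp
    have e4 := integral_sub intCI intCL
    rw [e2, e3, e4]
    rw [integral_mul_const]
    have e1 : ∀ s : ℝ, Real.exp (q*(t-s)) * (p0 * s) = p0 * (Real.exp (q*(t-s)) * s) := by
      intro s; ring
    rw [integral_congr_ae (ae_of_all _ e1), integral_const_mul,
      int_exp_Ioc q t hq ht0, int_exp_s_Ioc q t hq.ne' ht0, ← hEIdef, ← hELdef]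
    ring
  -- the Stieltjes integrals via star1
  have hSI : ∫ s in Icc (0:ℝ) t, Real.exp (q * (t - s)) ∂I.measure = I t + q * EI := by
    have h := star1 q t hq.le ht0 I.measure (meas_Icc_ne_top I t)
    rw [meas_Icc_toReal I hI0 ht0] at h
    have e1 : ∫ r in Ioc (0:ℝ) t, q * Real.exp (q*(t-r)) * (I.measure (Icc 0 r)).toReal
        = q * EI := by
      rw [hEIdef, ← integral_const_mul]
      apply setIntegral_congr_fun measurableSet_Ioc
      intro r hr
      show q * Real.exp (q*(t-r)) * (I.measure (Icc 0 r)).toReal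
        = q * (Real.exp (q*(t-r)) * I r)
      rw [meas_Icc_toReal I hI0 hr.1.le]
      ring
    rw [e1] at h
    simpa [mul_comm, mul_sub] using h
  have hSL : ∫ s in Icc (0:ℝ) t, Real.exp (q * (t - s)) ∂L.measure = L t + q * EL := by
    have h := star1 q t hq.le ht0 L.measure (meas_Icc_ne_top L t)
    rw [meas_Icc_toReal L hL0 ht0] at h
    have e1 : ∫ r in Ioc (0:ℝ) t, q * Real.exp (q*(t-r)) * (L.measure (Icc 0 r)).toReal
        = q * EL := by
      rw [hELdef, ← integral_const_mul]
      apply setIntegral_congr_fun measurableSet_Ioc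
      intro r hr
      show q * Real.exp (q*(t-r)) * (L.measure (Icc 0 r)).toReal
        = q * (Real.exp (q*(t-r)) * L r)
      rw [meas_Icc_toReal L hL0 hr.1.le]
      ring
    rw [e1] at h
    simpa [mul_comm, mul_sub] using h
  rw [hSI, hSL]
  rw [hAsplit] at hfinal0
  have hAt : A t = x + p0 * t + (I t - L t) := by rw [hAdef]
  rw [hAt] at hfinal0
  have hq' : q ≠ 0 := hq.ne'
  calc X t ≤ x + p0 * t + (I t - L t)
      + q * (x * ((Real.exp (q*t) - 1)/q)
        + p0 * ((Real.exp (q*t) - 1)/q^2 - t/q) + (EI - EL)) := hfinal0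
    _ = x * Real.exp (q * t) + p0 * (Real.exp (q * t) - 1) / q
        + ((I t + q * EI) - (L t + q * EL)) := by
      field_simp
      ring
end
end

section
/- (Pathwise core of Proposition 2.1(5).) Let ‖p‖₀ ≥ 0, [p]₁ ≥ 0 and q ≥ [p]₁ with q > 0. Let x ≥ 0, T > 0, let N̄, L, I : [0,∞) → [0,∞) be non-decreasing right-continuous functions (allowed to jump at 0, with value 0 before time 0), let g : [0,∞) → ℝ be measurable, and let X be a right-continuous function with left limits satisfying X_t = x + ∫₀ᵗ g_s ds − N̄_t − L_t + I_t for all t ∈ [0,T]. Assume 0 ≤ g_s ≤ ‖p‖₀ + [p]₁·max{X_s, 0} for almost every s ∈ [0,T] and X_s ≥ 0 for all s ∈ [0,T]. Then the discounted dividends minus discounted injections satisfy ∫_{[0,T]} e^{−qs} dL_s − ∫_{[0,T]} e^{−qs} dI_s ≤ x + ‖p‖₀/q. -/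
open MeasureTheory Set Real Filter

noncomputable section


lemma exp_ftc (q s T : ℝ) :
    ∫ u in s..T, q * Real.exp (-q * u) = Real.exp (-q * s) - Real.exp (-q * T) := by
  have h : ∀ u ∈ uIcc s T, HasDerivAt (fun v => -Real.exp (-q * v)) (q * Real.exp (-q * u)) u := by
    intro u _
    have h1 : HasDerivAt (fun v : ℝ => -q * v) (-q) u := by
      simpa using (hasDerivAt_id u).const_mul (-q)
    have h2 := h1.exp.neg
    refine h2.congr_deriv ?_
    ring
  have hcont : IntervalIntegrable (fun u => q * Real.exp (-q * u)) volume s T :=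
    Continuous.intervalIntegrable (by continuity) s T
  have := intervalIntegral.integral_eq_sub_of_hasDerivAt h hcont
  simp only [neg_sub_neg] at this
  linarith [this]

lemma aux_int (q T s : ℝ) (hs : s ∈ Icc (0:ℝ) T) :
    ∫ u in Ioc (0:ℝ) T ∩ Ici s, q * Real.exp (-q * u)
      = Real.exp (-q * s) - Real.exp (-q * T) := by
  have hae : (Ioc (0:ℝ) T ∩ Ici s : Set ℝ) =ᵐ[volume] Ioc s T := by
    rw [MeasureTheory.ae_eq_set]
    constructor
    · refine measure_mono_null (fun u hu => ?_) (measure_singleton s)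
      obtain ⟨⟨hu1, hu2⟩, hu3⟩ := hu.1
      have := hu.2
      simp only [mem_Ioc, not_and_or, not_lt, not_le] at this
      rcases this with h | h
      · exact mem_singleton_iff.2 (le_antisymm h hu3)
      · exact absurd hu2 (not_le.2 h)
    · refine measure_mono_null (fun u hu => ?_) measure_empty
      exact absurd ⟨⟨lt_of_le_of_lt hs.1 hu.1.1, hu.1.2⟩, hu.1.1.le⟩ hu.2
  rw [setIntegral_congr_set hae, ← intervalIntegral.integral_of_le hs.2, exp_ftc]

lemma stieltjes_leftLim_zero (H : StieltjesFunction ℝ) (hH0 : ∀ t : ℝ, t < 0 → H t = 0) :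
    Function.leftLim H 0 = 0 := by
  have h1 : (nhdsWithin (0:ℝ) (Iio 0)) ≠ ⊥ := (nhdsLT_neBot (0:ℝ)).ne'
  have hev : (H : ℝ → ℝ) =ᶠ[nhdsWithin (0:ℝ) (Iio 0)] fun _ => (0:ℝ) :=
    eventually_mem_nhdsWithin.mono fun t ht => hH0 t ht
  exact leftLim_eq_of_tendsto (Tendsto.congr' hev.symm tendsto_const_nhds)

lemma stieltjes_nonneg_s6 (H : StieltjesFunction ℝ) (hH0 : ∀ t : ℝ, t < 0 → H t = 0)
    {u : ℝ} (hu : 0 ≤ u) : 0 ≤ H u := by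
  have := H.mono (show (-1:ℝ) ≤ u by linarith)
  rwa [hH0 (-1) (by norm_num)] at this

lemma stieltjes_ibp (H : StieltjesFunction ℝ) (hH0 : ∀ t : ℝ, t < 0 → H t = 0)
    {q T : ℝ} (hq : 0 < q) (hT : 0 < T) :
    ∫ s in Icc (0:ℝ) T, Real.exp (-q * s) ∂H.measure
      = Real.exp (-q * T) * H T + ∫ u in (0:ℝ)..T, q * Real.exp (-q * u) * H u := by
  have hl0 := stieltjes_leftLim_zero H hH0
  set μ : Measure ℝ := H.measure.restrict (Icc 0 T) with hμ
  set ν : Measure ℝ := volume.restrict (Ioc 0 T) with hν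
  have hμuniv : μ univ = ENNReal.ofReal (H T) := by
    rw [hμ, Measure.restrict_apply_univ, H.measure_Icc, hl0, sub_zero]
  haveI : IsFiniteMeasure μ := ⟨by rw [hμuniv]; exact ENNReal.ofReal_lt_top⟩
  haveI : IsFiniteMeasure ν := ⟨by
    rw [hν, Measure.restrict_apply_univ, Real.volume_Ioc]; exact ENNReal.ofReal_lt_top⟩
  set F : ℝ × ℝ → ℝ :=
    fun p => Set.indicator {p : ℝ × ℝ | p.1 ≤ p.2} (fun p => q * Real.exp (-q * p.2)) p with hF
  have hsetm : MeasurableSet {p : ℝ × ℝ | p.1 ≤ p.2} :=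
    measurableSet_le measurable_fst measurable_snd
  have hFmeas : Measurable F := by
    apply Measurable.indicator ?_ hsetm
    exact (measurable_const.mul ((measurable_snd.const_mul (-q)).exp))
  have hFint : Integrable F (μ.prod ν) := by
    refine Integrable.mono' (integrable_const q) hFmeas.aestronglyMeasurable ?_
    have hprod : μ.prod ν = (H.measure.prod volume).restrict ((Icc 0 T) ×ˢ (Ioc 0 T)) :=
      Measure.prod_restrict _ _
    rw [hprod]
    filter_upwards [ae_restrict_mem (measurableSet_Icc.prod measurableSet_Ioc)] with p hp
    simp only [hF, Set.indicator_apply, mem_setOf_eq]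
    split_ifs with hle
    · rw [Real.norm_eq_abs, abs_of_nonneg (by positivity)]
      have : Real.exp (-q * p.2) ≤ 1 := by
        rw [Real.exp_le_one_iff]
        nlinarith [hp.2.1]
      nlinarith
    · simp [hq.le]
  have hswap := MeasureTheory.integral_integral_swap (μ := μ) (ν := ν)
    (f := fun s u => F (s, u)) hFint
  -- compute inner integral in u
  have hinner1 : ∀ s ∈ Icc (0:ℝ) T,
      (∫ u, F (s, u) ∂ν) = Real.exp (-q * s) - Real.exp (-q * T) := by
    intro s hs
    have : (fun u => F (s, u)) = Set.indicator (Ici s) (fun u => q * Real.exp (-q * u)) := by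
      funext u
      simp only [hF, Set.indicator_apply, mem_setOf_eq, mem_Ici]
    rw [this, hν, integral_indicator measurableSet_Ici, Measure.restrict_restrict measurableSet_Ici,
      Set.inter_comm]
    exact aux_int q T s hs
  -- compute inner integral in s
  have hinner2 : ∀ u ∈ Ioc (0:ℝ) T,
      (∫ s, F (s, u) ∂μ) = q * Real.exp (-q * u) * H u := by
    intro u hu
    have heq : (fun s => F (s, u)) = Set.indicator (Iic u) (fun _ => q * Real.exp (-q * u)) := by
      funext s
      simp only [hF, Set.indicator_apply, mem_setOf_eq, mem_Iic]
    rw [heq, integral_indicator_const _ measurableSet_Iic]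
    have hμIic : μ (Iic u) = ENNReal.ofReal (H u) := by
      rw [hμ, Measure.restrict_apply measurableSet_Iic]
      have : Iic u ∩ Icc 0 T = Icc 0 u := by
        ext t
        simp only [mem_inter_iff, mem_Iic, mem_Icc]
        constructor
        · rintro ⟨h1, h2, _⟩; exact ⟨h2, h1⟩
        · rintro ⟨h1, h2⟩; exact ⟨h2, h1, h2.trans hu.2⟩
      rw [this, H.measure_Icc, hl0, sub_zero]
    rw [measureReal_def, hμIic, ENNReal.toReal_ofReal (stieltjes_nonneg_s6 H hH0 hu.1.le), smul_eq_mul]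
    ring
  -- assemble
  have hETnn : (0:ℝ) ≤ H T := stieltjes_nonneg_s6 H hH0 hT.le
  have step1 : ∫ s in Icc (0:ℝ) T, Real.exp (-q * s) ∂H.measure
      = (∫ s, Real.exp (-q * T) ∂μ) + ∫ s, (Real.exp (-q * s) - Real.exp (-q * T)) ∂μ := by
    rw [← integral_add (integrable_const _) ?_]
    · apply setIntegral_congr_fun measurableSet_Icc
      intro s _
      ring
    · refine Integrable.mono' (integrable_const (1:ℝ))
        ((Continuous.sub (by continuity) continuous_const).aestronglyMeasurable) ?_
      rw [hμ]
      filter_upwards [ae_restrict_mem measurableSet_Icc] with s hs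
      rw [Real.norm_eq_abs, abs_le]
      have h1 : Real.exp (-q * s) ≤ 1 := by rw [Real.exp_le_one_iff]; nlinarith [hs.1]
      have h2 : Real.exp (-q * T) ≤ 1 := by rw [Real.exp_le_one_iff]; nlinarith
      have h3 := Real.exp_pos (-q * s)
      have h4 := Real.exp_pos (-q * T)
      constructor <;> nlinarith
  have step2 : (∫ s, Real.exp (-q * T) ∂μ) = Real.exp (-q * T) * H T := by
    rw [integral_const, measureReal_def, hμuniv, ENNReal.toReal_ofReal hETnn, smul_eq_mul, mul_comm]
  have step3 : ∫ s, (Real.exp (-q * s) - Real.exp (-q * T)) ∂μ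
      = ∫ u in (0:ℝ)..T, q * Real.exp (-q * u) * H u := by
    have e1 : ∫ s, (Real.exp (-q * s) - Real.exp (-q * T)) ∂μ
        = ∫ s, (∫ u, F (s, u) ∂ν) ∂μ := by
      rw [hμ]
      apply setIntegral_congr_fun measurableSet_Icc
      intro s hs
      exact (hinner1 s hs).symm
    have e2 : ∫ u, (∫ s, F (s, u) ∂μ) ∂ν = ∫ u in (0:ℝ)..T, q * Real.exp (-q * u) * H u := by
      rw [intervalIntegral.integral_of_le hT.le, hν]
      apply setIntegral_congr_fun measurableSet_Ioc
      intro u hu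
      exact hinner2 u hu
    rw [e1, hswap, e2]
  rw [step1, step2, step3]

lemma fubini_primitive {g : ℝ → ℝ} (hg : Measurable g) {q T : ℝ} (hq : 0 < q) (hT : 0 < T)
    (hgi : IntegrableOn g (Icc 0 T)) :
    ∫ s in (0:ℝ)..T, q * Real.exp (-q * s) * (∫ u in (0:ℝ)..s, g u)
      = (∫ s in (0:ℝ)..T, Real.exp (-q * s) * g s)
        - Real.exp (-q * T) * ∫ u in (0:ℝ)..T, g u := by
  set ν : Measure ℝ := volume.restrict (Ioc 0 T) with hν
  haveI : IsFiniteMeasure ν := ⟨by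
    rw [hν, Measure.restrict_apply_univ, Real.volume_Ioc]; exact ENNReal.ofReal_lt_top⟩
  have hgiν : Integrable g ν := by
    rw [hν]; exact hgi.mono_set Ioc_subset_Icc_self
  set F : ℝ × ℝ → ℝ :=
    fun p => Set.indicator {p : ℝ × ℝ | p.1 ≤ p.2} (fun p => q * Real.exp (-q * p.2) * g p.1) p
      with hF
  have hsetm : MeasurableSet {p : ℝ × ℝ | p.1 ≤ p.2} :=
    measurableSet_le measurable_fst measurable_snd
  have hFmeas : Measurable F := by
    apply Measurable.indicator ?_ hsetm
    exact (measurable_const.mul ((measurable_snd.const_mul (-q)).exp)).mul (hg.comp measurable_fst)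
  -- integrability on the product
  have hFint : Integrable F (ν.prod ν) := by
    rw [integrable_prod_iff hFmeas.aestronglyMeasurable]
    constructor
    · apply Eventually.of_forall
      intro u
      refine Integrable.mono' (integrable_const (q * |g u|))
        (hFmeas.comp (measurable_prodMk_left)).aestronglyMeasurable ?_
      rw [hν]
      filter_upwards [ae_restrict_mem measurableSet_Ioc] with s hs
      simp only [hF, Set.indicator_apply, mem_setOf_eq]
      split_ifs with hle
      · rw [Real.norm_eq_abs, abs_mul, abs_mul, abs_of_nonneg hq.le,
          abs_of_nonneg (Real.exp_pos _).le]
        have h1 : Real.exp (-q * s) ≤ 1 := by rw [Real.exp_le_one_iff]; nlinarith [hs.1]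
        have h2 : q * Real.exp (-q * s) * |g u| = (q * |g u|) * Real.exp (-q * s) := by ring
        rw [h2]
        exact mul_le_of_le_one_right (mul_nonneg hq.le (abs_nonneg _)) h1
      · simp; positivity
    · refine Integrable.mono' ((hgiν.abs.const_mul q).mul_const (ν univ).toReal)
        (hFmeas.aestronglyMeasurable.norm.integral_prod_right') ?_
      apply Eventually.of_forall
      intro u
      rw [Real.norm_eq_abs, abs_of_nonneg (integral_nonneg fun s => norm_nonneg _)]
      calc ∫ s, ‖F (u, s)‖ ∂ν ≤ ∫ _, q * |g u| ∂ν := by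
              apply integral_mono_of_nonneg (Eventually.of_forall fun s => norm_nonneg _)
                (integrable_const _)
              rw [hν]
              filter_upwards [ae_restrict_mem measurableSet_Ioc] with s hs
              simp only [hF, Set.indicator_apply, mem_setOf_eq]
              split_ifs with hle
              · rw [Real.norm_eq_abs, abs_mul, abs_mul, abs_of_nonneg hq.le,
                  abs_of_nonneg (Real.exp_pos _).le]
                have h1 : Real.exp (-q * s) ≤ 1 := by rw [Real.exp_le_one_iff]; nlinarith [hs.1]
                have h2 : q * Real.exp (-q * s) * |g u| = (q * |g u|) * Real.exp (-q * s) := by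
                  ring
                rw [h2]
                exact mul_le_of_le_one_right (mul_nonneg hq.le (abs_nonneg _)) h1
              · simp; positivity
        _ = q * |g u| * (ν univ).toReal := by rw [integral_const, smul_eq_mul, mul_comm]; rfl
  have hswap := MeasureTheory.integral_integral_swap (μ := ν) (ν := ν)
    (f := fun u s => F (u, s)) hFint
  -- inner integral in u (for fixed s)
  have hinner1 : ∀ s ∈ Ioc (0:ℝ) T,
      (∫ u, F (u, s) ∂ν) = q * Real.exp (-q * s) * ∫ u in (0:ℝ)..s, g u := by
    intro s hs
    have heq : (fun u => F (u, s))
        = Set.indicator (Iic s) (fun u => q * Real.exp (-q * s) * g u) := by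
      funext u
      simp only [hF, Set.indicator_apply, mem_setOf_eq, mem_Iic]
    rw [heq, hν, integral_indicator measurableSet_Iic,
      Measure.restrict_restrict measurableSet_Iic]
    have hseteq : Iic s ∩ Ioc 0 T = Ioc 0 s := by
      ext t
      simp only [mem_inter_iff, mem_Iic, mem_Ioc]
      constructor
      · rintro ⟨h1, h2, _⟩; exact ⟨h2, h1⟩
      · rintro ⟨h1, h2⟩; exact ⟨h2, h1, h2.trans hs.2⟩
    rw [hseteq, ← intervalIntegral.integral_of_le hs.1.le, intervalIntegral.integral_const_mul]
  -- inner integral in s (for fixed u)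
  have hinner2 : ∀ u ∈ Ioc (0:ℝ) T,
      (∫ s, F (u, s) ∂ν) = g u * (Real.exp (-q * u) - Real.exp (-q * T)) := by
    intro u hu
    have heq : (fun s => F (u, s))
        = Set.indicator (Ici u) (fun s => (q * Real.exp (-q * s)) * g u) := by
      funext s
      simp only [hF, Set.indicator_apply, mem_setOf_eq, mem_Ici]
    rw [heq, hν, integral_indicator measurableSet_Ici,
      Measure.restrict_restrict measurableSet_Ici, Set.inter_comm,
      MeasureTheory.integral_mul_const, aux_int q T u ⟨hu.1.le, hu.2⟩, mul_comm]
  -- put together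
  have e1 : ∫ s in (0:ℝ)..T, q * Real.exp (-q * s) * (∫ u in (0:ℝ)..s, g u)
      = ∫ s, (∫ u, F (u, s) ∂ν) ∂ν := by
    rw [intervalIntegral.integral_of_le hT.le, hν]
    apply setIntegral_congr_fun measurableSet_Ioc
    intro s hs
    exact (hinner1 s hs).symm
  have e2 : ∫ u, (∫ s, F (u, s) ∂ν) ∂ν
      = ∫ u in Ioc (0:ℝ) T, g u * (Real.exp (-q * u) - Real.exp (-q * T)) := by
    rw [hν]
    exact setIntegral_congr_fun measurableSet_Ioc hinner2
  have e3 : ∫ u in Ioc (0:ℝ) T, g u * (Real.exp (-q * u) - Real.exp (-q * T))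
      = (∫ s in (0:ℝ)..T, Real.exp (-q * s) * g s)
        - Real.exp (-q * T) * ∫ u in (0:ℝ)..T, g u := by
    have hint1 : Integrable (fun u => Real.exp (-q * u) * g u) ν := by
      refine hgiν.bdd_mul (c := 1) (Continuous.aestronglyMeasurable (by continuity)) ?_
      rw [hν]
      filter_upwards [ae_restrict_mem measurableSet_Ioc] with u hu
      rw [Real.norm_eq_abs, abs_of_nonneg (Real.exp_pos _).le, Real.exp_le_one_iff]
      nlinarith [hu.1]
    have hsplit : (fun u => g u * (Real.exp (-q * u) - Real.exp (-q * T)))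
        = fun u => Real.exp (-q * u) * g u - g u * Real.exp (-q * T) := by
      funext u; ring
    rw [show (∫ u in Ioc (0:ℝ) T, g u * (Real.exp (-q * u) - Real.exp (-q * T)))
        = ∫ u, g u * (Real.exp (-q * u) - Real.exp (-q * T)) ∂ν from by rw [hν]]
    rw [hsplit, integral_sub hint1 (hgiν.mul_const _), MeasureTheory.integral_mul_const,
      intervalIntegral.integral_of_le hT.le, intervalIntegral.integral_of_le hT.le, hν]
    ring
  rw [e1, ← hswap, e2, e3]


set_option maxHeartbeats 1000000

/-- pathwise core of Proposition 2.1(5).  If a surplus path satisfies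
`X_t = x + ∫₀ᵗ g_s ds − N̄_t − L_t + I_t` on `[0,T]`, with `0 ≤ g_s ≤ ‖p‖₀ + [p]₁ max{X_s,0}`
a.e. and `X ≥ 0` on `[0,T]`, then the discounted dividends minus discounted injections
satisfy `∫_{[0,T]} e^{−qs} dL_s − ∫_{[0,T]} e^{−qs} dI_s ≤ x + ‖p‖₀/q`. -/
theorem discounted_dividends_minus_injections_bound
    (p0 P1 q : ℝ) (hp0 : 0 ≤ p0) (hP1 : 0 ≤ P1) (hq1 : P1 ≤ q) (hq : 0 < q)
    (x T : ℝ) (hx : 0 ≤ x) (hT : 0 < T)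
    (Nb L I : StieltjesFunction ℝ)
    (hNb0 : ∀ t : ℝ, t < 0 → Nb t = 0)
    (hL0 : ∀ t : ℝ, t < 0 → L t = 0)
    (hI0 : ∀ t : ℝ, t < 0 → I t = 0)
    (g : ℝ → ℝ) (hgmeas : Measurable g) (hgint : IntegrableOn g (Icc 0 T))
    (X : ℝ → ℝ)
    (hgbd : ∀ᵐ s ∂(volume.restrict (Icc (0:ℝ) T)), 0 ≤ g s ∧ g s ≤ p0 + P1 * max (X s) 0)
    (hXeq : ∀ t ∈ Icc (0:ℝ) T, X t = x + (∫ s in (0:ℝ)..t, g s) - Nb t - L t + I t)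
    (hXpos : ∀ t ∈ Icc (0:ℝ) T, 0 ≤ X t) :
    ((∫ s in Icc (0:ℝ) T, Real.exp (-q * s) ∂L.measure)
      - ∫ s in Icc (0:ℝ) T, Real.exp (-q * s) ∂I.measure) ≤ x + p0 / q := by
  have hT0 : (0:ℝ) ≤ T := hT.le
  have huIcc : uIcc (0:ℝ) T = Icc 0 T := uIcc_of_le hT0
  set G : ℝ → ℝ := fun t => ∫ s in (0:ℝ)..t, g s with hGdef
  set W : ℝ → ℝ := fun u => Nb u + L u - I u with hWdef
  -- basic integrability facts
  have hgI : IntervalIntegrable g volume 0 T := by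
    rw [intervalIntegrable_iff_integrableOn_Ioc_of_le hT0]
    exact hgint.mono_set Ioc_subset_Icc_self
  have hcontE : Continuous fun u : ℝ => Real.exp (-q * u) := by continuity
  have hqE : Continuous fun u : ℝ => q * Real.exp (-q * u) := by continuity
  have hGc : ContinuousOn G (Icc 0 T) := by
    have h := intervalIntegral.continuousOn_primitive (f := g) (a := 0) (b := T)
      (μ := volume) hgint
    apply h.congr
    intro t ht
    rw [hGdef]
    simp only
    rw [intervalIntegral.integral_of_le ht.1]
  have hWI : IntervalIntegrable W volume 0 T :=
    ((Nb.mono.intervalIntegrable).add (L.mono.intervalIntegrable)).sub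
      (I.mono.intervalIntegrable)
  have hI1int : IntervalIntegrable (fun u => q * Real.exp (-q * u) * W u) volume 0 T :=
    hWI.continuousOn_mul hqE.continuousOn
  have hI2int : IntervalIntegrable (fun u => q * Real.exp (-q * u) * (x + G u)) volume 0 T := by
    apply ContinuousOn.intervalIntegrable
    rw [huIcc]
    exact hqE.continuousOn.mul (continuousOn_const.add hGc)
  have hI3int : IntervalIntegrable (fun u => Real.exp (-q * u) * g u) volume 0 T :=
    hgI.continuousOn_mul hcontE.continuousOn
  -- integration by parts for the three Stieltjes measures
  have hibpN := stieltjes_ibp Nb hNb0 hq hT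
  have hibpL := stieltjes_ibp L hL0 hq hT
  have hibpI := stieltjes_ibp I hI0 hq hT
  have hSN : 0 ≤ ∫ s in Icc (0:ℝ) T, Real.exp (-q * s) ∂Nb.measure :=
    integral_nonneg fun s => (Real.exp_pos _).le
  have hJN : IntervalIntegrable (fun u => q * Real.exp (-q * u) * Nb u) volume 0 T :=
    (Nb.mono.intervalIntegrable).continuousOn_mul hqE.continuousOn
  have hJL : IntervalIntegrable (fun u => q * Real.exp (-q * u) * L u) volume 0 T :=
    (L.mono.intervalIntegrable).continuousOn_mul hqE.continuousOn
  have hJI : IntervalIntegrable (fun u => q * Real.exp (-q * u) * I u) volume 0 T :=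
    (I.mono.intervalIntegrable).continuousOn_mul hqE.continuousOn
  have hJ : (∫ u in (0:ℝ)..T, q * Real.exp (-q * u) * Nb u)
      + (∫ u in (0:ℝ)..T, q * Real.exp (-q * u) * L u)
      - (∫ u in (0:ℝ)..T, q * Real.exp (-q * u) * I u)
      = ∫ u in (0:ℝ)..T, q * Real.exp (-q * u) * W u := by
    rw [← intervalIntegral.integral_add hJN hJL,
      ← intervalIntegral.integral_sub (hJN.add hJL) hJI]
    apply intervalIntegral.integral_congr
    intro u _
    simp only [hWdef]
    ring
  set I1 : ℝ := ∫ u in (0:ℝ)..T, q * Real.exp (-q * u) * W u with hI1def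
  set I2 : ℝ := ∫ u in (0:ℝ)..T, q * Real.exp (-q * u) * (x + G u) with hI2def
  set I3 : ℝ := ∫ u in (0:ℝ)..T, Real.exp (-q * u) * g u with hI3def
  set R : ℝ := ∫ u in (0:ℝ)..T,
      (Real.exp (-q * u) * g u
        - (q * Real.exp (-q * u) * (x + G u) - q * Real.exp (-q * u) * W u)) with hRdef
  have hR : R = I3 - I2 + I1 := by
    rw [hRdef, intervalIntegral.integral_sub hI3int (hI2int.sub hI1int),
      intervalIntegral.integral_sub hI2int hI1int, hI3def, hI2def, hI1def]
    ring
  -- computing I2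
  have hI2eq : I2 = x * (1 - Real.exp (-q * T)) + (I3 - Real.exp (-q * T) * G T) := by
    have hconst : IntervalIntegrable (fun u => q * Real.exp (-q * u) * x) volume 0 T :=
      Continuous.intervalIntegrable (hqE.mul continuous_const) 0 T
    have hqEG : IntervalIntegrable (fun u => q * Real.exp (-q * u) * G u) volume 0 T := by
      apply ContinuousOn.intervalIntegrable
      rw [huIcc]
      exact hqE.continuousOn.mul hGc
    have split : I2 = (∫ u in (0:ℝ)..T, q * Real.exp (-q * u) * x)
        + ∫ u in (0:ℝ)..T, q * Real.exp (-q * u) * G u := by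
      rw [hI2def, ← intervalIntegral.integral_add hconst hqEG]
      apply intervalIntegral.integral_congr
      intro u _
      ring
    have hcval : (∫ u in (0:ℝ)..T, q * Real.exp (-q * u) * x)
        = x * (1 - Real.exp (-q * T)) := by
      rw [intervalIntegral.integral_mul_const, exp_ftc]
      simp [mul_comm]
    have hGval : (∫ u in (0:ℝ)..T, q * Real.exp (-q * u) * G u)
        = I3 - Real.exp (-q * T) * G T := by
      rw [hI3def, hGdef]
      exact fubini_primitive hgmeas hq hT hgint
    rw [split, hcval, hGval]
  -- value at T
  have hXT := hXeq T ⟨hT0, le_refl T⟩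
  have hXTpos := hXpos T ⟨hT0, le_refl T⟩
  have hWT : W T = x + G T - X T := by
    have hGT : G T = ∫ s in (0:ℝ)..T, g s := rfl
    have hWT' : W T = Nb T + L T - I T := rfl
    rw [hWT', hGT]
    rw [hXT]
    ring
  -- a.e. bound for the integrand of R
  have hbound : ∀ᵐ u ∂(volume.restrict (Icc (0:ℝ) T)),
      (Real.exp (-q * u) * g u
        - (q * Real.exp (-q * u) * (x + G u) - q * Real.exp (-q * u) * W u))
        ≤ Real.exp (-q * u) * p0 := by
    filter_upwards [hgbd, ae_restrict_mem measurableSet_Icc] with u hgu hu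
    have hXu := hXeq u hu
    have hXupos := hXpos u hu
    have h1 : x + G u - W u = X u := by
      have hGu : G u = ∫ s in (0:ℝ)..u, g s := rfl
      have hWu : W u = Nb u + L u - I u := rfl
      rw [hGu, hWu, hXu]
      ring
    have h2 : g u ≤ p0 + q * X u := by
      have h := hgu.2
      rw [max_eq_left hXupos] at h
      linarith [mul_le_mul_of_nonneg_right hq1 hXupos]
    have hE := Real.exp_pos (-q * u)
    have h3 : q * Real.exp (-q * u) * (x + G u) - q * Real.exp (-q * u) * W u
        = q * Real.exp (-q * u) * X u := by
      rw [← h1]; ring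
    rw [h3]
    linarith [mul_le_mul_of_nonneg_left h2 hE.le]
  have hRle : R ≤ p0 * (1 - Real.exp (-q * T)) / q := by
    have hmono := intervalIntegral.integral_mono_ae_restrict hT0
      (hI3int.sub (hI2int.sub hI1int))
      (Continuous.intervalIntegrable (hcontE.mul continuous_const) 0 T) hbound
    have hEp0 : (∫ u in (0:ℝ)..T, Real.exp (-q * u) * p0)
        = p0 * (1 - Real.exp (-q * T)) / q := by
      rw [intervalIntegral.integral_mul_const]
      have hftc := exp_ftc q 0 T
      rw [intervalIntegral.integral_const_mul] at hftc
      have hE0 : Real.exp (-q * 0) = 1 := by norm_num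
      rw [hE0] at hftc
      have : (∫ u in (0:ℝ)..T, Real.exp (-q * u)) = (1 - Real.exp (-q * T)) / q := by
        rw [eq_div_iff hq.ne']
        linear_combination hftc
      rw [this]
      ring
    rw [← hRdef] at hmono
    simp only [Pi.mul_apply] at hmono
    linarith [hmono, hEp0.symm.le, hEp0.le]
  -- assemble everything
  have key : (∫ s in Icc (0:ℝ) T, Real.exp (-q * s) ∂Nb.measure)
      + (∫ s in Icc (0:ℝ) T, Real.exp (-q * s) ∂L.measure)
      - (∫ s in Icc (0:ℝ) T, Real.exp (-q * s) ∂I.measure)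
      = Real.exp (-q * T) * (x + G T - X T) + I1 := by
    rw [hibpN, hibpL, hibpI]
    have : Real.exp (-q * T) * Nb T + Real.exp (-q * T) * L T - Real.exp (-q * T) * I T
        = Real.exp (-q * T) * (x + G T - X T) := by
      rw [← hWT]
      simp only [hWdef]
      ring
    linarith [hJ, this]
  have e4 : (∫ s in Icc (0:ℝ) T, Real.exp (-q * s) ∂Nb.measure)
      + (∫ s in Icc (0:ℝ) T, Real.exp (-q * s) ∂L.measure)
      - (∫ s in Icc (0:ℝ) T, Real.exp (-q * s) ∂I.measure)
      = x - Real.exp (-q * T) * X T + R := by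
    rw [key]
    have h1 : I1 = R - I3 + I2 := by linarith [hR]
    rw [h1, hI2eq]
    ring
  have h5 : 0 ≤ Real.exp (-q * T) * X T := mul_nonneg (Real.exp_pos _).le hXTpos
  have h6 : p0 * (1 - Real.exp (-q * T)) / q ≤ p0 / q := by
    have hnum : p0 * (1 - Real.exp (-q * T)) ≤ p0 := by
      nlinarith [mul_nonneg hp0 (Real.exp_pos (-q * T)).le]
    exact (div_le_div_iff_of_pos_right hq).mpr hnum
  calc (∫ s in Icc (0:ℝ) T, Real.exp (-q * s) ∂L.measure)
      - ∫ s in Icc (0:ℝ) T, Real.exp (-q * s) ∂I.measure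
      ≤ (∫ s in Icc (0:ℝ) T, Real.exp (-q * s) ∂Nb.measure)
        + (∫ s in Icc (0:ℝ) T, Real.exp (-q * s) ∂L.measure)
        - ∫ s in Icc (0:ℝ) T, Real.exp (-q * s) ∂I.measure := by linarith
    _ = x - Real.exp (-q * T) * X T + R := e4
    _ ≤ x + p0 / q := by linarith [hRle, h5, h6]
end
end

section
/- (Estimate (EstimLu) in the proof of Proposition 3.2.) Assume [A1], [A2], λ > 0, q > 0 and k ≥ 1. Let x₀ < 0 and let φ : ℝ → [0,∞) be absolutely continuous with: φ(x) = 0 for all x ≤ x₀; φ'(x) ≤ k for almost every x ∈ ℝ and 1 ≤ φ'(x) for almost every x > x₀; φ of linear growth; and for almost every x ≥ 0 and every u ∈ 𝓡, 𝓛^u φ(x) ≤ 0. Let ρ : ℝ → [0,∞) be C¹, supported in (0,1), with ∫ρ = 1, and set ψ_n(x) := ∫₀^{1/n} φ(x+s)·n·ρ(ns) ds for n ≥ 1. Then each ψ_n is C¹, φ(x) ≤ ψ_n(x) ≤ φ(x) + k/n for all x ∈ ℝ, and for every x ≥ 0, every u ∈ 𝓡 and every n ≥ 1: 𝓛^u ψ_n(x)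 ≤ (1 + k(3λ + 2q))/n. -/
open MeasureTheory Set Real Filter

noncomputable section

/-- A retention (reinsurance) policy: a Borel measurable function `u` with
`0 ≤ u y ≤ y` for all `y ≥ 0`. -/
def IsRetention (u : ℝ → ℝ) : Prop :=
  Measurable u ∧ ∀ y : ℝ, 0 ≤ y → 0 ≤ u y ∧ u y ≤ y

/-- The inner supremum `sup_{0 ≤ y ≤ z} |p(y,x) − p(y,x')|` appearing in `[p]₁`. -/
def supDiff (p : ℝ → ℝ → ℝ) (x x' z : ℝ) : ℝ :=
  sSup ((fun y => |p y x - p y x'|) '' Icc 0 z)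

/-- Assumption [A1]: `p ≥ 0` and `p` is non-decreasing in each argument on `[0,∞)`. -/
def AssumptionA1 (p : ℝ → ℝ → ℝ) : Prop :=
  (∀ y x : ℝ, 0 ≤ y → 0 ≤ x → 0 ≤ p y x) ∧
  (∀ x : ℝ, 0 ≤ x → MonotoneOn (fun y => p y x) (Ici 0)) ∧
  (∀ y : ℝ, 0 ≤ y → MonotoneOn (fun x => p y x) (Ici 0))

/-- Assumption [A2], with the real constant `P1` standing for the finite quantity `[p]₁`:
`p` is (jointly) measurable, uniformly continuous on `[0,∞)²`,
`‖p‖₀ = ∫ p(y,0) dF(y)` is finite, and the defining bound of `[p]₁` holds. -/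
def AssumptionA2 (F : Measure ℝ) (p : ℝ → ℝ → ℝ) (P1 : ℝ) : Prop :=
  Measurable (fun z : ℝ × ℝ => p z.1 z.2) ∧
  UniformContinuousOn (fun z : ℝ × ℝ => p z.1 z.2) (Ici 0 ×ˢ Ici 0) ∧
  Integrable (fun y => p y 0) F ∧
  0 ≤ P1 ∧
  (∀ x x' : ℝ, 0 ≤ x → 0 ≤ x' → Integrable (fun z => supDiff p x x' z) F) ∧
  (∀ x x' : ℝ, 0 ≤ x → 0 ≤ x' → (∫ z, supDiff p x x' z ∂F) ≤ P1 * |x - x'|)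

/-- The generator `𝓛^u ψ(x) = p^u(x) ψ'(x) + λ ∫ ψ(x − u(y)) dF(y) − (λ+q) ψ(x)`,
where `ψ'` denotes an (a.e.) derivative of `ψ`. -/
def gen (F : MeasureTheory.Measure ℝ) (p : ℝ → ℝ → ℝ) (lam q : ℝ) (u : ℝ → ℝ)
    (ψ ψ' : ℝ → ℝ) (x : ℝ) : ℝ :=
  (∫ y, p (u y) x ∂F) * ψ' x + lam * (∫ y, ψ (x - u y) ∂F) - (lam + q) * ψ x

/-- The right-mollification `ψ_n(x) = ∫₀^{1/n} φ(x+s) n ρ(ns) ds`. -/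
def mollify (φ ρ : ℝ → ℝ) (n : ℕ) (x : ℝ) : ℝ :=
  ∫ s in Ioo (0:ℝ) (1 / (n : ℝ)), φ (x + s) * ((n : ℝ) * ρ ((n : ℝ) * s))

set_option maxHeartbeats 4000000 in
/-- estimate (EstimLu) in the proof of Proposition 3.2.  The right
mollifications `ψ_n` of an absolutely continuous super-solution `φ` are `C¹`, satisfy
`φ ≤ ψ_n ≤ φ + k/n`, and for every `x ≥ 0`, every retention policy `u` and every `n ≥ 1`,
`𝓛^u ψ_n(x) ≤ (1 + k(3λ + 2q))/n`. -/
theorem mollified_supersolution_generator_estimate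
    (F : Measure ℝ) [IsProbabilityMeasure F] (hF : F (Iio 0) = 0)
    (hmean : Integrable (fun y : ℝ => y) F)
    (p : ℝ → ℝ → ℝ) (P1 : ℝ) (hA1 : AssumptionA1 p) (hA2 : AssumptionA2 F p P1)
    (lam q k : ℝ) (hlam : 0 < lam) (hq : 0 < q) (hk : 1 ≤ k)
    (x₀ : ℝ) (hx₀ : x₀ < 0)
    (φ φ' : ℝ → ℝ)
    (hzero : ∀ x : ℝ, x ≤ x₀ → φ x = 0)
    (hpos : ∀ x : ℝ, 0 ≤ φ x)
    (hloc : ∀ a b : ℝ, IntervalIntegrable φ' volume a b)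
    (hAC : ∀ a b : ℝ, φ b - φ a = ∫ t in a..b, φ' t)
    (hub : ∀ᵐ x : ℝ ∂volume, φ' x ≤ k)
    (hlb : ∀ᵐ x : ℝ ∂volume, x₀ < x → 1 ≤ φ' x)
    (hgrow : ∃ c : ℝ, ∀ x : ℝ, φ x ≤ c * (1 + |x|))
    (hgen : ∀ᵐ x : ℝ ∂volume, 0 ≤ x → ∀ u : ℝ → ℝ, IsRetention u →
      gen F p lam q u φ φ' x ≤ 0)
    (ρ : ℝ → ℝ) (hρC1 : ContDiff ℝ 1 ρ) (hρ0 : ∀ s : ℝ, 0 ≤ ρ s)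
    (hρsupp : Function.support ρ ⊆ Ioo 0 1) (hρint : (∫ s, ρ s) = 1) :
    ∀ n : ℕ, 1 ≤ n →
      ContDiff ℝ 1 (mollify φ ρ n) ∧
      (∀ x : ℝ, φ x ≤ mollify φ ρ n x ∧ mollify φ ρ n x ≤ φ x + k / n) ∧
      (∀ x : ℝ, 0 ≤ x → ∀ u : ℝ → ℝ, IsRetention u →
        gen F p lam q u (mollify φ ρ n) (deriv (mollify φ ρ n)) x
          ≤ (1 + k * (3 * lam + 2 * q)) / n) := by
  
  classical
  -- basic facts
  have hFae : ∀ᵐ y ∂F, (0:ℝ) ≤ y := by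
    rw [ae_iff]
    refine measure_mono_null (fun y hy => ?_) hF
    simpa using hy
  -- continuity of φ
  have φcont : Continuous φ := by
    have hrepr : φ = fun b => φ 0 + ∫ t in (0:ℝ)..b, φ' t := by
      funext b; have := hAC 0 b; linarith
    rw [hrepr]
    exact continuous_const.add (intervalIntegral.continuous_primitive hloc 0)
  -- local integrability of φ'
  have hφ'loc : LocallyIntegrable φ' volume := by
    rw [MeasureTheory.locallyIntegrable_iff]
    intro K hK
    obtain ⟨R, hR⟩ := hK.isBounded.subset_closedBall 0
    have hR' : K ⊆ Ioc (-(|R|+1)) (|R|+1) := by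
      intro t ht
      have := hR ht
      rw [Real.closedBall_eq_Icc] at this
      constructor
      · nlinarith [this.1, abs_nonneg R, le_abs_self R, neg_abs_le R]
      · nlinarith [this.2, le_abs_self R]
    refine (MeasureTheory.IntegrableOn.mono_set ?_ hR')
    have := (hloc (-(|R|+1)) (|R|+1))
    rw [intervalIntegrable_iff] at this
    rwa [Set.uIoc_of_le (by nlinarith [abs_nonneg R])] at this
  -- measurable representative of φ'
  obtain ⟨h, hmeash, haeh⟩ : ∃ h : ℝ → ℝ, StronglyMeasurable h ∧ φ' =ᵐ[volume] h :=
    ⟨hφ'loc.aestronglyMeasurable.mk φ', hφ'loc.aestronglyMeasurable.stronglyMeasurable_mk,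
      hφ'loc.aestronglyMeasurable.ae_eq_mk⟩
  have hmeash' : Measurable h := hmeash.measurable
  have hloc' : ∀ a b : ℝ, IntervalIntegrable h volume a b := fun a b =>
    (hloc a b).congr_ae (ae_restrict_of_ae haeh)
  have hAC' : ∀ a b : ℝ, φ b - φ a = ∫ t in a..b, h t := by
    intro a b
    rw [hAC a b]
    exact intervalIntegral.integral_congr_ae
      (by filter_upwards [haeh] with t ht using fun _ => ht)
  have hub' : ∀ᵐ x : ℝ ∂volume, h x ≤ k := by
    filter_upwards [hub, haeh] with t h1 h2; rw [← h2]; exact h1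
  have hlb' : ∀ᵐ x : ℝ ∂volume, x₀ < x → 1 ≤ h x := by
    filter_upwards [hlb, haeh] with t h1 h2 ht; rw [← h2]; exact h1 ht
  have hgen' : ∀ᵐ x : ℝ ∂volume, 0 ≤ x → ∀ u : ℝ → ℝ, IsRetention u →
      gen F p lam q u φ h x ≤ 0 := by
    filter_upwards [hgen, haeh] with t h1 h2 ht u hu
    have := h1 ht u hu
    simpa only [gen, h2] using this
  have hhloc : LocallyIntegrable h volume := by
    rw [MeasureTheory.locallyIntegrable_iff] at hφ'loc ⊢
    exact fun K hK => (hφ'loc K hK).congr_fun_ae (ae_restrict_of_ae haeh)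
  -- monotonicity of φ
  have φmono : Monotone φ := by
    intro a b hab
    rcases le_total b x₀ with hb | hb
    · rw [hzero a (hab.trans hb), hzero b hb]
    rcases le_total a x₀ with ha | ha
    · rw [hzero a ha]; exact hpos b
    · have h0 : (0:ℝ) ≤ ∫ t in a..b, h t := by
        rw [← intervalIntegral.integral_zero (a := a) (b := b) (μ := volume)]
        refine intervalIntegral.integral_mono_ae_restrict hab
          (intervalIntegrable_const) (hloc' a b) ?_
        have hane : ∀ᵐ t : ℝ ∂volume, t ≠ x₀ := by
          rw [ae_iff]
          have : {t : ℝ | ¬ t ≠ x₀} = {x₀} := by ext t; simp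
          rw [this]; exact Real.volume_singleton
        filter_upwards [ae_restrict_of_ae hlb', ae_restrict_of_ae hane,
          ae_restrict_mem measurableSet_Icc] with t h1 h2 h3
        have : x₀ < t := lt_of_le_of_ne (ha.trans h3.1) (Ne.symm h2)
        have := h1 this
        linarith
      have := hAC' a b
      linarith
  -- Lipschitz-type upper bound
  have φlip : ∀ a b : ℝ, a ≤ b → φ b ≤ φ a + k * (b - a) := by
    intro a b hab
    have h1 : (∫ t in a..b, h t) ≤ ∫ t in a..b, k := by
      exact intervalIntegral.integral_mono_ae hab (hloc' a b) intervalIntegrable_const hub'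
    rw [intervalIntegral.integral_const, smul_eq_mul] at h1
    have := hAC' a b
    linarith [h1]
  -- now the main part
  intro n hn
  have hn0 : (0:ℝ) < (n:ℝ) := by exact_mod_cast Nat.lt_of_lt_of_le Nat.zero_lt_one hn
  have hn1 : (1:ℝ) ≤ (n:ℝ) := by exact_mod_cast hn
  have hδ0 : (0:ℝ) < 1 / (n:ℝ) := by positivity
  have hδ1 : 1 / (n:ℝ) ≤ 1 := by
    rw [div_le_one hn0]; exact hn1
  set I : Set ℝ := Ioo (0:ℝ) (1 / (n:ℝ)) with hI
  set ρn : ℝ → ℝ := fun s => (n:ℝ) * ρ ((n:ℝ) * s) with hρn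
  have ρncont : Continuous ρn :=
    continuous_const.mul (hρC1.continuous.comp (continuous_const.mul continuous_id))
  have hρn0 : ∀ s, 0 ≤ ρn s := fun s => mul_nonneg hn0.le (hρ0 _)
  have hρcs : HasCompactSupport ρ := by
    apply HasCompactSupport.intro (isCompact_Icc (a := (0:ℝ)) (b := 1))
    intro s hs
    by_contra hne
    exact hs (Ioo_subset_Icc_self (hρsupp hne))
  have hρnbdd : ∃ C : ℝ, 0 ≤ C ∧ ∀ s, ρn s ≤ C := by
    obtain ⟨C0, hC0⟩ := hρcs.exists_bound_of_continuous hρC1.continuous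
    have hC00 : 0 ≤ C0 := le_trans (norm_nonneg _) (hC0 0)
    refine ⟨(n:ℝ) * C0, by positivity, fun s => ?_⟩
    have : ρ ((n:ℝ)*s) ≤ C0 := le_trans (le_abs_self _) (hC0 _)
    simp only [hρn]
    nlinarith
  have hρnsupp : ∀ s, s ∉ I → ρn s = 0 := by
    intro s hs
    have : ρ ((n:ℝ) * s) = 0 := by
      by_contra hne
      have hmem := hρsupp (by exact hne : (n:ℝ)*s ∈ Function.support ρ)
      refine hs ⟨?_, ?_⟩
      · nlinarith [hmem.1]
      · rw [lt_div_iff₀ hn0]; nlinarith [hmem.2]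
    simp [hρn, this]
  have hmoll : ∀ x : ℝ, mollify φ ρ n x = ∫ s in I, φ (x + s) * ρn s := fun x => rfl
  have hρnint1 : (∫ s in I, ρn s) = 1 := by
    rw [setIntegral_eq_integral_of_forall_compl_eq_zero (fun s hs => hρnsupp s hs)]
    simp only [hρn]
    rw [MeasureTheory.integral_const_mul, Measure.integral_comp_mul_left ρ (n:ℝ), hρint,
      abs_of_pos (inv_pos.2 hn0)]
    simp [smul_eq_mul]
    field_simp
  have hρnIntOn : IntegrableOn ρn I volume := by
    exact (ρncont.integrableOn_Icc (a := 0) (b := 1/(n:ℝ))).mono_set Ioo_subset_Icc_self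
  -- part 2 : sandwich
  have sandwich : ∀ x : ℝ, φ x ≤ mollify φ ρ n x ∧ mollify φ ρ n x ≤ φ x + k / n := by
    intro x
    have hcont1 : Continuous fun s => φ (x + s) * ρn s :=
      (φcont.comp (continuous_const.add continuous_id)).mul ρncont
    have hint1 : IntegrableOn (fun s => φ (x + s) * ρn s) I volume :=
      (hcont1.integrableOn_Icc (a := 0) (b := 1/(n:ℝ))).mono_set Ioo_subset_Icc_self
    constructor
    · have he : φ x = ∫ s in I, φ x * ρn s := by
        rw [MeasureTheory.integral_const_mul, hρnint1, mul_one]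
      rw [hmoll x]
      nth_rewrite 1 [he]
      refine setIntegral_mono_on (hρnIntOn.const_mul _) hint1 measurableSet_Ioo ?_
      intro s hs
      exact mul_le_mul_of_nonneg_right (φmono (by linarith [hs.1] : x ≤ x + s)) (hρn0 s)
    · have he : (∫ s in I, (φ x + k / n) * ρn s) = φ x + k / n := by
        rw [MeasureTheory.integral_const_mul, hρnint1, mul_one]
      rw [hmoll x, ← he]
      refine setIntegral_mono_on hint1 (hρnIntOn.const_mul _) measurableSet_Ioo ?_
      intro s hs
      have h3 : φ (x + s) ≤ φ x + k * s := by
        have := φlip x (x + s) (by linarith [hs.1])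
        linarith
      have h4 : k * s ≤ k / n := by
        have hs2 : s ≤ 1/(n:ℝ) := le_of_lt hs.2
        have : k * s ≤ k * (1/(n:ℝ)) := by nlinarith
        calc k * s ≤ k * (1/(n:ℝ)) := this
        _ = k / n := by ring
      exact mul_le_mul_of_nonneg_right (by linarith) (hρn0 s)
  -- derivative candidate
  set g : ℝ → ℝ := fun t => ∫ s in I, h (t + s) * ρn s with hg
  have gcont : Continuous g := by
    have hcs : HasCompactSupport (fun t : ℝ => ρn (-t)) := by
      apply HasCompactSupport.intro (isCompact_Icc (a := -(1/(n:ℝ))) (b := (0:ℝ)))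
      intro s hs
      apply hρnsupp
      intro hmem
      exact hs ⟨by linarith [hmem.2], by linarith [hmem.1]⟩
    have hconv : g = MeasureTheory.convolution (fun t : ℝ => ρn (-t)) h
        (ContinuousLinearMap.mul ℝ ℝ) volume := by
      funext t
      rw [MeasureTheory.convolution_def]
      simp only [ContinuousLinearMap.mul_apply']
      calc g t = ∫ s in I, h (t + s) * ρn s := rfl
        _ = ∫ s, h (t + s) * ρn s :=
            setIntegral_eq_integral_of_forall_compl_eq_zero
              (fun s hs => by rw [hρnsupp s hs, mul_zero])
        _ = ∫ s, ρn s * h (t + s) := by simp_rw [mul_comm]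
        _ = ∫ s, ρn (-s) * h (t + -s) :=
            (MeasureTheory.integral_neg_eq_self (fun s => ρn s * h (t + s)) volume).symm
        _ = ∫ s, ρn (-s) * h (t - s) := by simp_rw [← sub_eq_add_neg]
    rw [hconv]
    exact hcs.continuous_convolution_left (ContinuousLinearMap.mul ℝ ℝ)
      (ρncont.comp continuous_neg) hhloc
  have hIfin : Fact (volume I < ⊤) := by
    constructor
    rw [hI, Real.volume_Ioo]
    exact ENNReal.ofReal_lt_top
  haveI := hIfin
  have key : ∀ a b : ℝ, a ≤ b →
      mollify φ ρ n b - mollify φ ρ n a = ∫ t in a..b, g t := by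
    intro a b hab
    obtain ⟨C, hC0, hC⟩ := hρnbdd
    set M : ℝ := ∫ t in Icc a (b+1), |h t| with hM
    have hMint : IntegrableOn (fun t => |h t|) (Icc a (b+1)) volume := by
      have := (hloc' a (b+1)).abs
      rw [intervalIntegrable_iff'] at this
      rwa [Set.uIcc_of_le (by linarith)] at this
    have hmeasprod : AEStronglyMeasurable (Function.uncurry fun s t => h (t + s) * ρn s)
        ((volume.restrict I).prod (volume.restrict (Ioc a b))) := by
      apply Measurable.aestronglyMeasurable
      exact (hmeash'.comp (measurable_snd.add measurable_fst)).mul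
        (ρncont.measurable.comp measurable_fst)
    have hslice : ∀ s : ℝ, Integrable (fun t => h (t + s) * ρn s)
        (volume.restrict (Ioc a b)) := by
      intro s
      have h1 : IntervalIntegrable (fun t => h (t + s)) volume (a + s - s) (b + s - s) :=
        (hloc' (a + s) (b + s)).comp_add_right s
      rw [add_sub_cancel_right, add_sub_cancel_right] at h1
      rw [intervalIntegrable_iff, Set.uIoc_of_le hab] at h1
      exact h1.mul_const _
    have habs : ∀ s ∈ I, (∫ t in Ioc a b, ‖h (t + s) * ρn s‖) ≤ C * M := by
      intro s hs
      have hs0 : 0 < s := hs.1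
      have hs1 : s ≤ 1 := le_trans hs.2.le hδ1
      have e1 : (∫ t in Ioc a b, ‖h (t + s) * ρn s‖)
          = (∫ t in Ioc a b, |h (t + s)|) * ρn s := by
        rw [← MeasureTheory.integral_mul_const]
        refine setIntegral_congr_fun measurableSet_Ioc fun t _ => ?_
        rw [Real.norm_eq_abs, abs_mul, abs_of_nonneg (hρn0 s)]
      have e2 : (∫ t in Ioc a b, |h (t + s)|) = ∫ t in Ioc (a+s) (b+s), |h t| := by
        rw [← intervalIntegral.integral_of_le hab, ← intervalIntegral.integral_of_le
          (by linarith : a + s ≤ b + s)]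
        exact intervalIntegral.integral_comp_add_right (fun t => |h t|) s
      have e3 : (∫ t in Ioc (a+s) (b+s), |h t|) ≤ M := by
        rw [hM]
        refine setIntegral_mono_set hMint ?_ ?_
        · exact ae_of_all _ fun t => abs_nonneg _
        · refine HasSubset.Subset.eventuallyLE fun t ht => ?_
          exact ⟨by linarith [ht.1], by linarith [ht.2]⟩
      have e4 : 0 ≤ ∫ t in Ioc (a+s) (b+s), |h t| :=
        setIntegral_nonneg measurableSet_Ioc fun t _ => abs_nonneg _
      rw [e1, e2]
      have := hC s
      have := hρn0 s
      nlinarith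
    have hnormint : Integrable
        (fun s => ∫ t, ‖h (t + s) * ρn s‖ ∂(volume.restrict (Ioc a b)))
        (volume.restrict I) := by
      refine Integrable.mono' (integrable_const (C * M)) ?_ ?_
      · exact hmeasprod.norm.integral_prod_right'
      · filter_upwards [ae_restrict_mem measurableSet_Ioo] with s hs
        rw [Real.norm_eq_abs, abs_of_nonneg (integral_nonneg fun t => norm_nonneg _)]
        exact habs s hs
    have hFub : Integrable (Function.uncurry fun s t => h (t + s) * ρn s)
        ((volume.restrict I).prod (volume.restrict (Ioc a b))) := by
      rw [integrable_prod_iff hmeasprod]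
      exact ⟨ae_of_all _ hslice, hnormint⟩
    have hintb : IntegrableOn (fun s => φ (b + s) * ρn s) I volume :=
      (((φcont.comp (continuous_const.add continuous_id)).mul ρncont).integrableOn_Icc
        (a := 0) (b := 1/(n:ℝ))).mono_set Ioo_subset_Icc_self
    have hinta : IntegrableOn (fun s => φ (a + s) * ρn s) I volume :=
      (((φcont.comp (continuous_const.add continuous_id)).mul ρncont).integrableOn_Icc
        (a := 0) (b := 1/(n:ℝ))).mono_set Ioo_subset_Icc_self
    calc mollify φ ρ n b - mollify φ ρ n a
        = ∫ s in I, (φ (b + s) - φ (a + s)) * ρn s := by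
          rw [hmoll, hmoll, ← integral_sub hintb hinta]
          refine setIntegral_congr_fun measurableSet_Ioo fun s _ => ?_
          ring
      _ = ∫ s in I, (∫ t in a..b, h (t + s)) * ρn s := by
          refine setIntegral_congr_fun measurableSet_Ioo fun s _ => ?_
          rw [hAC' (a + s) (b + s), intervalIntegral.integral_comp_add_right]
      _ = ∫ s in I, ∫ t in Ioc a b, h (t + s) * ρn s := by
          refine setIntegral_congr_fun measurableSet_Ioo fun s _ => ?_
          rw [intervalIntegral.integral_of_le hab, ← MeasureTheory.integral_mul_const]
      _ = ∫ t in Ioc a b, ∫ s in I, h (t + s) * ρn s :=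
          MeasureTheory.integral_integral_swap hFub
      _ = ∫ t in a..b, g t := by rw [intervalIntegral.integral_of_le hab]
  have hasD : ∀ x : ℝ, HasDerivAt (mollify φ ρ n) (g x) x := by
    intro x
    have heq : mollify φ ρ n = fun b => mollify φ ρ n 0 + ∫ t in (0:ℝ)..b, g t := by
      funext b
      rcases le_total 0 b with hb | hb
      · have := key 0 b hb; linarith
      · have := key b 0 hb
        rw [intervalIntegral.integral_symm]; linarith
    rw [heq]
    exact ((gcont.integral_hasStrictDerivAt 0 x).hasDerivAt).const_add _
  have hderiv : deriv (mollify φ ρ n) = g := funext fun x => (hasD x).deriv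
  have hC1 : ContDiff ℝ 1 (mollify φ ρ n) :=
    contDiff_one_iff_deriv.2 ⟨fun x => (hasD x).differentiableAt, hderiv ▸ gcont⟩
  refine ⟨hC1, sandwich, ?_⟩
  -- part 3
  intro x hx u hu
  obtain ⟨hp0, hpm1, hpm2⟩ := hA1
  obtain ⟨hpmeas, hpuc, hp0int, hP1, hsupint, hsupbd⟩ := hA2
  obtain ⟨humeas, hu01⟩ := hu
  obtain ⟨C, hC0, hC⟩ := hρnbdd
  have hpcont : ContinuousOn (fun z : ℝ × ℝ => p z.1 z.2) (Ici 0 ×ˢ Ici 0) :=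
    hpuc.continuousOn
  -- integrability of premium terms
  have pint : ∀ t : ℝ, 0 ≤ t → Integrable (fun y => p (u y) t) F := by
    intro t ht
    have hmeas1 : AEStronglyMeasurable (fun y => p (u y) t) F :=
      (hpmeas.comp (humeas.prodMk measurable_const)).aestronglyMeasurable
    refine Integrable.mono' (hp0int.add (hsupint t 0 ht le_rfl)) hmeas1 ?_
    filter_upwards [hFae] with y hy
    have hu0 := (hu01 y hy).1
    have huy := (hu01 y hy).2
    have hnn : 0 ≤ p (u y) t := hp0 _ _ hu0 ht
    rw [Real.norm_eq_abs, abs_of_nonneg hnn]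
    have h1 : p (u y) 0 ≤ p y 0 :=
      hpm1 0 le_rfl (by exact hu0 : u y ∈ Ici (0:ℝ)) (by exact hu0.trans huy : y ∈ Ici (0:ℝ)) huy
    have hbdd : BddAbove ((fun y' => |p y' t - p y' 0|) '' Icc 0 y) := by
      refine IsCompact.bddAbove_image isCompact_Icc ?_
      have c1 : ContinuousOn (fun y' => p y' t) (Icc 0 y) :=
        hpcont.comp ((continuous_id.prodMk continuous_const).continuousOn)
          (fun y' hy' => ⟨hy'.1, ht⟩)
      have c2 : ContinuousOn (fun y' => p y' 0) (Icc 0 y) :=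
        hpcont.comp ((continuous_id.prodMk continuous_const).continuousOn)
          (fun y' hy' => ⟨hy'.1, Set.mem_Ici.mpr le_rfl⟩)
      exact (c1.sub c2).abs
    have h2 : |p (u y) t - p (u y) 0| ≤ supDiff p t 0 y :=
      le_csSup hbdd ⟨u y, ⟨hu0, huy⟩, rfl⟩
    have h3 := (abs_le.1 h2).2
    have hgoal : p (u y) t ≤ p y 0 + supDiff p t 0 y := by linarith
    simpa [Pi.add_apply] using hgoal
  -- monotonicity of the premium in the surplus variable
  have hAle : ∀ s ∈ I, (∫ y, p (u y) x ∂F) ≤ ∫ y, p (u y) (x + s) ∂F := by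
    intro s hs
    refine integral_mono_ae (pint x hx) (pint (x + s) (by linarith [hs.1])) ?_
    filter_upwards [hFae] with y hy
    exact hpm2 (u y) (hu01 y hy).1 (by exact hx : x ∈ Ici (0:ℝ))
      (by simp only [mem_Ici]; linarith [hs.1] : x + s ∈ Ici (0:ℝ)) (by linarith [hs.1])
  -- the claim integral term
  set Φ : ℝ → ℝ := fun s => ∫ y, φ (x + s - u y) ∂F with hΦ
  have hΦmeas : StronglyMeasurable Φ := by
    have hsm : StronglyMeasurable (fun z : ℝ × ℝ => φ (x + z.1 - u z.2)) :=
      (φcont.measurable.comp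
        ((measurable_const.add measurable_fst).sub (humeas.comp measurable_snd))).stronglyMeasurable
    rw [hΦ]
    have h2 : StronglyMeasurable (fun s : ℝ => ∫ y, (fun z : ℝ × ℝ => φ (x + z.1 - u z.2)) (s, y) ∂F) :=
      hsm.integral_prod_right' (ν := F)
    exact h2
  have hΦinner : ∀ s : ℝ, Integrable (fun y => φ (x + s - u y)) F := by
    intro s
    refine Integrable.mono' (integrable_const (φ (x + s))) ?_ ?_
    · exact (φcont.measurable.comp
        (measurable_const.sub humeas)).aestronglyMeasurable
    · filter_upwards [hFae] with y hy
      rw [Real.norm_eq_abs, abs_of_nonneg (hpos _)]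
      exact φmono (by linarith [(hu01 y hy).1])
  have hΦbd : ∀ s ∈ I, 0 ≤ Φ s ∧ Φ s ≤ φ (x + 1) := by
    intro s hs
    constructor
    · exact integral_nonneg fun y => hpos _
    · calc Φ s ≤ ∫ _y, φ (x + 1) ∂F := by
            refine integral_mono_ae (hΦinner s) (integrable_const _) ?_
            filter_upwards [hFae] with y hy
            refine φmono ?_
            have := (hu01 y hy).1
            have hs1 : s ≤ 1 := le_trans hs.2.le hδ1
            linarith
        _ = φ (x + 1) := by simp
  -- Fubini for the claim term
  have hJswap : (∫ y, mollify φ ρ n (x - u y) ∂F) = ∫ s in I, Φ s * ρn s := by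
    have hre : ∀ y, mollify φ ρ n (x - u y) = ∫ s in I, φ (x - u y + s) * ρn s := fun _ => rfl
    simp_rw [hre]
    have hae1 : ∀ᵐ z : ℝ × ℝ ∂(F.prod (volume.restrict I)), 0 ≤ z.1 := by
      rw [ae_iff]
      have hsub : {z : ℝ × ℝ | ¬ 0 ≤ z.1} ⊆ {y : ℝ | ¬ (0:ℝ) ≤ y} ×ˢ (univ : Set ℝ) :=
        fun z hz => ⟨hz, mem_univ _⟩
      refine measure_mono_null hsub ?_
      rw [Measure.prod_prod]
      have hz : F {y : ℝ | ¬ (0:ℝ) ≤ y} = 0 := by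
        refine measure_mono_null (fun y hy => ?_) hF
        simpa using hy
      rw [hz, zero_mul]
    have hae2 : ∀ᵐ z : ℝ × ℝ ∂(F.prod (volume.restrict I)), z.2 ∈ I := by
      rw [ae_iff]
      have hsub : {z : ℝ × ℝ | ¬ z.2 ∈ I} ⊆ (univ : Set ℝ) ×ˢ {s : ℝ | s ∉ I} :=
        fun z hz => ⟨mem_univ _, hz⟩
      refine measure_mono_null hsub ?_
      rw [Measure.prod_prod]
      have hz : (volume.restrict I) {s : ℝ | s ∉ I} = 0 := by
        have : {s : ℝ | s ∉ I} = Iᶜ := rfl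
        rw [this, Measure.restrict_apply measurableSet_Ioo.compl, Set.compl_inter_self,
          measure_empty]
      rw [hz, mul_zero]
    have hFub2 : Integrable (Function.uncurry fun y s => φ (x - u y + s) * ρn s)
        (F.prod (volume.restrict I)) := by
      refine Integrable.mono' (integrable_const (φ (x + 1) * C)) ?_ ?_
      · exact Measurable.aestronglyMeasurable
          ((φcont.measurable.comp ((measurable_const.sub
            (humeas.comp measurable_fst)).add measurable_snd)).mul
            (ρncont.measurable.comp measurable_snd))
      · filter_upwards [hae1, hae2] with z hz1 hz2
        have hu0 := (hu01 z.1 hz1).1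
        have hs1 : z.2 ≤ 1 := le_trans hz2.2.le hδ1
        simp only [Function.uncurry]
        rw [Real.norm_eq_abs, abs_of_nonneg (mul_nonneg (hpos _) (hρn0 _))]
        have h1 : φ (x - u z.1 + z.2) ≤ φ (x + 1) := φmono (by linarith)
        have h2 : ρn z.2 ≤ C := hC _
        nlinarith [hpos (x - u z.1 + z.2), hρn0 z.2, hpos (x + 1)]
    rw [MeasureTheory.integral_integral_swap hFub2]
    refine setIntegral_congr_fun measurableSet_Ioo fun s _ => ?_
    rw [hΦ, ← MeasureTheory.integral_mul_const]
    congr 1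
    funext y
    rw [sub_add_eq_add_sub]
  -- integrability of the three integrands on I
  have hx1 : IntegrableOn (fun s => h (x + s) * ρn s) I volume := by
    have h1 : IntervalIntegrable (fun s => h (x + s)) volume (x - x) (x + 1/(n:ℝ) - x) := by
      simpa only [add_comm] using (hloc' x (x + 1/(n:ℝ))).comp_add_right x
    rw [sub_self, add_sub_cancel_left, intervalIntegrable_iff, Set.uIoc_of_le hδ0.le] at h1
    have h2 : IntegrableOn (fun s => ρn s * h (x + s)) I volume := by
      refine Integrable.bdd_mul (c := C) (h1.mono_set Ioo_subset_Ioc_self)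
        ρncont.aestronglyMeasurable ?_
      refine ae_of_all _ fun s => ?_
      rw [Real.norm_eq_abs, abs_of_nonneg (hρn0 s)]
      exact hC s
    exact h2.congr (ae_of_all _ fun s => mul_comm _ _)
  have hx2 : IntegrableOn (fun s => Φ s * ρn s) I volume := by
    refine Integrable.mono' (integrable_const (φ (x + 1) * C)) ?_ ?_
    · exact (hΦmeas.measurable.mul ρncont.measurable).aestronglyMeasurable
    · filter_upwards [ae_restrict_mem measurableSet_Ioo] with s hs
      obtain ⟨hΦ0, hΦ1⟩ := hΦbd s hs
      rw [Real.norm_eq_abs, abs_of_nonneg (mul_nonneg hΦ0 (hρn0 s))]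
      nlinarith [hρn0 s, hC s, hpos (x + 1)]
  have hx3 : IntegrableOn (fun s => φ (x + s) * ρn s) I volume :=
    (((φcont.comp (continuous_const.add continuous_id)).mul ρncont).integrableOn_Icc
      (a := 0) (b := 1/(n:ℝ))).mono_set Ioo_subset_Icc_self
  -- expand the generator
  have hgenx : gen F p lam q u (mollify φ ρ n) (deriv (mollify φ ρ n)) x
      = ∫ s in I, ((∫ y, p (u y) x ∂F) * h (x + s) + lam * Φ s
          - (lam + q) * φ (x + s)) * ρn s := by
    rw [gen, hderiv, hJswap, hmoll x]
    have e1 : (∫ y, p (u y) x ∂F) * g x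
        = ∫ s in I, (∫ y, p (u y) x ∂F) * (h (x + s) * ρn s) := by
      rw [hg, MeasureTheory.integral_const_mul]
    have e2 : lam * (∫ s in I, Φ s * ρn s) = ∫ s in I, lam * (Φ s * ρn s) := by
      rw [MeasureTheory.integral_const_mul]
    have e3 : (lam + q) * (∫ s in I, φ (x + s) * ρn s)
        = ∫ s in I, (lam + q) * (φ (x + s) * ρn s) := by
      rw [MeasureTheory.integral_const_mul]
    have e4 : (∫ s in I, ((∫ y, p (u y) x ∂F) * (h (x + s) * ρn s) + lam * (Φ s * ρn s)))
          - (∫ s in I, (lam + q) * (φ (x + s) * ρn s))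
        = ∫ s in I, (((∫ y, p (u y) x ∂F) * (h (x + s) * ρn s) + lam * (Φ s * ρn s))
            - (lam + q) * (φ (x + s) * ρn s)) :=
      (integral_sub ((hx1.const_mul _).add (hx2.const_mul _)) (hx3.const_mul _)).symm
    rw [e1, e2, e3, ← integral_add (hx1.const_mul _) (hx2.const_mul _), e4]
    refine setIntegral_congr_fun measurableSet_Ioo fun s _ => ?_
    ring
  -- almost-everywhere nonpositivity of the integrand
  have htrans : ∀ (Q : ℝ → Prop), (∀ᵐ t : ℝ ∂volume, Q t) →
      ∀ᵐ s : ℝ ∂volume, Q (x + s) := by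
    intro Q hQ
    rw [ae_iff] at hQ ⊢
    have he : {s : ℝ | ¬ Q (x + s)} = (fun s => x + s) ⁻¹' {t : ℝ | ¬ Q t} := rfl
    rw [he, measure_preimage_add]
    exact hQ
  have hae_le : ∀ᵐ s ∂(volume.restrict I),
      ((∫ y, p (u y) x ∂F) * h (x + s) + lam * Φ s - (lam + q) * φ (x + s)) * ρn s ≤ 0 := by
    have t1 := htrans _ hgen'
    have t2 := htrans _ hlb'
    filter_upwards [ae_restrict_of_ae t1, ae_restrict_of_ae t2,
      ae_restrict_mem measurableSet_Ioo] with s h1 h2 hs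
    have hs0 : 0 < s := hs.1
    have hgen_s := h1 (by linarith) u ⟨humeas, hu01⟩
    have hml : 1 ≤ h (x + s) := h2 (by linarith)
    have hbr : (∫ y, p (u y) (x + s) ∂F) * h (x + s) + lam * Φ s
        - (lam + q) * φ (x + s) ≤ 0 := by
      simpa only [gen, hΦ] using hgen_s
    have hb : (∫ y, p (u y) x ∂F) * h (x + s)
        ≤ (∫ y, p (u y) (x + s) ∂F) * h (x + s) :=
      mul_le_mul_of_nonneg_right (hAle s hs) (by linarith)
    have hbr2 : (∫ y, p (u y) x ∂F) * h (x + s) + lam * Φ s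
        - (lam + q) * φ (x + s) ≤ 0 := by linarith
    exact mul_nonpos_iff.2 (Or.inr ⟨hbr2, hρn0 s⟩)
  have hfinal : gen F p lam q u (mollify φ ρ n) (deriv (mollify φ ρ n)) x ≤ 0 := by
    rw [hgenx]
    exact integral_nonpos_of_ae hae_le
  refine hfinal.trans ?_
  have hnum : (0:ℝ) ≤ 1 + k * (3 * lam + 2 * q) := by nlinarith
  positivity
end
end

section
/- (Proposition 3.2, part 1.) Assume [A1], [A2], λ > 0, q > 0 and k ≥ 1. Let φ : ℝ → [0,∞) be absolutely continuous with: φ(0) > 0; φ of linear growth with φ(y) ≤ c + y for all y ≥ 0 and some constant c; for almost every x ≥ 0, 1 ≤ φ'(x) ≤ k and 𝓛^u φ(x) ≤ 0 for every u ∈ 𝓡; and for almost every x < 0 either φ(x) = 0 or 1 ≤ φ'(x) ≤ k. Set x₀ := sup{x ∈ ℝ : φ(x) = 0} ∈ (−∞, 0). Then there exist a constant c̃ ≥ 0 (independent of n) and a sequence (φ_n)_{n≥1} of non-decreasing C¹ functions on ℝ such that: (a) φ(x) ≤ φ_n(x) ≤ φ(x) + c̃/n for all x ∈ ℝ; (b)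 1 ≤ φ_n'(x) ≤ k for all x ∈ [x₀, ∞); (c) φ_n' converges to φ' pointwise almost everywhere on [x₀, ∞) as n → ∞; and (d) 𝓛^u φ_n(x) ≤ 0 for every x ≥ 0 and every u ∈ 𝓡. -/
open MeasureTheory Set Real Filter Metric Topology

noncomputable section

set_option maxHeartbeats 2000000

/-- Proposition 3.2, part 1.  A non-negative absolutely continuous
super-solution `φ` with `φ(0) > 0`, linear growth and `φ(y) ≤ c + y` on `[0,∞)` can be
approximated by a sequence of non-decreasing `C¹` functions `φ_n` with
`φ ≤ φ_n ≤ φ + c̃/n`, `φ_n' ∈ [1,k]` on `[x₀,∞)` (where `x₀ = sup{x : φ(x)=0} < 0`),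
`φ_n' → φ'` a.e. on `[x₀,∞)`, and `𝓛^u φ_n ≤ 0` on `[0,∞)` for every retention policy. -/
theorem supersolution_smooth_approximation
    (F : Measure ℝ) [IsProbabilityMeasure F] (hF : F (Iio 0) = 0)
    (hmean : Integrable (fun y : ℝ => y) F)
    (p : ℝ → ℝ → ℝ) (P1 : ℝ) (hA1 : AssumptionA1 p) (hA2 : AssumptionA2 F p P1)
    (lam q k : ℝ) (hlam : 0 < lam) (hq : 0 < q) (hk : 1 ≤ k)
    (φ φ' : ℝ → ℝ)
    (hpos : ∀ x : ℝ, 0 ≤ φ x)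
    (hφ0 : 0 < φ 0)
    (hloc : ∀ a b : ℝ, IntervalIntegrable φ' volume a b)
    (hAC : ∀ a b : ℝ, φ b - φ a = ∫ t in a..b, φ' t)
    (hgrow : ∃ c : ℝ, ∀ x : ℝ, φ x ≤ c * (1 + |x|))
    (hup : ∃ c : ℝ, ∀ y : ℝ, 0 ≤ y → φ y ≤ c + y)
    (hax_pos : ∀ᵐ x : ℝ ∂volume, 0 ≤ x → (1 ≤ φ' x ∧ φ' x ≤ k) ∧
      ∀ u : ℝ → ℝ, IsRetention u → gen F p lam q u φ φ' x ≤ 0)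
    (hax_neg : ∀ᵐ x : ℝ ∂volume, x < 0 → (φ x = 0 ∨ (1 ≤ φ' x ∧ φ' x ≤ k))) :
    ({x : ℝ | φ x = 0}.Nonempty ∧ BddAbove {x : ℝ | φ x = 0} ∧
        sSup {x : ℝ | φ x = 0} < 0) ∧
    ∃ ctil : ℝ, 0 ≤ ctil ∧ ∃ φn : ℕ → ℝ → ℝ,
      (∀ n : ℕ, 1 ≤ n →
        Monotone (φn n) ∧ ContDiff ℝ 1 (φn n) ∧
        (∀ x : ℝ, φ x ≤ φn n x ∧ φn n x ≤ φ x + ctil / n) ∧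
        (∀ x : ℝ, sSup {y : ℝ | φ y = 0} ≤ x →
          1 ≤ deriv (φn n) x ∧ deriv (φn n) x ≤ k) ∧
        (∀ x : ℝ, 0 ≤ x → ∀ u : ℝ → ℝ, IsRetention u →
          gen F p lam q u (φn n) (deriv (φn n)) x ≤ 0)) ∧
      (∀ᵐ x : ℝ ∂volume, sSup {y : ℝ | φ y = 0} ≤ x →
        Tendsto (fun n : ℕ => deriv (φn n) x) atTop (nhds (φ' x))) := by
  obtain ⟨hA1a, hA1b, hA1c⟩ := hA1
  obtain ⟨hA2m, hA2uc, hA2i0, hP1, hA2i, hA2b⟩ := hA2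
  have hk0 : (0:ℝ) < k := lt_of_lt_of_le one_pos hk
  -- continuity of φ
  have hcont : Continuous φ := by
    have h := intervalIntegral.continuous_primitive (fun a b => hloc a b) 0
    have he : φ = fun x => φ 0 + ∫ t in (0:ℝ)..x, φ' t := by
      funext x; have := hAC 0 x; linarith
    rw [he]; exact continuous_const.add h
  have hne_ae : ∀ c : ℝ, ∀ᵐ t : ℝ ∂volume, t ≠ c := by
    intro c
    have h0 : volume ({c} : Set ℝ) = 0 := measure_singleton c
    rw [ae_iff]
    convert h0 using 2
    ext t; simp
  -- the key integral comparison tool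
  have key : ∀ (a b m M : ℝ), a ≤ b →
      (∀ᵐ t : ℝ ∂volume, t ∈ Ioo a b → m ≤ φ' t ∧ φ' t ≤ M) →
      m * (b - a) ≤ φ b - φ a ∧ φ b - φ a ≤ M * (b - a) := by
    intro a b m M hab hbound
    rw [hAC a b]
    constructor
    · have h1 : (∫ t in a..b, (fun _ => m) t) ≤ ∫ t in a..b, φ' t := by
        apply intervalIntegral.integral_mono_ae_restrict hab
          intervalIntegrable_const (hloc a b)
        filter_upwards [ae_restrict_mem measurableSet_Icc,
          ae_restrict_of_ae (hne_ae a), ae_restrict_of_ae (hne_ae b),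
          ae_restrict_of_ae hbound] with t ht h1 h2 h3
        exact (h3 ⟨lt_of_le_of_ne ht.1 (Ne.symm h1), lt_of_le_of_ne ht.2 h2⟩).1
      rw [intervalIntegral.integral_const, smul_eq_mul] at h1
      linarith
    · have h1 : (∫ t in a..b, φ' t) ≤ ∫ t in a..b, (fun _ => M) t := by
        apply intervalIntegral.integral_mono_ae_restrict hab
          (hloc a b) intervalIntegrable_const
        filter_upwards [ae_restrict_mem measurableSet_Icc,
          ae_restrict_of_ae (hne_ae a), ae_restrict_of_ae (hne_ae b),
          ae_restrict_of_ae hbound] with t ht h1 h2 h3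
        exact (h3 ⟨lt_of_le_of_ne ht.1 (Ne.symm h1), lt_of_le_of_ne ht.2 h2⟩).2
      rw [intervalIntegral.integral_const, smul_eq_mul] at h1
      linarith
  -- nonemptiness of the zero set
  have hZne : {x : ℝ | φ x = 0}.Nonempty := by
    by_contra hemp
    have hemp' : ∀ x : ℝ, φ x ≠ 0 := fun x hx => hemp ⟨x, hx⟩
    have hb := key (-(φ 0) - 1) 0 1 k (by linarith) ?bound
    case bound =>
      filter_upwards [hax_neg] with t h2 ht
      rcases h2 ht.2 with h0 | hbnd
      · exact absurd h0 (hemp' t)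
      · exact hbnd
    have h1 : 1 * (0 - (-(φ 0) - 1)) ≤ φ 0 - φ (-(φ 0) - 1) := hb.1
    linarith [hpos (-(φ 0) - 1)]
  have hZsub : {x : ℝ | φ x = 0} ⊆ Iio 0 := by
    intro z hz
    simp only [mem_setOf_eq] at hz
    by_contra hzn
    rw [mem_Iio, not_lt] at hzn
    have hb := key 0 z 1 k hzn ?bound2
    case bound2 =>
      filter_upwards [hax_pos] with t h1 ht
      exact (h1 ht.1.le).1
    have : 1 * (z - 0) ≤ φ z - φ 0 := hb.1
    rw [hz] at this
    linarith [hzn]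
  have hZbdd : BddAbove {x : ℝ | φ x = 0} := ⟨0, fun z hz => (hZsub hz).le⟩
  have hZclosed : IsClosed {x : ℝ | φ x = 0} := isClosed_eq hcont continuous_const
  set x₀ := sSup {x : ℝ | φ x = 0} with hx₀def
  have hx₀Z : φ x₀ = 0 := hZclosed.csSup_mem hZne hZbdd
  have hx₀neg : x₀ < 0 := hZsub hx₀Z
  have hgt : ∀ t : ℝ, x₀ < t → φ t ≠ 0 := fun t ht h0 =>
    absurd (le_csSup hZbdd h0) (not_le.2 ht)
  -- a.e. derivative bounds to the right of x₀
  have hae1 : ∀ᵐ t : ℝ ∂volume, x₀ < t → (1 ≤ φ' t ∧ φ' t ≤ k) := by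
    filter_upwards [hax_pos, hax_neg] with t h1 h2 ht
    rcases le_or_gt 0 t with h | h
    · exact (h1 h).1
    · rcases h2 h with h0 | hb
      · exact absurd h0 (hgt t ht)
      · exact hb
  have hlow : ∀ a b : ℝ, x₀ ≤ a → a ≤ b → b - a ≤ φ b - φ a := by
    intro a b ha hab
    have := (key a b 1 k hab (by
      filter_upwards [hae1] with t h1 ht
      exact h1 (lt_of_le_of_lt ha ht.1))).1
    linarith
  have hupk : ∀ a b : ℝ, x₀ ≤ a → a ≤ b → φ b - φ a ≤ k * (b - a) := by
    intro a b ha hab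
    exact (key a b 1 k hab (by
      filter_upwards [hae1] with t h1 ht
      exact h1 (lt_of_le_of_lt ha ht.1))).2
  -- φ vanishes left of x₀
  have hzero : ∀ x : ℝ, x ≤ x₀ → φ x = 0 := by
    intro z hz
    rcases eq_or_lt_of_le hz with h | hlt
    · rw [h]; exact hx₀Z
    by_contra hzne
    set W := {x : ℝ | φ x = 0} ∩ Icc z x₀ with hW
    have hWclosed : IsClosed W := hZclosed.inter isClosed_Icc
    have hWne : W.Nonempty := ⟨x₀, hx₀Z, ⟨hz, le_rfl⟩⟩
    have hWbdd : BddBelow W := ⟨z, fun t ht => ht.2.1⟩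
    set w := sInf W with hwdef
    have hwW : w ∈ W := hWclosed.csInf_mem hWne hWbdd
    have hwz : z < w := lt_of_le_of_ne hwW.2.1 (fun h => hzne (by rw [h]; exact hwW.1))
    have hkey := key z w 0 k hwz.le ?bound3
    case bound3 =>
      filter_upwards [hax_neg] with t h2 ht
      have htneg : t < 0 := lt_of_lt_of_le ht.2 (le_of_lt (lt_of_le_of_lt hwW.2.2 hx₀neg))
      rcases h2 htneg with h0 | hb
      · exfalso
        have htW : t ∈ W := ⟨h0, ht.1.le, le_trans ht.2.le hwW.2.2⟩
        exact absurd (csInf_le hWbdd htW) (not_le.2 ht.2)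
      · exact ⟨by linarith [hb.1], hb.2⟩
    have h1 : 0 * (w - z) ≤ φ w - φ z := hkey.1
    have h2 : φ w = 0 := hwW.1
    have := hpos z
    have : φ z = 0 := by linarith
    exact hzne this
  -- monotonicity of φ
  have hmono : Monotone φ := by
    intro a b hab
    rcases le_or_gt x₀ a with h | h
    · linarith [hlow a b h hab]
    · rw [hzero a h.le]; exact hpos b
  -- one-step growth bound
  have hstep : ∀ z h : ℝ, 0 ≤ h → φ (z + h) ≤ φ z + k * h := by
    intro z h hh
    rcases le_or_gt x₀ z with hz | hz
    · linarith [hupk z (z + h) hz (by linarith)]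
    · rcases le_or_gt (z + h) x₀ with h2 | h2
      · rw [hzero _ h2, hzero z hz.le]
        nlinarith
      · have hu2 := hupk x₀ (z + h) le_rfl h2.le
        rw [hx₀Z] at hu2
        rw [hzero z hz.le]
        nlinarith
  -- construction of the smooth approximations
  set Φ : ℝ → ℝ := fun z => ∫ t in (0:ℝ)..z, φ t with hΦdef
  have hΦd : ∀ z : ℝ, HasDerivAt Φ (φ z) z := fun z =>
    (hcont.integral_hasStrictDerivAt 0 z).hasDerivAt
  set φn : ℕ → ℝ → ℝ := fun n z => (n:ℝ) * (Φ (z + 1/n) - Φ z) with hφndef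
  have hφnd : ∀ (n : ℕ) (z : ℝ),
      HasDerivAt (φn n) ((n:ℝ) * (φ (z + 1/n) - φ z)) z := by
    intro n z
    have h1 : HasDerivAt (fun z : ℝ => Φ (z + 1/n)) (φ (z + 1/n)) z := by
      have := (hΦd (z + 1/n)).comp z ((hasDerivAt_id z).add_const (1/(n:ℝ)))
      rw [mul_one] at this; exact this
    exact ((h1.sub (hΦd z)).const_mul (n:ℝ))
  have hderiv : ∀ (n : ℕ) (z : ℝ),
      deriv (φn n) z = (n:ℝ) * (φ (z + 1/n) - φ z) := fun n z => (hφnd n z).deriv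
  have hφn_int : ∀ (n : ℕ) (z : ℝ), φn n z = (n:ℝ) * ∫ t in z..(z + 1/n), φ t := by
    intro n z
    have h := intervalIntegral.integral_interval_sub_left
      (hcont.intervalIntegrable (μ := volume) 0 (z + 1/n))
      (hcont.intervalIntegrable (μ := volume) 0 z)
    simp only [hφndef, hΦdef]
    rw [h]
  refine ⟨⟨hZne, hZbdd, hx₀neg⟩, k, hk0.le, φn, ?_, ?_⟩
  · -- main per-n properties
    intro n hn
    have hn0 : (0:ℝ) < n := by exact_mod_cast hn
    have hh : (0:ℝ) < 1/n := by positivity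
    refine ⟨?_, ?_, ?_, ?_, ?_⟩
    · -- monotone
      apply monotone_of_deriv_nonneg (fun z => (hφnd n z).differentiableAt)
      intro z
      rw [hderiv n z]
      have := hmono (le_add_of_nonneg_right hh.le : z ≤ z + 1/(n:ℝ))
      have hn0' : (0:ℝ) ≤ n := hn0.le
      nlinarith
    · -- C¹
      rw [contDiff_one_iff_deriv]
      refine ⟨fun z => (hφnd n z).differentiableAt, ?_⟩
      have he : deriv (φn n) = fun z => (n:ℝ) * (φ (z + 1/n) - φ z) :=
        funext fun z => hderiv n z
      rw [he]
      exact continuous_const.mul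
        ((hcont.comp (continuous_id.add continuous_const)).sub hcont)
    · -- sandwich
      intro x
      constructor
      · rw [hφn_int n x]
        have h1 : (∫ t in x..(x + 1/n), (fun _ => φ x) t) ≤ ∫ t in x..(x + 1/n), φ t := by
          apply intervalIntegral.integral_mono_on (by linarith)
            intervalIntegrable_const (hcont.intervalIntegrable _ _)
          intro t ht
          exact hmono ht.1
        rw [intervalIntegral.integral_const, smul_eq_mul,
          show x + 1/(n:ℝ) - x = 1/n from by ring] at h1
        have h3 := mul_le_mul_of_nonneg_left h1 hn0.le
        rw [← mul_assoc, mul_one_div_cancel (ne_of_gt hn0), one_mul] at h3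
        exact h3
      · rw [hφn_int n x]
        have h1 : (∫ t in x..(x + 1/n), φ t) ≤ ∫ t in x..(x + 1/n), (fun _ => φ (x + 1/n)) t := by
          apply intervalIntegral.integral_mono_on (by linarith)
            (hcont.intervalIntegrable _ _) intervalIntegrable_const
          intro t ht
          exact hmono ht.2
        rw [intervalIntegral.integral_const, smul_eq_mul,
          show x + 1/(n:ℝ) - x = 1/n from by ring] at h1
        have h2 : φ (x + 1/n) ≤ φ x + k * (1/n) := hstep x (1/n) hh.le
        have h3 := mul_le_mul_of_nonneg_left h1 hn0.le
        rw [← mul_assoc, mul_one_div_cancel (ne_of_gt hn0), one_mul] at h3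
        rw [mul_one_div] at h2
        linarith
    · -- derivative bounds on [x₀, ∞)
      intro x hx
      rw [hderiv n x]
      have h1 := hlow x (x + 1/n) hx (by linarith)
      have h2 := hupk x (x + 1/n) hx (by linarith)
      have hid : x + 1/(n:ℝ) - x = 1/n := by ring
      rw [hid] at h1 h2
      have hc : (n:ℝ) * (1/n) = 1 := mul_one_div_cancel (ne_of_gt hn0)
      constructor
      · have h3 := mul_le_mul_of_nonneg_left h1 hn0.le
        rw [hc] at h3
        exact h3
      · have h3 := mul_le_mul_of_nonneg_left h2 hn0.le
        rw [show (n:ℝ) * (k * (1/n)) = k * ((n:ℝ) * (1/n)) from by ring, hc, mul_one] at h3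
        exact h3
    · -- generator inequality
      intro x hx u hu
      have hn0 : (0:ℝ) < n := by exact_mod_cast hn
      set h : ℝ := 1/n with hhdef
      have hh : 0 < h := by positivity
      have hh1 : h ≤ 1 := by
        rw [hhdef]
        rw [div_le_one hn0]
        exact_mod_cast hn
      set S : Set ℝ := Ioc (0:ℝ) h with hSdef
      have hSm : MeasurableSet S := measurableSet_Ioc
      haveI hfin : IsFiniteMeasure (volume.restrict S) := by
        constructor
        rw [Measure.restrict_apply_univ, hSdef, Real.volume_Ioc]
        exact ENNReal.ofReal_lt_top
      obtain ⟨c, hc⟩ := hgrow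
      have hc0 : 0 < c := by
        have := hc 0
        simpa using lt_of_lt_of_le hφ0 this
      have hFae : ∀ᵐ y ∂F, 0 ≤ y := by
        rw [ae_iff]
        convert hF using 2
        ext y; simp [not_le]
      -- integrability of φ-compositions
      have hIφ : ∀ x' : ℝ, Integrable (fun y => φ (x' - u y)) F := by
        intro x'
        have hm : AEStronglyMeasurable (fun y => φ (x' - u y)) F :=
          (hcont.measurable.comp (measurable_const.sub hu.1)).aestronglyMeasurable
        have hg : Integrable (fun y : ℝ => c * (1 + |x'|) + c * |y|) F :=
          (integrable_const _).add (hmean.abs.const_mul c)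
        refine Integrable.mono' hg hm ?_
        filter_upwards [hFae] with y hy
        have hb := hu.2 y hy
        rw [Real.norm_eq_abs, abs_of_nonneg (hpos _)]
        have h1 : |x' - u y| ≤ |x'| + |y| := by
          have : |x' - u y| ≤ |x'| + |u y| := abs_sub _ _
          have h2 : |u y| ≤ |y| := by
            rw [abs_of_nonneg hb.1, abs_of_nonneg hy]; exact hb.2
          linarith
        calc φ (x' - u y) ≤ c * (1 + |x' - u y|) := hc _
          _ ≤ c * (1 + |x'|) + c * |y| := by nlinarith
      -- integrability of p-compositions
      have hIp : ∀ x' : ℝ, 0 ≤ x' → Integrable (fun y => p (u y) x') F := by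
        intro x' hx'
        have hm : AEStronglyMeasurable (fun y => p (u y) x') F :=
          (hA2m.comp (hu.1.prodMk measurable_const)).aestronglyMeasurable
        refine Integrable.mono' (hA2i0.add (hA2i x' 0 hx' le_rfl)) hm ?_
        filter_upwards [hFae] with y hy
        have h0u : 0 ≤ u y := (hu.2 y hy).1
        have huy : u y ≤ y := (hu.2 y hy).2
        rw [Real.norm_eq_abs, abs_of_nonneg (hA1a _ _ h0u hx')]
        have hst1 : p (u y) x' ≤ p y x' := hA1b x' hx' h0u (le_trans h0u huy) huy
        have hbdd : BddAbove ((fun y' => |p y' x' - p y' 0|) '' Icc 0 y) := by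
          refine ⟨p y x', ?_⟩
          rintro v ⟨y', hy', rfl⟩
          have h1 : p y' 0 ≤ p y' x' := hA1c y' hy'.1 (mem_Ici.2 le_rfl) hx' hx'
          have h2 : 0 ≤ p y' 0 := hA1a _ _ hy'.1 le_rfl
          show |p y' x' - p y' 0| ≤ p y x'
          rw [abs_of_nonneg (by linarith)]
          have h3 : p y' x' ≤ p y x' := hA1b x' hx' hy'.1 (le_trans h0u huy) hy'.2
          linarith
        have hmem : |p y x' - p y 0| ∈ (fun y' => |p y' x' - p y' 0|) '' Icc 0 y :=
          mem_image_of_mem _ ⟨hy, le_rfl⟩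
        have hsup := le_csSup hbdd hmem
        have h2 : p y x' - p y 0 ≤ |p y x' - p y 0| := le_abs_self _
        have h4 : p y x' ≤ p y 0 + supDiff p x' 0 y := by
          unfold supDiff; linarith
        show p (u y) x' ≤ p y 0 + supDiff p x' 0 y
        linarith
      -- monotonicity of premium in surplus
      have hpu_mono : ∀ x1 x2 : ℝ, 0 ≤ x1 → x1 ≤ x2 →
          (∫ y, p (u y) x1 ∂F) ≤ ∫ y, p (u y) x2 ∂F := by
        intro x1 x2 h1 h12
        apply integral_mono_ae (hIp x1 h1) (hIp x2 (le_trans h1 h12))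
        filter_upwards [hFae] with y hy
        exact hA1c (u y) (hu.2 y hy).1 h1 (le_trans h1 h12) h12
      have hpu_nn : 0 ≤ ∫ y, p (u y) x ∂F := by
        apply integral_nonneg_of_ae
        filter_upwards [hFae] with y hy
        exact hA1a _ _ (hu.2 y hy).1 hx
      -- product integrability and Fubini
      set f : ℝ → ℝ → ℝ := fun y s => φ (x + s - u y) with hfdef
      have hprodae1 : ∀ᵐ z ∂(F.prod (volume.restrict S)), 0 ≤ z.1 := by
        rw [ae_iff]
        have he : {z : ℝ × ℝ | ¬ 0 ≤ z.1} = (Iio 0) ×ˢ (univ : Set ℝ) := by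
          ext z; simp [not_le]
        rw [he, Measure.prod_prod, hF, zero_mul]
      have hprodae2 : ∀ᵐ z ∂(F.prod (volume.restrict S)), z.2 ∈ S := by
        rw [ae_iff]
        have he : {z : ℝ × ℝ | ¬ z.2 ∈ S} = (univ : Set ℝ) ×ˢ Sᶜ := by
          ext z; simp
        rw [he, Measure.prod_prod]
        have : (volume.restrict S) Sᶜ = 0 := by
          rw [Measure.restrict_apply (hSm.compl)]
          simp
        rw [this, mul_zero]
      have hTint : Integrable (Function.uncurry f) (F.prod (volume.restrict S)) := by
        have hgm : Measurable (fun z : ℝ × ℝ => x + z.2 - u z.1) :=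
          (measurable_const.add measurable_snd).sub (hu.1.comp measurable_fst)
        have hm : AEStronglyMeasurable (Function.uncurry f) (F.prod (volume.restrict S)) :=
          (hcont.measurable.comp hgm).aestronglyMeasurable
        have hG : Integrable (fun y : ℝ => c * (2 + |x|) + c * |y|) F :=
          (integrable_const _).add (hmean.abs.const_mul c)
        have hGp : Integrable (fun z : ℝ × ℝ => (c * (2 + |x|) + c * |z.1|) * 1)
            (F.prod (volume.restrict S)) :=
          Integrable.mul_prod (f := fun y : ℝ => c * (2 + |x|) + c * |y|)
            (g := fun _ : ℝ => (1:ℝ)) hG (integrable_const 1)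
        refine Integrable.mono' hGp hm ?_
        filter_upwards [hprodae1, hprodae2] with z h1 h2
        have hbu := hu.2 z.1 h1
        have habs : |x + z.2 - u z.1| ≤ |x| + 1 + |z.1| := by
          have e1 : |x + z.2 - u z.1| ≤ |x| + |z.2| + |u z.1| := by
            calc |x + z.2 - u z.1| ≤ |x + z.2| + |u z.1| := abs_sub _ _
              _ ≤ |x| + |z.2| + |u z.1| := by linarith [abs_add_le x z.2]
          have e2 : |z.2| ≤ 1 := by
            rw [abs_of_nonneg (le_of_lt h2.1)]; exact le_trans h2.2 hh1
          have e3 : |u z.1| ≤ |z.1| := by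
            rw [abs_of_nonneg hbu.1, abs_of_nonneg h1]; exact hbu.2
          linarith
        show ‖φ (x + z.2 - u z.1)‖ ≤ (c * (2 + |x|) + c * |z.1|) * 1
        rw [Real.norm_eq_abs, abs_of_nonneg (hpos _), mul_one]
        calc φ (x + z.2 - u z.1) ≤ c * (1 + |x + z.2 - u z.1|) := hc _
          _ ≤ c * (1 + (|x| + 1 + |z.1|)) := by nlinarith
          _ = c * (2 + |x|) + c * |z.1| := by ring
      -- representation of the mollified functions as set integrals
      have e0 : ∀ z : ℝ, φn n z = (n:ℝ) * ∫ s in Ioc (0:ℝ) (1/n), φ (z + s) := by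
        intro z
        rw [hφn_int n z]
        congr 1
        have h1 := intervalIntegral.integral_comp_add_left (a := (0:ℝ)) (b := 1/n) φ z
        rw [add_zero] at h1
        rw [← h1, intervalIntegral.integral_of_le hh.le]
      have e2 : ∀ z : ℝ, deriv (φn n) z = (n:ℝ) * ∫ s in Ioc (0:ℝ) (1/n), φ' (z + s) := by
        intro z
        rw [hderiv n z, hAC z (z + 1/n)]
        congr 1
        have h1 := intervalIntegral.integral_comp_add_left (a := (0:ℝ)) (b := 1/n) φ' z
        rw [add_zero] at h1
        rw [← h1, intervalIntegral.integral_of_le hh.le]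
      -- marginal integrabilities
      have J1 : Integrable (fun s => ∫ y, f y s ∂F) (volume.restrict (Ioc (0:ℝ) (1/n))) := by
        exact hTint.integral_prod_right
      have J2 : Integrable (fun s => φ' (x + s)) (volume.restrict (Ioc (0:ℝ) (1/n))) := by
        have j := (hloc x (x + 1/n)).comp_add_left x
        simp only [sub_self, add_sub_cancel_left] at j
        exact j.1
      have J3 : Integrable (fun s => φ (x + s)) (volume.restrict (Ioc (0:ℝ) (1/n))) := by
        have jc : Continuous (fun s : ℝ => φ (x + s)) :=
          hcont.comp (continuous_const.add continuous_id)
        exact (jc.intervalIntegrable (μ := volume) 0 (1/n)).1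
      -- Fubini for the middle term
      have hmid : (∫ y, φn n (x - u y) ∂F)
          = (n:ℝ) * ∫ s in Ioc (0:ℝ) (1/n), (∫ y, f y s ∂F) := by
        have h1 : ∀ y : ℝ, φn n (x - u y) = (n:ℝ) * ∫ s in Ioc (0:ℝ) (1/n), f y s := by
          intro y
          rw [e0 (x - u y)]
          congr 1
          have he : (fun s => φ (x - u y + s)) = fun s => f y s := by
            funext s
            simp only [hfdef]
            ring_nf
          rw [he]
        calc ∫ y, φn n (x - u y) ∂F
            = ∫ y, ((n:ℝ) * ∫ s in Ioc (0:ℝ) (1/n), f y s) ∂F :=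
              integral_congr_ae (Eventually.of_forall h1)
          _ = (n:ℝ) * ∫ y, (∫ s in Ioc (0:ℝ) (1/n), f y s) ∂F := integral_const_mul _ _
          _ = (n:ℝ) * ∫ s in Ioc (0:ℝ) (1/n), (∫ y, f y s ∂F) := by
              rw [integral_integral_swap hTint]
      -- the transported supersolution property
      have htrans : ∀ᵐ s : ℝ ∂volume, 0 ≤ x + s → ((1 ≤ φ' (x + s) ∧ φ' (x + s) ≤ k) ∧
          ∀ u' : ℝ → ℝ, IsRetention u' → gen F p lam q u' φ φ' (x + s) ≤ 0) :=
        (measurePreserving_add_left volume x).quasiMeasurePreserving.ae hax_pos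
      -- core pointwise inequality
      set A : ℝ := ∫ y, p (u y) x ∂F with hAdef
      have hcore : (∫ s in Ioc (0:ℝ) (1/n),
          (A * φ' (x + s) + lam * (∫ y, f y s ∂F) - (lam + q) * φ (x + s))) ≤ 0 := by
        apply integral_nonpos_of_ae
        filter_upwards [ae_restrict_mem measurableSet_Ioc, ae_restrict_of_ae htrans]
          with s hs htr
        obtain ⟨hd, hgen⟩ := htr (by linarith [hs.1] : 0 ≤ x + s)
        have hgu := hgen u hu
        unfold gen at hgu
        have hA2 : A ≤ ∫ y, p (u y) (x + s) ∂F := hpu_mono x (x + s) hx (by linarith [hs.1])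
        have h0 : 0 ≤ φ' (x + s) := le_trans zero_le_one hd.1
        have h3 := mul_le_mul_of_nonneg_right hA2 h0
        simp only [Pi.zero_apply]
        show A * φ' (x + s) + lam * (∫ y, φ (x + s - u y) ∂F) - (lam + q) * φ (x + s) ≤ 0
        linarith
      -- integrabilities for linearity
      have hIa : Integrable (fun s => A * φ' (x + s)) (volume.restrict (Ioc (0:ℝ) (1/n))) :=
        J2.const_mul A
      have hIb : Integrable (fun s => lam * ∫ y, f y s ∂F) (volume.restrict (Ioc (0:ℝ) (1/n))) :=
        J1.const_mul lam
      have hIr : Integrable (fun s => (lam + q) * φ (x + s)) (volume.restrict (Ioc (0:ℝ) (1/n))) :=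
        J3.const_mul (lam + q)
      have hIab : Integrable (fun s => A * φ' (x + s) + lam * ∫ y, f y s ∂F)
          (volume.restrict (Ioc (0:ℝ) (1/n))) := hIa.add hIb
      have hsplit : (∫ s in Ioc (0:ℝ) (1/n),
          (A * φ' (x + s) + lam * (∫ y, f y s ∂F) - (lam + q) * φ (x + s)))
          = A * (∫ s in Ioc (0:ℝ) (1/n), φ' (x + s))
            + lam * (∫ s in Ioc (0:ℝ) (1/n), (∫ y, f y s ∂F))
            - (lam + q) * (∫ s in Ioc (0:ℝ) (1/n), φ (x + s)) := by
        rw [integral_sub hIab hIr, integral_add hIa hIb,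
          integral_const_mul, integral_const_mul, integral_const_mul]
      -- assembling
      have hrepr : gen F p lam q u (φn n) (deriv (φn n)) x
          = (n:ℝ) * ∫ s in Ioc (0:ℝ) (1/n),
            (A * φ' (x + s) + lam * (∫ y, f y s ∂F) - (lam + q) * φ (x + s)) := by
        unfold gen
        rw [e2 x, hmid, e0 x, hsplit, ← hAdef]
        ring
      rw [hrepr]
      have hfin2 := mul_le_mul_of_nonneg_left hcore hn0.le
      rw [mul_zero] at hfin2
      exact hfin2
  · -- a.e. convergence of derivatives
    have hli : LocallyIntegrable φ' volume := by
      intro x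
      refine ⟨Ioc (x-1) (x+1), Ioc_mem_nhds (by linarith) (by linarith), ?_⟩
      exact (hloc (x-1) (x+1)).1
    filter_upwards [IsUnifLocDoublingMeasure.ae_tendsto_average (μ := volume) hli 1]
      with x hx _
    have hδ : Tendsto (fun n : ℕ => 1/(2*(n:ℝ))) atTop (𝓝[>] 0) := by
      rw [tendsto_nhdsWithin_iff]
      constructor
      · have h2 : Tendsto (fun n : ℕ => 2*(n:ℝ)) atTop atTop :=
          Tendsto.const_mul_atTop (by norm_num) tendsto_natCast_atTop_atTop
        have h3 := h2.inv_tendsto_atTop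
        have he : (fun n : ℕ => 1/(2*(n:ℝ))) = (fun n : ℕ => 2*(n:ℝ))⁻¹ := by
          funext n; simp [one_div]
        rw [he]; exact h3
      · filter_upwards [eventually_gt_atTop 0] with n hn
        have h2 : (0:ℝ) < 2*n := by positivity
        exact mem_Ioi.2 (by positivity)
    have havg := hx (fun n : ℕ => x + 1/(2*n)) (fun n => 1/(2*n)) hδ
      (Eventually.of_forall fun n => by
        rw [mem_closedBall, Real.dist_eq, one_mul]
        have h0 : (0:ℝ) ≤ 1/(2*(n:ℝ)) := by positivity
        rw [show x - (x + 1/(2*(n:ℝ))) = -(1/(2*n)) by ring, abs_neg, abs_of_nonneg h0])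
    apply havg.congr'
    filter_upwards [eventually_ge_atTop 1] with n hn
    have hn0 : (0:ℝ) < n := by exact_mod_cast hn
    have h1n : (0:ℝ) < 1/n := by positivity
    have hball : closedBall (x + 1/(2*(n:ℝ))) (1/(2*(n:ℝ))) = Icc x (x + 1/n) := by
      rw [Real.closedBall_eq_Icc]
      have e1 : x + 1/(2*(n:ℝ)) - 1/(2*n) = x := by ring
      have e2 : x + 1/(2*(n:ℝ)) + 1/(2*n) = x + 1/n := by field_simp; ring
      rw [e1, e2]
    rw [hball, setAverage_eq, Real.volume_real_Icc]
    rw [show x + 1/(n:ℝ) - x = 1/n by ring, max_eq_left h1n.le]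
    rw [integral_Icc_eq_integral_Ioc,
      ← intervalIntegral.integral_of_le (by linarith : x ≤ x + 1/(n:ℝ))]
    rw [smul_eq_mul, show ((1:ℝ)/(n:ℝ))⁻¹ = (n:ℝ) from by field_simp,
      hderiv n x, hAC x (x + 1/n)]
end
end

section
/- (Weak duality step in the proof of Theorem 4.1.) Assume [A1], [A2], λ > 0, q > 0, k ≥ 1 and let x ≥ 0. Equip 𝓡 with the σ-algebra induced by the evaluation maps u ↦ u(y), y ≥ 0. Let φ : ℝ → [0,∞) be C¹ with 1 ≤ φ'(y) ≤ k for all y ≥ 0 and 𝓛^u φ(y) ≤ 0 for every u ∈ 𝓡 and every y ≥ 0. Let γ₀ be a Borel probability measure on [0,∞) × ℝ, γ₁ a finite measure on [0,∞) × ℝ × [0,∞) × [0,∞) × 𝓡, and γ₂, γ₃ finite measures on [0,∞) × ℝ × [0,∞) × [0,∞) × 𝓡 × [0,∞) (coordinates (s₁, y₁, s₂, y₂, u) resp. (s₁, y₁, s₂, y₂, u, l)). Assume that (s₁,y₁) ↦ e^{−q s₁} φ(y₁) is γ₀-integrable, (y₂,u) ↦ 𝓛^u φ(y₂) is γ₁-integrable,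 y₂ ↦ φ'(y₂) is γ₂- and γ₃-integrable, and that the adjoint identity holds: ∫ e^{−q s₁} φ(y₁) dγ₀ = φ(x) + ∫ 𝓛^u φ(y₂) dγ₁ + ∫ φ'(y₂) dγ₃ − ∫ φ'(y₂) dγ₂. Then γ₂(total mass) − k·γ₃(total mass) ≤ φ(x). -/
open MeasureTheory Set Real Filter

noncomputable section

/-- weak duality step in the proof of Theorem 4.1.  For any `C¹` dual test
function `φ ≥ 0` with `φ' ∈ [1,k]` on `[0,∞)` and `𝓛^u φ ≤ 0` on `[0,∞)`, and any
occupation-measure quadruple `(γ₀,γ₁,γ₂,γ₃)` satisfying the adjoint identity, one has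
`γ₂(total mass) − k γ₃(total mass) ≤ φ(x)`.  Here `𝓡` is equipped with the σ-algebra
induced by the evaluation maps (the subtype of the product σ-algebra). -/
theorem weak_duality
    (F : Measure ℝ) [IsProbabilityMeasure F] (hF : F (Iio 0) = 0)
    (p : ℝ → ℝ → ℝ) (P1 : ℝ) (hA1 : AssumptionA1 p) (hA2 : AssumptionA2 F p P1)
    (lam q k : ℝ) (hlam : 0 < lam) (hq : 0 < q) (hk : 1 ≤ k)
    (x : ℝ) (hx : 0 ≤ x)
    (φ : ℝ → ℝ) (hφC1 : ContDiff ℝ 1 φ) (hφ0 : ∀ y : ℝ, 0 ≤ φ y)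
    (hφ' : ∀ y : ℝ, 0 ≤ y → 1 ≤ deriv φ y ∧ deriv φ y ≤ k)
    (hφgen : ∀ u : ℝ → ℝ, IsRetention u → ∀ y : ℝ, 0 ≤ y →
      gen F p lam q u φ (deriv φ) y ≤ 0)
    (γ0 : Measure (ℝ × ℝ)) [IsProbabilityMeasure γ0]
    (γ1 : Measure (ℝ × ℝ × ℝ × ℝ × {u : ℝ → ℝ // IsRetention u})) [IsFiniteMeasure γ1]
    (γ2 γ3 : Measure (ℝ × ℝ × ℝ × ℝ × {u : ℝ → ℝ // IsRetention u} × ℝ))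
    [IsFiniteMeasure γ2] [IsFiniteMeasure γ3]
    (hγ0s : ∀ᵐ z ∂γ0, 0 ≤ z.1)
    (hγ1s : ∀ᵐ z ∂γ1, 0 ≤ z.1 ∧ 0 ≤ z.2.2.1 ∧ 0 ≤ z.2.2.2.1)
    (hγ2s : ∀ᵐ z ∂γ2, 0 ≤ z.1 ∧ 0 ≤ z.2.2.1 ∧ 0 ≤ z.2.2.2.1 ∧ 0 ≤ z.2.2.2.2.2)
    (hγ3s : ∀ᵐ z ∂γ3, 0 ≤ z.1 ∧ 0 ≤ z.2.2.1 ∧ 0 ≤ z.2.2.2.1 ∧ 0 ≤ z.2.2.2.2.2)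
    (h0int : Integrable (fun z : ℝ × ℝ => Real.exp (-q * z.1) * φ z.2) γ0)
    (h1int : Integrable
      (fun z : ℝ × ℝ × ℝ × ℝ × {u : ℝ → ℝ // IsRetention u} =>
        gen F p lam q (z.2.2.2.2 : {u : ℝ → ℝ // IsRetention u}).1 φ (deriv φ) z.2.2.2.1) γ1)
    (h2int : Integrable
      (fun z : ℝ × ℝ × ℝ × ℝ × {u : ℝ → ℝ // IsRetention u} × ℝ => deriv φ z.2.2.2.1) γ2)
    (h3int : Integrable
      (fun z : ℝ × ℝ × ℝ × ℝ × {u : ℝ → ℝ // IsRetention u} × ℝ => deriv φ z.2.2.2.1) γ3)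
    (hadj : (∫ z, Real.exp (-q * z.1) * φ z.2 ∂γ0)
      = φ x
        + (∫ z, gen F p lam q (z.2.2.2.2 : {u : ℝ → ℝ // IsRetention u}).1 φ (deriv φ)
            z.2.2.2.1 ∂γ1)
        + (∫ z, deriv φ z.2.2.2.1 ∂γ3) - (∫ z, deriv φ z.2.2.2.1 ∂γ2)) :
    (γ2 univ).toReal - k * (γ3 univ).toReal ≤ φ x := by
  have hA : 0 ≤ ∫ z, Real.exp (-q * z.1) * φ z.2 ∂γ0 :=
    integral_nonneg fun z => mul_nonneg (Real.exp_pos _).le (hφ0 _)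
  have hB : (∫ z, gen F p lam q (z.2.2.2.2 : {u : ℝ → ℝ // IsRetention u}).1 φ (deriv φ)
      z.2.2.2.1 ∂γ1) ≤ 0 := by
    apply integral_nonpos_of_ae
    filter_upwards [hγ1s] with z hz
    exact hφgen _ z.2.2.2.2.2 _ hz.2.2
  have hD : (γ2 univ).toReal ≤ ∫ z, deriv φ z.2.2.2.1 ∂γ2 := by
    calc (γ2 univ).toReal = ∫ (_ : ℝ × ℝ × ℝ × ℝ × {u : ℝ → ℝ // IsRetention u} × ℝ),
        (1:ℝ) ∂γ2 := by simp [measureReal_def]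
    _ ≤ _ := by
      refine integral_mono_ae (integrable_const 1) h2int ?_
      filter_upwards [hγ2s] with z hz
      exact (hφ' _ hz.2.2.1).1
  have hC : (∫ z, deriv φ z.2.2.2.1 ∂γ3) ≤ k * (γ3 univ).toReal := by
    calc (∫ z, deriv φ z.2.2.2.1 ∂γ3)
        ≤ ∫ (_ : ℝ × ℝ × ℝ × ℝ × {u : ℝ → ℝ // IsRetention u} × ℝ), k ∂γ3 := by
          refine integral_mono_ae h3int (integrable_const k) ?_
          filter_upwards [hγ3s] with z hz
          exact (hφ' _ hz.2.2.1).2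
    _ = k * (γ3 univ).toReal := by simp [integral_const, smul_eq_mul, mul_comm, measureReal_def]
  linarith
end
end

section
/- (Lemma 5.2.) Assume [A1], [A2], λ > 0, q > [p]₁, k > 1 and ∫₀^∞ y dF(y) < ∞. Then for every Borel probability measure γ₀ on [0,∞) × ℝ (coordinates (s₁, y₁)) with ∫ |y₁| dγ₀ < ∞, one has ∫ e^{−q s₁} Λ*(y₁) dγ₀(s₁, y₁) = inf_{φ ∈ 𝐅} ∫ e^{−q s₁} φ(y₁) dγ₀(s₁, y₁). -/
open MeasureTheory Set Real Filter
open scoped ENNReal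

noncomputable section

/-- The class `𝐅` of dual test functions: `C¹` non-negative functions with `φ' ≤ k` on `ℝ`,
`φ' ≥ 1` on `[0,∞)` and `𝓛^u φ ≤ 0` on `[0,∞)` for every retention policy `u`. -/
def memF (F : MeasureTheory.Measure ℝ) (p : ℝ → ℝ → ℝ) (lam q k : ℝ) (φ : ℝ → ℝ) : Prop :=
  ContDiff ℝ 1 φ ∧ (∀ x : ℝ, 0 ≤ φ x) ∧ (∀ y : ℝ, deriv φ y ≤ k) ∧
  (∀ y : ℝ, 0 ≤ y → 1 ≤ deriv φ y) ∧
  (∀ u : ℝ → ℝ, IsRetention u → ∀ y : ℝ, 0 ≤ y → gen F p lam q u φ (deriv φ) y ≤ 0)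

/-- The dual value `Λ*(x) = inf{φ(x) : φ ∈ 𝐅} ∈ [0,∞]`. -/
def LambdaStar (F : MeasureTheory.Measure ℝ) (p : ℝ → ℝ → ℝ) (lam q k : ℝ) (x : ℝ) : ℝ≥0∞ :=
  ⨅ (φ : ℝ → ℝ) (_ : memF F p lam q k φ), ENNReal.ofReal (φ x)
namespace InfX
open MeasureTheory Set Real Filter
open scoped ENNReal

set_option linter.unusedSectionVars false

variable {F : MeasureTheory.Measure ℝ} [IsProbabilityMeasure F] {p : ℝ → ℝ → ℝ}
  {P1 lam q k : ℝ} {u : ℝ → ℝ} {x : ℝ}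

lemma F_ae_nonneg (hF : F (Iio 0) = 0) : ∀ᵐ y ∂F, 0 ≤ y := by
  rw [ae_iff]
  convert hF using 2
  ext y; simp

lemma lip_upper {φ : ℝ → ℝ} (hφ : ContDiff ℝ 1 φ) (hk : ∀ y, deriv φ y ≤ k)
    {d y : ℝ} (h : d ≤ y) : φ y ≤ φ d + k * (y - d) := by
  have hdiff : Differentiable ℝ φ := hφ.differentiable one_ne_zero
  have hd : ∀ x : ℝ, HasDerivAt (fun x => k * x - φ x) (k - deriv φ x) x :=
    fun x => (((hasDerivAt_id x).const_mul k).sub (hdiff x).hasDerivAt).congr_deriv (by simp)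
  have h1 : Monotone (fun x => k * x - φ x) := by
    apply monotone_of_deriv_nonneg (fun x => (hd x).differentiableAt)
    intro x
    rw [(hd x).deriv]; linarith [hk x]
  have h2 := h1 h
  simp only at h2
  nlinarith

lemma supDiff_ge (hA1 : AssumptionA1 p) {y z : ℝ} (hx : 0 ≤ x) (hy : 0 ≤ y) (hyz : y ≤ z) :
    p y x - p y 0 ≤ supDiff p x 0 z := by
  have hz : 0 ≤ z := hy.trans hyz
  have hbdd : BddAbove ((fun y => |p y x - p y 0|) '' Icc 0 z) := by
    refine ⟨p z x + p z 0, ?_⟩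
    rintro t ⟨w, ⟨hw0, hwz⟩, rfl⟩
    have h1 : p w x ≤ p z x := (hA1.2.1 x hx) (mem_Ici.mpr hw0) (mem_Ici.mpr hz) hwz
    have h2 : p w 0 ≤ p z 0 := (hA1.2.1 0 le_rfl) (mem_Ici.mpr hw0) (mem_Ici.mpr hz) hwz
    have h3 : 0 ≤ p w x := hA1.1 w x hw0 hx
    have h4 : 0 ≤ p w 0 := hA1.1 w 0 hw0 le_rfl
    have h5 : 0 ≤ p z x := hA1.1 z x hz hx
    have h6 : 0 ≤ p z 0 := hA1.1 z 0 hz le_rfl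
    simp only [abs_sub_le_iff]
    constructor <;> linarith
  simp only [supDiff]
  calc p y x - p y 0 ≤ |p y x - p y 0| := le_abs_self _
    _ ≤ _ := le_csSup hbdd ⟨y, ⟨hy, hyz⟩, rfl⟩

lemma pu_meas (hA2 : AssumptionA2 F p P1) (hu : Measurable u) :
    Measurable (fun y => p (u y) x) := hA2.1.comp (hu.prodMk measurable_const)

lemma pu_bounds (hF : F (Iio 0) = 0) (hA1 : AssumptionA1 p) (hA2 : AssumptionA2 F p P1)
    (hu : IsRetention u) (hx : 0 ≤ x) :
    ∀ᵐ y ∂F, 0 ≤ p (u y) x ∧ p (u y) x ≤ p y 0 + supDiff p x 0 y := by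
  filter_upwards [F_ae_nonneg hF] with y hy
  obtain ⟨h0, h1⟩ := hu.2 y hy
  refine ⟨hA1.1 _ _ h0 hx, ?_⟩
  have h2 : p (u y) x ≤ p y x := (hA1.2.1 x hx) (mem_Ici.mpr h0) (mem_Ici.mpr hy) h1
  have h3 := supDiff_ge (x := x) hA1 hx hy (le_refl y)
  linarith

lemma pu_integrable (hF : F (Iio 0) = 0) (hA1 : AssumptionA1 p) (hA2 : AssumptionA2 F p P1)
    (hu : IsRetention u) (hx : 0 ≤ x) :
    Integrable (fun y => p (u y) x) F := by
  refine Integrable.mono' ((hA2.2.2.1).add (hA2.2.2.2.2.1 x 0 hx le_rfl)) ((pu_meas hA2 hu.1).aestronglyMeasurable) ?_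
  filter_upwards [pu_bounds hF hA1 hA2 hu hx] with y hy
  rw [Real.norm_eq_abs, abs_of_nonneg hy.1]; exact hy.2

lemma pu_nonneg (hF : F (Iio 0) = 0) (hA1 : AssumptionA1 p)
    (hu : IsRetention u) (hx : 0 ≤ x) : 0 ≤ ∫ y, p (u y) x ∂F := by
  apply integral_nonneg_of_ae
  filter_upwards [F_ae_nonneg hF] with y hy
  exact hA1.1 _ _ (hu.2 y hy).1 hx

lemma pu_le (hF : F (Iio 0) = 0) (hA1 : AssumptionA1 p) (hA2 : AssumptionA2 F p P1)
    (hu : IsRetention u) (hx : 0 ≤ x) :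
    (∫ y, p (u y) x ∂F) ≤ (∫ y, p y 0 ∂F) + P1 * x := by
  have h1 : (∫ y, p (u y) x ∂F) ≤ ∫ y, (p y 0 + supDiff p x 0 y) ∂F := by
    apply integral_mono_ae (pu_integrable hF hA1 hA2 hu hx)
      ((hA2.2.2.1).add (hA2.2.2.2.2.1 x 0 hx le_rfl))
    filter_upwards [pu_bounds hF hA1 hA2 hu hx] with y hy using hy.2
  rw [integral_add hA2.2.2.1 (hA2.2.2.2.2.1 x 0 hx le_rfl)] at h1
  have h2 := hA2.2.2.2.2.2 x 0 hx le_rfl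
  rw [sub_zero, abs_of_nonneg hx] at h2
  linarith


lemma memF_nonlocal_integrable (hF : F (Iio 0) = 0) (hA1 : AssumptionA1 p)
    {φ : ℝ → ℝ} (hφ : memF F p lam q k φ) (hu : IsRetention u) (hx : 0 ≤ x)
    (hlam : 0 < lam) (hq0 : 0 < q) :
    Integrable (fun y => φ (x - u y)) F := by
  obtain ⟨hC1, hpos, hdk, hd1, hgen⟩ := hφ
  have hcont : Continuous φ := hC1.continuous
  have hmeas : Measurable (fun y => φ (x - u y)) :=
    hcont.measurable.comp (measurable_const.sub hu.1)
  -- truncated retentions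
  set v : ℕ → ℝ → ℝ := fun n y => min (u y) n with hv
  have hvret : ∀ n, IsRetention (v n) := by
    intro n
    refine ⟨hu.1.min measurable_const, fun y hy => ?_⟩
    exact ⟨le_min (hu.2 y hy).1 (Nat.cast_nonneg n), (min_le_left _ _).trans (hu.2 y hy).2⟩
  have hint : ∀ n : ℕ, Integrable (fun y => φ (x - v n y)) F := by
    intro n
    obtain ⟨B, hB⟩ := (isCompact_Icc (a := x - n) (b := x)).exists_bound_of_continuousOn
      hcont.continuousOn
    refine Integrable.mono' (integrable_const B)
      ((hcont.measurable.comp (measurable_const.sub (hvret n).1)).aestronglyMeasurable) ?_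
    filter_upwards [F_ae_nonneg hF] with y hy
    refine hB _ ⟨?_, ?_⟩
    · simp only [hv]; have := min_le_right (u y) (n : ℝ); linarith
    · simp only [hv]; have := le_min (hu.2 y hy).1 (Nat.cast_nonneg n); linarith
  have hval : ∀ n : ℕ, (∫ y, φ (x - v n y) ∂F) ≤ (lam + q) * φ x / lam := by
    intro n
    have hg := hgen (v n) (hvret n) x hx
    simp only [gen] at hg
    have h1 : 0 ≤ (∫ y, p (v n y) x ∂F) * deriv φ x := by
      have := hd1 x hx
      have := pu_nonneg hF hA1 (hvret n) hx
      nlinarith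
    rw [le_div_iff₀ hlam]
    nlinarith [hg, h1]
  -- lintegral bound via Fatou
  have hlin : (∫⁻ y, ENNReal.ofReal (φ (x - u y)) ∂F)
      ≤ ENNReal.ofReal ((lam + q) * φ x / lam) := by
    have hpt : ∀ y : ℝ, ENNReal.ofReal (φ (x - u y))
        = liminf (fun n : ℕ => ENNReal.ofReal (φ (x - v n y))) atTop := by
      intro y
      refine (Filter.Tendsto.liminf_eq ?_).symm
      refine tendsto_const_nhds.congr' ?_
      filter_upwards [eventually_ge_atTop (⌈u y⌉₊)] with n hn
      have : u y ≤ (n : ℝ) := le_trans (Nat.le_ceil _) (by exact_mod_cast Nat.cast_le.mpr hn)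
      simp only [hv, min_eq_left this]
    calc (∫⁻ y, ENNReal.ofReal (φ (x - u y)) ∂F)
        = ∫⁻ y, liminf (fun n : ℕ => ENNReal.ofReal (φ (x - v n y))) atTop ∂F := by
          congr 1; funext y; exact hpt y
      _ ≤ liminf (fun n : ℕ => ∫⁻ y, ENNReal.ofReal (φ (x - v n y)) ∂F) atTop := by
          apply lintegral_liminf_le
          intro n
          exact ENNReal.measurable_ofReal.comp
            (hcont.measurable.comp (measurable_const.sub (hvret n).1))
      _ ≤ liminf (fun _ : ℕ => ENNReal.ofReal ((lam + q) * φ x / lam)) atTop := by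
          refine Filter.liminf_le_liminf (Filter.Eventually.of_forall fun n => ?_)
          rw [← MeasureTheory.ofReal_integral_eq_lintegral_ofReal (hint n)
            (Filter.Eventually.of_forall (fun y => hpos _))]
          exact ENNReal.ofReal_le_ofReal (hval n)
      _ = _ := Filter.liminf_const _
  refine ⟨hmeas.aestronglyMeasurable, ?_⟩
  rw [MeasureTheory.hasFiniteIntegral_iff_ofReal
    (Filter.Eventually.of_forall (fun y => hpos _))]
  exact lt_of_le_of_lt hlin ENNReal.ofReal_lt_top


lemma exists_psiStar (hF : F (Iio 0) = 0) (hA1 : AssumptionA1 p) (hA2 : AssumptionA2 F p P1)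
    (hlam : 0 < lam) (hq : P1 < q) (hk : 1 < k) :
    ∃ ψ : ℝ → ℝ, memF F p lam q k ψ ∧ ∃ C : ℝ, ∀ y, ψ y ≤ C + k * |y| := by
  have hq0 : 0 < q := lt_of_le_of_lt hA2.2.2.2.1 hq
  have hk0 : 0 < k := lt_trans one_pos hk
  set c : ℝ := 1 + |Real.log (k - 1)| with hc
  have hc0 : 0 < c := by positivity
  set A : ℝ := k * (∫ y, p y 0 ∂F) / q with hA
  have hp0 : 0 ≤ ∫ y, p y 0 ∂F := by
    apply integral_nonneg_of_ae
    filter_upwards [F_ae_nonneg hF] with y hy using hA1.1 y 0 hy le_rfl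
  have hA0 : 0 ≤ A := by positivity
  set ψ : ℝ → ℝ := fun x => A + k * Real.log (1 + Real.exp (x + c)) with hψ
  have hposE : ∀ t : ℝ, (0:ℝ) < 1 + Real.exp t := fun t => by positivity
  have hder : ∀ x : ℝ, HasDerivAt ψ (k * (Real.exp (x + c) / (1 + Real.exp (x + c)))) x := by
    intro x
    have h1 : HasDerivAt (fun x : ℝ => x + c) 1 x := (hasDerivAt_id x).add_const c
    have h2 : HasDerivAt (fun x : ℝ => Real.exp (x + c)) (Real.exp (x + c)) x := by
      simpa using h1.exp
    have h3 : HasDerivAt (fun x : ℝ => 1 + Real.exp (x + c)) (Real.exp (x + c)) x := by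
      simpa using h2.const_add 1
    have h4 := h3.log (ne_of_gt (hposE (x + c)))
    exact (h4.const_mul k).const_add A
  have hderiv : ∀ x : ℝ, deriv ψ x = k * (Real.exp (x + c) / (1 + Real.exp (x + c))) :=
    fun x => (hder x).deriv
  have hCD : ContDiff ℝ 1 ψ := by
    apply contDiff_const.add
    apply contDiff_const.mul
    exact ((contDiff_const.add ((contDiff_id.add contDiff_const).exp)).log
      (fun x => ne_of_gt (hposE _)))
  have hsig1 : ∀ t : ℝ, Real.exp t / (1 + Real.exp t) ≤ 1 := by
    intro t
    rw [div_le_one (hposE t)]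
    linarith [Real.exp_pos t]
  have hdk : ∀ x : ℝ, deriv ψ x ≤ k := by
    intro x; rw [hderiv x]
    nlinarith [hsig1 (x + c), Real.exp_pos (x+c), hposE (x+c)]
  have hd0 : ∀ x : ℝ, 0 ≤ deriv ψ x := by
    intro x; rw [hderiv x]
    have := Real.exp_pos (x + c)
    have := hposE (x + c)
    positivity
  have hmono : Monotone ψ := monotone_of_deriv_nonneg
    (fun x => (hder x).differentiableAt) hd0
  have hd1 : ∀ x : ℝ, 0 ≤ x → 1 ≤ deriv ψ x := by
    intro x hx
    rw [hderiv x]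
    have he1 : Real.exp (-Real.log (k-1)) ≤ Real.exp (x + c) := by
      apply Real.exp_le_exp.mpr
      have : -Real.log (k-1) ≤ |Real.log (k-1)| := neg_le_abs _
      simp only [hc]; linarith
    rw [Real.exp_neg, Real.exp_log (by linarith : (0:ℝ) < k - 1)] at he1
    have hkinv : (k-1)⁻¹ * (k-1) = 1 := inv_mul_cancel₀ (by linarith)
    have hE := hposE (x + c)
    rw [← mul_div_assoc, le_div_iff₀ hE, one_mul]
    nlinarith [Real.exp_pos (x+c)]
  have hlog_ge : ∀ t : ℝ, t ≤ Real.log (1 + Real.exp t) := by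
    intro t
    calc t = Real.log (Real.exp t) := (Real.log_exp t).symm
      _ ≤ _ := Real.log_le_log (Real.exp_pos t) (by linarith)
  have hψ_ge : ∀ x : ℝ, A + k * x ≤ ψ x := by
    intro x
    have h1 := hlog_ge (x + c)
    simp only [hψ]
    nlinarith
  have hψ_pos : ∀ x : ℝ, 0 ≤ ψ x := by
    intro x
    have : (0:ℝ) ≤ Real.log (1 + Real.exp (x + c)) :=
      Real.log_nonneg (by linarith [Real.exp_pos (x + c)])
    simp only [hψ]
    nlinarith
  refine ⟨ψ, ⟨hCD, hψ_pos, hdk, hd1, ?_⟩, A + k * (Real.log 2 + c), ?_⟩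
  · -- generator condition
    intro u hu x hx
    simp only [gen]
    set P := ∫ y, p (u y) x ∂F with hP
    have hP0 : 0 ≤ P := pu_nonneg hF hA1 hu hx
    have hPle : P ≤ (∫ y, p y 0 ∂F) + P1 * x := pu_le hF hA1 hA2 hu hx
    have hI : (∫ y, ψ (x - u y) ∂F) ≤ ψ x := by
      have := integral_mono_of_nonneg (f := fun y => ψ (x - u y)) (g := fun _ => ψ x)
        (Filter.Eventually.of_forall (fun y => hψ_pos _)) (integrable_const (μ := F) (ψ x)) ?_
      · simpa using this
      · filter_upwards [F_ae_nonneg hF] with y hy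
        exact hmono (by linarith [(hu.2 y hy).1])
    have hup : P * deriv ψ x ≤ ((∫ y, p y 0 ∂F) + P1 * x) * k := by
      have h1 := hdk x
      have h2 := hd0 x
      nlinarith
    have h3 := hψ_ge x
    have h4 : q * A = k * (∫ y, p y 0 ∂F) := by
      rw [hA, mul_div_assoc']; exact mul_div_cancel_left₀ _ hq0.ne'
    have h5 := mul_le_mul_of_nonneg_left hI hlam.le
    have h6 := mul_le_mul_of_nonneg_left h3 hq0.le
    have h7 : 0 ≤ k * x * (q - P1) :=
      mul_nonneg (mul_nonneg hk0.le hx) (sub_nonneg.mpr hq.le)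
    nlinarith [hψ_pos x]
  · -- linear growth
    intro y
    have h1 : Real.log (1 + Real.exp (y + c)) ≤ Real.log 2 + |y + c| := by
      have h2 : 1 + Real.exp (y + c) ≤ 2 * Real.exp |y + c| := by
        have e1 : Real.exp (y + c) ≤ Real.exp |y + c| :=
          Real.exp_le_exp.mpr (le_abs_self _)
        have e2 : (1:ℝ) ≤ Real.exp |y + c| := Real.one_le_exp (abs_nonneg _)
        linarith
      calc Real.log (1 + Real.exp (y + c)) ≤ Real.log (2 * Real.exp |y + c|) :=
            Real.log_le_log (hposE _) h2
        _ = Real.log 2 + |y + c| := by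
            rw [Real.log_mul (by norm_num) (ne_of_gt (Real.exp_pos _)), Real.log_exp]
    have h5 : |y + c| ≤ |y| + c := by
      calc |y + c| ≤ |y| + |c| := abs_add_le _ _
        _ = |y| + c := by rw [abs_of_pos hc0]
    simp only [hψ]
    nlinarith [abs_nonneg y]

lemma softmin_le {ε a b : ℝ} (hε : 0 < ε) :
    -(ε * Real.log (Real.exp (-(a/ε)) + Real.exp (-(b/ε)))) ≤ a := by
  have hE : (0:ℝ) < Real.exp (-(a/ε)) + Real.exp (-(b/ε)) := by positivity
  have h1 : Real.exp (-(a/ε)) ≤ Real.exp (-(a/ε)) + Real.exp (-(b/ε)) :=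
    le_add_of_nonneg_right (Real.exp_pos _).le
  have h2 : -(a/ε) ≤ Real.log (Real.exp (-(a/ε)) + Real.exp (-(b/ε))) :=
    (Real.le_log_iff_exp_le hE).mpr h1
  have h3 := mul_le_mul_of_nonneg_left h2 hε.le
  have h4 : ε * (a/ε) = a := by field_simp
  nlinarith

lemma softmin_ge {ε a b : ℝ} (hε : 0 < ε) :
    min a b - ε ≤ -(ε * Real.log (Real.exp (-(a/ε)) + Real.exp (-(b/ε)))) := by
  have hE : (0:ℝ) < Real.exp (-(a/ε)) + Real.exp (-(b/ε)) := by positivity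
  have h1 : Real.exp (-(a/ε)) ≤ Real.exp (-(min a b/ε)) := by
    apply Real.exp_le_exp.mpr
    apply neg_le_neg
    gcongr
    exact min_le_left a b
  have h2 : Real.exp (-(b/ε)) ≤ Real.exp (-(min a b/ε)) := by
    apply Real.exp_le_exp.mpr
    apply neg_le_neg
    gcongr
    exact min_le_right a b
  have h3 : Real.log (Real.exp (-(a/ε)) + Real.exp (-(b/ε)))
      ≤ Real.log 2 + (-(min a b/ε)) := by
    calc Real.log (Real.exp (-(a/ε)) + Real.exp (-(b/ε)))
        ≤ Real.log (2 * Real.exp (-(min a b/ε))) :=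
          Real.log_le_log hE (by linarith)
      _ = _ := by
          rw [Real.log_mul (by norm_num) (ne_of_gt (Real.exp_pos _)), Real.log_exp]
  have hlog2 : Real.log 2 ≤ 1 := by
    have := Real.log_le_sub_one_of_pos (by norm_num : (0:ℝ) < 2); linarith
  have h4 := mul_le_mul_of_nonneg_left h3 hε.le
  have h5 : ε * (min a b/ε) = min a b := by field_simp
  nlinarith [mul_le_mul_of_nonneg_left hlog2 hε.le]

lemma softmin_cc_aux {ε a b : ℝ} (hε : 0 < ε) (hab : a ≤ b) :
    (Real.exp (-(a/ε)) / (Real.exp (-(a/ε)) + Real.exp (-(b/ε)))) * a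
      + (Real.exp (-(b/ε)) / (Real.exp (-(a/ε)) + Real.exp (-(b/ε)))) * b ≤ a + ε := by
  have hE : (0:ℝ) < Real.exp (-(a/ε)) + Real.exp (-(b/ε)) := by positivity
  set s := (b - a)/ε with hs
  have hs0 : 0 ≤ s := div_nonneg (by linarith) hε.le
  have hsexp : s ≤ Real.exp s := by
    have := Real.add_one_le_exp s; linarith
  have hexp_eq : Real.exp (-(a/ε)) = Real.exp s * Real.exp (-(b/ε)) := by
    rw [← Real.exp_add]
    congr 1
    rw [hs]
    field_simp
    ring
  have he1p := Real.exp_pos (-(a/ε))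
  have he2p := Real.exp_pos (-(b/ε))
  have key : (b - a) * Real.exp (-(b/ε)) ≤ ε * Real.exp (-(a/ε)) := by
    have hbs : b - a = ε * s := by rw [hs]; field_simp
    rw [hbs, hexp_eq]
    nlinarith [mul_nonneg (mul_nonneg hε.le (sub_nonneg.mpr hsexp)) he2p.le]
  rw [div_mul_eq_mul_div, div_mul_eq_mul_div, ← add_div, div_le_iff₀ hE]
  nlinarith [key, mul_nonneg hε.le he2p.le]

lemma softmin_cc {ε a b : ℝ} (hε : 0 < ε) :
    (Real.exp (-(a/ε)) / (Real.exp (-(a/ε)) + Real.exp (-(b/ε)))) * a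
      + (Real.exp (-(b/ε)) / (Real.exp (-(a/ε)) + Real.exp (-(b/ε)))) * b
      ≤ min a b + ε := by
  rcases le_total a b with hab | hab
  · rw [min_eq_left hab]; exact softmin_cc_aux hε hab
  · rw [min_eq_right hab]
    have := softmin_cc_aux hε hab
    rw [add_comm (Real.exp (-(b/ε))) (Real.exp (-(a/ε)))] at this
    linarith

lemma exists_softmin (hF : F (Iio 0) = 0) (hA1 : AssumptionA1 p)
    (hlam : 0 < lam) (hq0 : 0 < q)
    {φ1 φ2 : ℝ → ℝ} (hm1 : memF F p lam q k φ1) (hm2 : memF F p lam q k φ2)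
    {δ : ℝ} (hδ : 0 < δ) :
    ∃ ψ : ℝ → ℝ, memF F p lam q k ψ ∧ ∀ z, ψ z ≤ min (φ1 z) (φ2 z) + δ := by
  have hlq : 0 < lam + q := by linarith
  set ε := δ * q / (2 * (lam + q)) with hε
  have hε0 : 0 < ε := by positivity
  have hqδ : q * δ = 2 * (lam + q) * ε := by rw [hε]; field_simp
  have h2ε : 2 * ε ≤ δ := by nlinarith
  set e1 : ℝ → ℝ := fun z => Real.exp (-(φ1 z / ε)) with he1
  set e2 : ℝ → ℝ := fun z => Real.exp (-(φ2 z / ε)) with he2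
  set E : ℝ → ℝ := fun z => e1 z + e2 z with hE
  have hEpos : ∀ z, 0 < E z := fun z => by
    simp only [hE, he1, he2]; positivity
  set ψ : ℝ → ℝ := fun z => -(ε * Real.log (E z)) + δ with hψ
  obtain ⟨hcd1, hpos1, hdk1, hd11, hgen1⟩ := hm1
  obtain ⟨hcd2, hpos2, hdk2, hd12, hgen2⟩ := hm2
  have hdiff1 : Differentiable ℝ φ1 := hcd1.differentiable one_ne_zero
  have hdiff2 : Differentiable ℝ φ2 := hcd2.differentiable one_ne_zero
  -- derivative of ψ
  set D : ℝ → ℝ := fun z => (e1 z * deriv φ1 z + e2 z * deriv φ2 z) / E z with hD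
  have hE' : ∀ z, HasDerivAt E
      (e1 z * (-(deriv φ1 z / ε)) + e2 z * (-(deriv φ2 z / ε))) z := by
    intro z
    exact (((hdiff1 z).hasDerivAt.div_const ε).neg.exp).add
      (((hdiff2 z).hasDerivAt.div_const ε).neg.exp)
  have hψder : ∀ z, HasDerivAt ψ (D z) z := by
    intro z
    have h : HasDerivAt ψ _ z := ((((hE' z).log (ne_of_gt (hEpos z))).const_mul ε).neg).add_const δ
    convert h using 1
    simp only [hD]
    field_simp [ne_of_gt (hEpos z)]
    ring
  have hψderiv : ∀ z, deriv ψ z = D z := fun z => (hψder z).deriv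
  -- pointwise comparisons
  have hmle1 : ∀ z, ψ z ≤ φ1 z + δ := by
    intro z
    have := softmin_le (a := φ1 z) (b := φ2 z) hε0
    simp only [hψ, hE, he1, he2]; linarith
  have hmle2 : ∀ z, ψ z ≤ φ2 z + δ := by
    intro z
    have := softmin_le (a := φ2 z) (b := φ1 z) hε0
    rw [add_comm (Real.exp (-(φ2 z / ε)))] at this
    simp only [hψ, hE, he1, he2]; linarith
  have hmge : ∀ z, min (φ1 z) (φ2 z) - ε ≤ ψ z - δ := by
    intro z
    have := softmin_ge (a := φ1 z) (b := φ2 z) hε0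
    simp only [hψ, hE, he1, he2]; linarith
  have hψ0 : ∀ z, 0 ≤ ψ z := by
    intro z
    have h1 := hmge z
    have h2 : 0 ≤ min (φ1 z) (φ2 z) := le_min (hpos1 z) (hpos2 z)
    linarith
  -- derivative bounds
  have hdkψ : ∀ z, deriv ψ z ≤ k := by
    intro z
    rw [hψderiv z, hD]
    rw [div_le_iff₀ (hEpos z)]
    have a1 : (0:ℝ) < e1 z := Real.exp_pos _
    have a2 : (0:ℝ) < e2 z := Real.exp_pos _
    simp only [hE]
    nlinarith [mul_nonneg a1.le (sub_nonneg.mpr (hdk1 z)),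
      mul_nonneg a2.le (sub_nonneg.mpr (hdk2 z))]
  have hd1ψ : ∀ z, 0 ≤ z → 1 ≤ deriv ψ z := by
    intro z hz
    rw [hψderiv z, hD]
    rw [le_div_iff₀ (hEpos z)]
    have a1 : (0:ℝ) < e1 z := Real.exp_pos _
    have a2 : (0:ℝ) < e2 z := Real.exp_pos _
    simp only [hE]
    nlinarith [mul_nonneg a1.le (sub_nonneg.mpr (hd11 z hz)),
      mul_nonneg a2.le (sub_nonneg.mpr (hd12 z hz))]
  -- smoothness
  have hcdψ : ContDiff ℝ 1 ψ := by
    have hcdE : ContDiff ℝ 1 E := (((hcd1.div_const ε).neg).exp).add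
      (((hcd2.div_const ε).neg).exp)
    exact ((contDiff_const.mul (hcdE.log (fun z => ne_of_gt (hEpos z)))).neg).add
      contDiff_const
  refine ⟨ψ, ⟨hcdψ, hψ0, hdkψ, hd1ψ, ?_⟩, fun z => by
    have h1 := hmle1 z; have h2 := hmle2 z
    rcases le_total (φ1 z) (φ2 z) with h | h
    · rw [min_eq_left h]; linarith
    · rw [min_eq_right h]; linarith⟩
  -- generator condition
  intro u hu x hx
  simp only [gen]
  set P := ∫ y, p (u y) x ∂F with hP
  set t1 := e1 x / E x with ht1
  set t2 := e2 x / E x with ht2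
  have hsum : t1 + t2 = 1 := by
    rw [ht1, ht2, ← add_div, div_self (ne_of_gt (hEpos x))]
  have ht10 : 0 ≤ t1 := div_nonneg (Real.exp_pos _).le (hEpos x).le
  have ht20 : 0 ≤ t2 := div_nonneg (Real.exp_pos _).le (hEpos x).le
  have hDx : deriv ψ x = t1 * deriv φ1 x + t2 * deriv φ2 x := by
    rw [hψderiv x, hD, ht1, ht2]
    field_simp
  have hi1 : Integrable (fun y => φ1 (x - u y)) F :=
    memF_nonlocal_integrable hF hA1 ⟨hcd1, hpos1, hdk1, hd11, hgen1⟩ hu hx hlam hq0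
  have hi2 : Integrable (fun y => φ2 (x - u y)) F :=
    memF_nonlocal_integrable hF hA1 ⟨hcd2, hpos2, hdk2, hd12, hgen2⟩ hu hx hlam hq0
  have hIψ : (∫ y, ψ (x - u y) ∂F)
      ≤ t1 * (∫ y, φ1 (x - u y) ∂F) + t2 * (∫ y, φ2 (x - u y) ∂F) + δ := by
    have hptw : ∀ y : ℝ, ψ (x - u y) ≤ t1 * φ1 (x - u y) + t2 * φ2 (x - u y) + δ := by
      intro y
      have b1 := mul_le_mul_of_nonneg_left (hmle1 (x - u y)) ht10
      have b2 := mul_le_mul_of_nonneg_left (hmle2 (x - u y)) ht20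
      have hw : ψ (x - u y) = t1 * ψ (x - u y) + t2 * ψ (x - u y) := by
        rw [← add_mul, hsum, one_mul]
      have hd2 : t1 * δ + t2 * δ = δ := by rw [← add_mul, hsum, one_mul]
      nlinarith [b1, b2, hw, hd2]
    have h := integral_mono_of_nonneg (μ := F)
      (f := fun y => ψ (x - u y))
      (g := fun y => t1 * φ1 (x - u y) + t2 * φ2 (x - u y) + δ)
      (Filter.Eventually.of_forall (fun y => hψ0 _))
      (((hi1.const_mul t1).add (hi2.const_mul t2)).add (integrable_const δ))
      (Filter.Eventually.of_forall hptw)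
    have hint12 : Integrable (fun y => t1 * φ1 (x - u y) + t2 * φ2 (x - u y)) F :=
      (hi1.const_mul t1).add (hi2.const_mul t2)
    rwa [integral_add hint12 (integrable_const δ),
      integral_add (hi1.const_mul t1) (hi2.const_mul t2),
      integral_const_mul, integral_const_mul, integral_const, probReal_univ,
      one_smul] at h
  have hψx : t1 * φ1 x + t2 * φ2 x + δ - 2*ε ≤ ψ x := by
    have hc := softmin_cc (a := φ1 x) (b := φ2 x) hε0
    have hg := hmge x
    have : t1 * φ1 x + t2 * φ2 x ≤ min (φ1 x) (φ2 x) + ε := by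
      simp only [ht1, ht2, hE, he1, he2]
      exact hc
    linarith
  have hg1 := hgen1 u hu x hx
  have hg2 := hgen2 u hu x hx
  simp only [gen, ← hP] at hg1 hg2
  have hG1 := mul_le_mul_of_nonneg_left hg1 ht10
  have hG2 := mul_le_mul_of_nonneg_left hg2 ht20
  have hIψ' := mul_le_mul_of_nonneg_left hIψ hlam.le
  have hψx' := mul_le_mul_of_nonneg_left hψx hlq.le
  rw [hDx]
  nlinarith [hG1, hG2, hIψ', hψx', hqδ, hsum]

lemma density_claim (hk0 : 0 < k)
    (Φ : ℚ × ℕ → ℝ → ℝ)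
    (hΦmem : ∀ j, memF F p lam q k (Φ j))
    (hΦval : ∀ j : ℚ × ℕ, ENNReal.ofReal (Φ j (j.1 : ℝ))
      ≤ LambdaStar F p lam q k (j.1 : ℝ) + ENNReal.ofReal (1/(j.2+1)))
    (hLfin : ∀ x, LambdaStar F p lam q k x ≠ ⊤) (y : ℝ) :
    (⨅ j : ℚ × ℕ, ENNReal.ofReal (Φ j y)) ≤ LambdaStar F p lam q k y := by
  set L := LambdaStar F p lam q k with hLdef
  refine ENNReal.le_of_forall_pos_le_add fun ν hν _ => ?_
  have hδ : (0:ℝ) < (ν:ℝ) := hν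
  set δ : ℝ := (ν:ℝ) with hδdef
  set l : ℝ := (L y).toReal with hl
  have hl0 : 0 ≤ l := ENNReal.toReal_nonneg
  have hlL : ENNReal.ofReal l = L y := ENNReal.ofReal_toReal (hLfin y)
  -- a near optimizer at y
  have h1 : L y < L y + ENNReal.ofReal (δ/4) :=
    ENNReal.lt_add_right (hLfin y)
      (ne_of_gt (ENNReal.ofReal_pos.mpr (by positivity)))
  have h2 : (⨅ (φ : ℝ → ℝ) (_ : memF F p lam q k φ), ENNReal.ofReal (φ y))
      < L y + ENNReal.ofReal (δ/4) := h1
  obtain ⟨φ0, hφ0⟩ := iInf_lt_iff.mp h2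
  obtain ⟨hφ0mem, hφ0lt⟩ := iInf_lt_iff.mp hφ0
  have hφ0y : φ0 y ≤ l + δ/4 := by
    by_contra hcon
    push_neg at hcon
    have : ENNReal.ofReal (l + δ/4) ≤ ENNReal.ofReal (φ0 y) :=
      ENNReal.ofReal_le_ofReal hcon.le
    rw [ENNReal.ofReal_add hl0 (by positivity), hlL] at this
    exact absurd (lt_of_le_of_lt this hφ0lt) (lt_irrefl _)
  -- continuity of φ0 at y
  have hcont : ContinuousAt φ0 y := (hφ0mem.1.continuous).continuousAt
  obtain ⟨ρ, hρ0, hρ⟩ := Metric.continuousAt_iff.mp hcont (δ/4) (by positivity)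
  set η : ℝ := min ρ (δ/(4*k)) with hη
  have hη0 : 0 < η := lt_min hρ0 (by positivity)
  obtain ⟨d, hd1, hd2⟩ := exists_rat_btwn (sub_lt_self y hη0)
  have hdy : |(d:ℝ) - y| < ρ := by
    rw [abs_sub_comm, abs_of_pos (by linarith)]
    have := min_le_left ρ (δ/(4*k))
    linarith
  have hφ0d : φ0 (d:ℝ) ≤ l + δ/2 := by
    have := hρ hdy
    rw [Real.dist_eq] at this
    have h := abs_lt.mp this
    linarith [h.1, h.2]
  have hLd : L (d:ℝ) ≤ ENNReal.ofReal (l + δ/2) :=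
    le_trans (iInf₂_le φ0 hφ0mem) (ENNReal.ofReal_le_ofReal hφ0d)
  obtain ⟨m, hm⟩ := exists_nat_one_div_lt (show (0:ℝ) < δ/4 by positivity)
  set j : ℚ × ℕ := (d, m) with hj
  have hval := hΦval j
  have hΦjd : Φ j (d:ℝ) ≤ l + 3*δ/4 := by
    have hcomb : ENNReal.ofReal (Φ j (d:ℝ)) ≤ ENNReal.ofReal (l + 3*δ/4) := by
      calc ENNReal.ofReal (Φ j (d:ℝ)) ≤ L (d:ℝ) + ENNReal.ofReal (1/(m+1)) := hval
        _ ≤ ENNReal.ofReal (l + δ/2) + ENNReal.ofReal (δ/4) :=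
            add_le_add hLd (ENNReal.ofReal_le_ofReal (by push_cast; linarith))
        _ = ENNReal.ofReal (l + 3*δ/4) := by
            rw [← ENNReal.ofReal_add (by positivity) (by positivity)]
            ring_nf
    rwa [ENNReal.ofReal_le_ofReal_iff (by positivity)] at hcomb
  have hΦjy : Φ j y ≤ l + δ := by
    have hlip := lip_upper (hΦmem j).1 (hΦmem j).2.2.1 (d := (d:ℝ)) (y := y) hd2.le
    have hkη : k * (y - (d:ℝ)) ≤ δ/4 := by
      have h1 : y - (d:ℝ) ≤ η := by linarith
      have h2 : η ≤ δ/(4*k) := min_le_right _ _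
      have h3 : k * (y - (d:ℝ)) ≤ k * (δ/(4*k)) :=
        mul_le_mul_of_nonneg_left (le_trans h1 h2) hk0.le
      have h4 : k * (δ/(4*k)) = δ/4 := by field_simp
      linarith
    linarith
  calc (⨅ j : ℚ × ℕ, ENNReal.ofReal (Φ j y)) ≤ ENNReal.ofReal (Φ j y) := iInf_le _ j
    _ ≤ ENNReal.ofReal (l + δ) := ENNReal.ofReal_le_ofReal hΦjy
    _ = L y + ↑ν := by
        rw [ENNReal.ofReal_add hl0 hδ.le, hlL, hδdef, ENNReal.ofReal_coe_nnreal]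
end InfX

/-- Lemma 5.2.  For every probability measure `γ₀` on `[0,∞) × ℝ` with
integrable second marginal, `∫ e^{−q s₁} Λ*(y₁) dγ₀ = inf_{φ ∈ 𝐅} ∫ e^{−q s₁} φ(y₁) dγ₀`. -/
theorem inf_exchange_dual
    (F : Measure ℝ) [IsProbabilityMeasure F] (hF : F (Iio 0) = 0)
    (hmean : Integrable (fun y : ℝ => y) F)
    (p : ℝ → ℝ → ℝ) (P1 : ℝ) (hA1 : AssumptionA1 p) (hA2 : AssumptionA2 F p P1)
    (lam q k : ℝ) (hlam : 0 < lam) (hq : P1 < q) (hk : 1 < k)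
    (γ0 : Measure (ℝ × ℝ)) [IsProbabilityMeasure γ0]
    (hγ0s : ∀ᵐ z ∂γ0, 0 ≤ z.1)
    (hy1 : Integrable (fun z : ℝ × ℝ => z.2) γ0) :
    (∫⁻ z, ENNReal.ofReal (Real.exp (-q * z.1)) * LambdaStar F p lam q k z.2 ∂γ0)
      = ⨅ (φ : ℝ → ℝ) (_ : memF F p lam q k φ),
          ∫⁻ z, ENNReal.ofReal (Real.exp (-q * z.1) * φ z.2) ∂γ0 := by
  classical
  have hP1 : 0 ≤ P1 := hA2.2.2.2.1
  have hq0 : 0 < q := lt_of_le_of_lt hP1 hq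
  have hk0 : 0 < k := lt_trans one_pos hk
  obtain ⟨ψs, hψs, C, hψsC⟩ := InfX.exists_psiStar hF hA1 hA2 hlam hq hk
  have hψs0 : ∀ z, 0 ≤ ψs z := hψs.2.1
  have hLle : ∀ x, LambdaStar F p lam q k x ≤ ENNReal.ofReal (ψs x) :=
    fun x => iInf₂_le ψs hψs
  have hLfin : ∀ x, LambdaStar F p lam q k x ≠ ⊤ :=
    fun x => (lt_of_le_of_lt (hLle x) ENNReal.ofReal_lt_top).ne
  have hwle : ∀ᵐ z ∂γ0, Real.exp (-q * z.1) ≤ 1 := by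
    filter_upwards [hγ0s] with z hz
    rw [← Real.exp_zero]
    apply Real.exp_le_exp.mpr; nlinarith
  have hw0 : ∀ z : ℝ × ℝ, 0 ≤ Real.exp (-q * z.1) := fun z => (Real.exp_pos _).le
  apply le_antisymm
  · refine le_iInf fun φ => le_iInf fun hφ => ?_
    refine lintegral_mono fun z => ?_
    rw [ENNReal.ofReal_mul (hw0 z)]
    exact mul_le_mul_right (iInf₂_le φ hφ) _
  · -- near-optimal choices at rational points
    have hchoice : ∀ j : ℚ × ℕ, ∃ φ : ℝ → ℝ, memF F p lam q k φ ∧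
        ENNReal.ofReal (φ (j.1 : ℝ))
          ≤ LambdaStar F p lam q k (j.1:ℝ) + ENNReal.ofReal (1/(j.2+1)) := by
      intro j
      have h1 : LambdaStar F p lam q k (j.1:ℝ)
          < LambdaStar F p lam q k (j.1:ℝ) + ENNReal.ofReal (1/(j.2+1)) :=
        ENNReal.lt_add_right (hLfin _)
          (ne_of_gt (ENNReal.ofReal_pos.mpr (by positivity)))
      obtain ⟨φ, hφ⟩ := iInf_lt_iff.mp h1
      obtain ⟨hmem, hlt⟩ := iInf_lt_iff.mp hφ
      exact ⟨φ, hmem, hlt.le⟩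
    choose Φ hΦmem hΦval using hchoice
    set e : ℚ × ℕ ≃ ℕ := Denumerable.eqv (ℚ × ℕ) with he
    set g : ℕ → ℝ → ℝ :=
      fun n => Nat.rec ψs (fun m gm => fun z => min (gm z) (Φ (e.symm m) z)) n with hg
    have hg0 : g 0 = ψs := rfl
    have hgsucc : ∀ n, g (n+1) = fun z => min (g n z) (Φ (e.symm n) z) := fun n => rfl
    have hgcont : ∀ n, Continuous (g n) := by
      intro n; induction n with
      | zero => exact hψs.1.continuous
      | succ m ih => rw [hgsucc]; exact ih.min (hΦmem (e.symm m)).1.continuous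
    have hgnonneg : ∀ n z, 0 ≤ g n z := by
      intro n; induction n with
      | zero => exact hψs0
      | succ m ih =>
          intro z; rw [hgsucc]
          exact le_min (ih z) ((hΦmem (e.symm m)).2.1 z)
    have hganti : ∀ n z, g (n+1) z ≤ g n z := fun n z => by
      rw [hgsucc]; exact min_le_left _ _
    have hgle : ∀ j : ℚ × ℕ, ∀ z, g (e j + 1) z ≤ Φ j z := by
      intro j z
      rw [hgsucc]
      simp only [Equiv.symm_apply_apply]
      exact min_le_right _ _
    set f : ℕ → ℝ × ℝ → ℝ≥0∞ :=
      fun n z => ENNReal.ofReal (Real.exp (-q * z.1) * g n z.2) with hf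
    have hfmeas : ∀ n, Measurable (f n) := by
      intro n
      apply ENNReal.measurable_ofReal.comp
      exact ((Real.continuous_exp.comp (continuous_const.mul continuous_fst)).mul
        ((hgcont n).comp continuous_snd)).measurable
    have hfanti : Antitone f := by
      apply antitone_nat_of_succ_le
      intro n z
      exact ENNReal.ofReal_le_ofReal
        (mul_le_mul_of_nonneg_left (hganti n z.2) (hw0 z))
    have hbound : Integrable (fun z : ℝ × ℝ => C + k * |z.2|) γ0 :=
      (integrable_const C).add ((hy1.abs).const_mul k)
    have hf0 : ∫⁻ z, f 0 z ∂γ0 ≠ ⊤ := by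
      have hle : ∀ᵐ z ∂γ0, f 0 z ≤ ENNReal.ofReal (C + k * |z.2|) := by
        filter_upwards [hwle] with z hz
        apply ENNReal.ofReal_le_ofReal
        have h1 : Real.exp (-q * z.1) * ψs z.2 ≤ ψs z.2 := by
          nlinarith [hψs0 z.2, hw0 z]
        exact le_trans h1 (hψsC z.2)
      exact (lt_of_le_of_lt (lintegral_mono_ae hle) hbound.lintegral_lt_top).ne
    have hmc : (∫⁻ z, ⨅ n, f n z ∂γ0) = ⨅ n, ∫⁻ z, f n z ∂γ0 :=
      lintegral_iInf hfmeas hfanti hf0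
    have hptlim : ∀ z : ℝ × ℝ, (⨅ n, f n z)
        ≤ ENNReal.ofReal (Real.exp (-q * z.1)) * LambdaStar F p lam q k z.2 := by
      intro z
      have h1 : (⨅ n, f n z)
          = ENNReal.ofReal (Real.exp (-q * z.1)) * ⨅ n, ENNReal.ofReal (g n z.2) := by
        simp only [hf]
        rw [ENNReal.mul_iInf (fun h => absurd h ENNReal.ofReal_ne_top)]
        congr 1
        funext n
        rw [ENNReal.ofReal_mul (hw0 z)]
      rw [h1]
      apply mul_le_mul_right
      have h2 : (⨅ n, ENNReal.ofReal (g n z.2)) ≤ ⨅ j : ℚ × ℕ, ENNReal.ofReal (Φ j z.2) :=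
        le_iInf fun j => le_trans (iInf_le _ (e j + 1))
          (ENNReal.ofReal_le_ofReal (hgle j z.2))
      exact le_trans h2 (InfX.density_claim hk0 Φ hΦmem hΦval hLfin z.2)
    refine ENNReal.le_of_forall_pos_le_add fun ν hν _ => ?_
    set ε' : ℝ := (ν:ℝ) with hε'
    have hε'0 : 0 < ε' := hν
    have hrec : ∀ n : ℕ, ∃ Ψ : ℝ → ℝ, memF F p lam q k Ψ ∧
        ∀ z, Ψ z ≤ g n z + ε' * (1 - (1/2:ℝ)^n) := by
      intro n
      induction n with
      | zero => exact ⟨ψs, hψs, fun z => by simp [hg0]⟩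
      | succ m ih =>
        obtain ⟨Ψ, hΨmem, hΨle⟩ := ih
        obtain ⟨Ψ', hΨ'mem, hΨ'le⟩ := InfX.exists_softmin hF hA1 hlam hq0
          hΨmem (hΦmem (e.symm m)) (δ := ε' * (1/2:ℝ)^(m+1)) (by positivity)
        refine ⟨Ψ', hΨ'mem, fun z => ?_⟩
        have h1 := hΨ'le z
        have h2 := hΨle z
        have ha : 0 ≤ ε' * (1 - (1/2:ℝ)^m) := by
          have : ((1:ℝ)/2)^m ≤ 1 := pow_le_one₀ (by norm_num) (by norm_num)
          nlinarith
        have h3 : min (Ψ z) (Φ (e.symm m) z)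
            ≤ min (g m z) (Φ (e.symm m) z) + ε' * (1 - (1/2:ℝ)^m) := by
          rcases le_total (g m z) (Φ (e.symm m) z) with hc | hc
          · rw [min_eq_left hc]
            calc min (Ψ z) (Φ (e.symm m) z) ≤ Ψ z := min_le_left _ _
              _ ≤ _ := h2
          · rw [min_eq_right hc]
            calc min (Ψ z) (Φ (e.symm m) z) ≤ Φ (e.symm m) z := min_le_right _ _
              _ ≤ _ := by linarith
        rw [hgsucc]
        simp only
        calc Ψ' z ≤ min (Ψ z) (Φ (e.symm m) z) + ε' * (1/2:ℝ)^(m+1) := h1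
          _ ≤ min (g m z) (Φ (e.symm m) z) + ε' * (1 - (1/2:ℝ)^m) + ε' * (1/2:ℝ)^(m+1) := by
              linarith
          _ = min (g m z) (Φ (e.symm m) z) + ε' * (1 - (1/2:ℝ)^(m+1)) := by ring
    have hstep : ∀ n : ℕ, (⨅ (φ : ℝ → ℝ) (_ : memF F p lam q k φ),
        ∫⁻ z, ENNReal.ofReal (Real.exp (-q * z.1) * φ z.2) ∂γ0)
        ≤ (∫⁻ z, f n z ∂γ0) + ENNReal.ofReal ε' := by
      intro n
      obtain ⟨Ψ, hΨmem, hΨle⟩ := hrec n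
      refine le_trans (iInf₂_le Ψ hΨmem) ?_
      have h2 : ∀ᵐ z ∂γ0, ENNReal.ofReal (Real.exp (-q * z.1) * Ψ z.2)
          ≤ f n z + ENNReal.ofReal ε' := by
        filter_upwards [hwle] with z hz
        have hb : Ψ z.2 ≤ g n z.2 + ε' := by
          have h4 := hΨle z.2
          have hp : ε' * (1 - (1/2:ℝ)^n) ≤ ε' := by
            have : (0:ℝ) ≤ ((1:ℝ)/2)^n := by positivity
            nlinarith
          linarith
        calc ENNReal.ofReal (Real.exp (-q * z.1) * Ψ z.2)
            ≤ ENNReal.ofReal (Real.exp (-q * z.1) * g n z.2 + Real.exp (-q * z.1) * ε') := by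
              apply ENNReal.ofReal_le_ofReal
              nlinarith [hw0 z]
          _ ≤ ENNReal.ofReal (Real.exp (-q * z.1) * g n z.2)
              + ENNReal.ofReal (Real.exp (-q * z.1) * ε') := ENNReal.ofReal_add_le
          _ ≤ f n z + ENNReal.ofReal ε' := by
              apply add_le_add_right
              apply ENNReal.ofReal_le_ofReal
              nlinarith [hw0 z]
      calc (∫⁻ z, ENNReal.ofReal (Real.exp (-q * z.1) * Ψ z.2) ∂γ0)
          ≤ ∫⁻ z, f n z + ENNReal.ofReal ε' ∂γ0 := lintegral_mono_ae h2
        _ = (∫⁻ z, f n z ∂γ0) + ENNReal.ofReal ε' := by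
            rw [lintegral_add_right _ measurable_const, lintegral_const, measure_univ,
              mul_one]
    have h1 : (⨅ (φ : ℝ → ℝ) (_ : memF F p lam q k φ),
        ∫⁻ z, ENNReal.ofReal (Real.exp (-q * z.1) * φ z.2) ∂γ0)
        ≤ (⨅ n, ∫⁻ z, f n z ∂γ0) + ENNReal.ofReal ε' := by
      rw [ENNReal.iInf_add]
      exact le_iInf fun n => hstep n
    refine le_trans h1 ?_
    rw [← hmc, hε', ENNReal.ofReal_coe_nnreal]
    exact add_le_add_left (lintegral_mono hptlim) _
end
end
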